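/- arXiv:1605.06801 — 6 statements merged into one kernel-verified Lean document; each statement's English description precedes it below -/
import Mathlib

section
/- Let G be a finite bipartite simple graph with parts V_L and V_R. Form G' from G by adding four new vertices v, b_L, u, r_R with edges: v adjacent to every vertex of V_L, v–b_L; u adjacent to every vertex of V_R, u–r_R. Let the starting position c_0 have a blue piece on b_L and a red piece on r_R. Then the distance game D⟨{1,2},{1}⟩ on G' starting from c_0 is play-for-play equivalent to BiGraph-Node-Kayles on G starting from the empty position: positions correspond by restricting the pieces to V_L ∪ V_R, under this correspondence each player's legal moves agree; in particular, for each player, that player has a winning strategy moving first (respectively, second) in D⟨{1,2},{1}⟩ on (G', c_0) if and only if that player has a winning strategy moving first (respectively, second) in BiGraph-Node-Kayles on G. -/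
universe u

namespace SetTheory

/-- Pre-games, as formerly defined in Mathlib's `SetTheory.PGame` (since removed). -/
inductive PGame : Type (u + 1)
  | mk : ∀ α β : Type u, (α → PGame) → (β → PGame) → PGame

namespace PGame

/-- The type of left moves. -/
def LeftMoves : PGame → Type u
  | mk l _ _ _ => l

/-- The type of right moves. -/
def RightMoves : PGame → Type u
  | mk _ r _ _ => r

/-- The left options. -/
def moveLeft : ∀ g : PGame, LeftMoves g → PGame
  | mk _l _ L _ => L

/-- The right options. -/
def moveRight : ∀ g : PGame, RightMoves g → PGame
  | mk _ _r _ R => R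

/-- The pre-game `0 = {|}`. -/
instance : Zero PGame :=
  ⟨⟨PEmpty, PEmpty, PEmpty.elim, PEmpty.elim⟩⟩

/-- Auxiliary: the pair `(x ≤ y, y ≤ x)`, by nested structural recursion. -/
noncomputable def leAux : PGame.{u} → PGame.{u} → Prop × Prop :=
  fun x => PGame.rec (motive := fun _ => PGame.{u} → Prop × Prop)
    (fun _xl _xr _xL _xR IHL IHR => fun y =>
      PGame.rec (motive := fun _ => Prop × Prop)
        (fun yl yr yL yR JL JR =>
          ((∀ i, ¬(IHL i (mk yl yr yL yR)).2) ∧ (∀ j, ¬(JR j).2),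
           (∀ i, ¬(JL i).1) ∧ (∀ j, ¬(IHR j (mk yl yr yL yR)).1))) y) x

/-- `x ≤ y` iff `∀ i, ¬ y ≤ x.moveLeft i` and `∀ j, ¬ y.moveRight j ≤ x`. -/
noncomputable instance le : LE PGame.{u} :=
  ⟨fun x y => (leAux x y).1⟩

/-- The less or fuzzy relation. -/
def LF (x y : PGame.{u}) : Prop :=
  ¬y ≤ x

infixl:50 " ⧏ " => PGame.LF

/-- Relabellings. -/
inductive Relabelling : PGame.{u} → PGame.{u} → Type (u + 1)
  | mk :
    ∀ {x y : PGame} (L : x.LeftMoves ≃ y.LeftMoves) (R : x.RightMoves ≃ y.RightMoves),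
      (∀ i, Relabelling (x.moveLeft i) (y.moveLeft (L i))) →
        (∀ j, Relabelling (x.moveRight j) (y.moveRight (R j))) → Relabelling x y

infixl:50 " ≡r " => PGame.Relabelling

end PGame

end SetTheory

open SimpleGraph SetTheory

/-- In the distance game `D⟨D,S⟩` on the graph `G`, from the position with blue pieces on
`blue` and red pieces on `red`, Left may legally place a blue piece on the vertex `v`. -/
def LeftMove {W : Type*} (G : SimpleGraph W) (D S : Set ℕ) (blue red : Finset W) (v : W) : Prop :=
  v ∉ blue ∧ v ∉ red ∧ (∀ r ∈ red, ∀ d ∈ D, G.edist v r ≠ (d : ℕ∞)) ∧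
    ∀ b ∈ blue, ∀ s ∈ S, G.edist v b ≠ (s : ℕ∞)

/-- Right may legally place a red piece on the vertex `v`. -/
def RightMove {W : Type*} (G : SimpleGraph W) (D S : Set ℕ) (blue red : Finset W) (v : W) : Prop :=
  v ∉ blue ∧ v ∉ red ∧ (∀ b ∈ blue, ∀ d ∈ D, G.edist v b ≠ (d : ℕ∞)) ∧
    ∀ r ∈ red, ∀ s ∈ S, G.edist v r ≠ (s : ℕ∞)

/-- The distance game `D⟨D,S⟩` on `G` from the position `(blue, red)`, as a combinatorial
game (normal play: a player with no legal move loses). -/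
def distGame {W : Type*} [Fintype W] [DecidableEq W] (G : SimpleGraph W) (D S : Set ℕ)
    (blue red : Finset W) : PGame :=
  PGame.mk {v // LeftMove G D S blue red v} {v // RightMove G D S blue red v}
    (fun x => distGame G D S (insert x.1 blue) red)
    (fun x => distGame G D S blue (insert x.1 red))
termination_by ((blue ∪ red)ᶜ).card
decreasing_by
  · obtain ⟨h1, h2, -, -⟩ := x.2
    calc ((insert x.1 blue ∪ red)ᶜ).card
        = (((blue ∪ red)ᶜ).erase x.1).card := by
          rw [Finset.insert_union, Finset.compl_insert]
      _ < ((blue ∪ red)ᶜ).card :=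
          Finset.card_erase_lt_of_mem (Finset.mem_compl.2 (by simp [h1, h2]))
  · obtain ⟨h1, h2, -, -⟩ := x.2
    calc ((blue ∪ insert x.1 red)ᶜ).card
        = (((blue ∪ red)ᶜ).erase x.1).card := by
          rw [Finset.union_insert, Finset.compl_insert]
      _ < ((blue ∪ red)ᶜ).card :=
          Finset.card_erase_lt_of_mem (Finset.mem_compl.2 (by simp [h1, h2]))

/-- `BiGraph-Node-Kayles` on a bipartite graph `G` with parts `VL`, `VR`, from the position
where `occ` is the set of occupied vertices: players alternately occupy vertices that are
neither equal nor adjacent to a previously occupied vertex, Left occupying only vertices of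
`VL` and Right only vertices of `VR`; a player with no legal move loses. -/
def bnkGame {V : Type*} [Fintype V] [DecidableEq V] (G : SimpleGraph V) (VL VR : Finset V)
    (occ : Finset V) : PGame :=
  PGame.mk {v // v ∈ VL ∧ v ∉ occ ∧ ∀ u ∈ occ, ¬G.Adj v u}
    {v // v ∈ VR ∧ v ∉ occ ∧ ∀ u ∈ occ, ¬G.Adj v u}
    (fun x => bnkGame G VL VR (insert x.1 occ))
    (fun x => bnkGame G VL VR (insert x.1 occ))
termination_by occᶜ.card
decreasing_by
  all_goals
  · obtain ⟨-, h1, -⟩ := x.2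
    calc ((insert x.1 occ)ᶜ).card = (occᶜ.erase x.1).card := by rw [Finset.compl_insert]
      _ < occᶜ.card := Finset.card_erase_lt_of_mem (Finset.mem_compl.2 h1)

/-- The graph `G'` obtained from the bipartite graph `G` (with parts `VL` and `VR`) by adding
four new vertices `v = inr 0`, `bL = inr 1`, `u = inr 2`, `rR = inr 3`, and edges: `v`
adjacent to every vertex of `VL`, `v–bL`; `u` adjacent to every vertex of `VR`, `u–rR`. -/
def gadgetGraph4 {V : Type*} (G : SimpleGraph V) (VL VR : Finset V) :
    SimpleGraph (V ⊕ Fin 4) :=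
  SimpleGraph.fromRel (fun a b =>
    (∃ x y, G.Adj x y ∧ a = Sum.inl x ∧ b = Sum.inl y) ∨
    (∃ x ∈ VL, a = Sum.inr 0 ∧ b = Sum.inl x) ∨
    (a = Sum.inr 0 ∧ b = Sum.inr 1) ∨
    (∃ y ∈ VR, a = Sum.inr 2 ∧ b = Sum.inl y) ∨
    (a = Sum.inr 2 ∧ b = Sum.inr 3))

namespace SetTheory.PGame

@[simp] theorem moveLeft_mk {xl xr : Type u} {xL : xl → PGame.{u}} {xR : xr → PGame.{u}} :
    (mk xl xr xL xR).moveLeft = xL := rfl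

@[simp] theorem moveRight_mk {xl xr : Type u} {xL : xl → PGame.{u}} {xR : xr → PGame.{u}} :
    (mk xl xr xL xR).moveRight = xR := rfl

theorem leAux_zero_fst (x : PGame.{u}) :
    (leAux x 0).1 ↔ ∀ i, ¬(leAux (x.moveLeft i) 0).2 := by
  cases x; exact ⟨fun h => h.1, fun h => ⟨h, fun j => j.elim⟩⟩

theorem leAux_zero_snd (x : PGame.{u}) :
    (leAux x 0).2 ↔ ∀ j, ¬(leAux (x.moveRight j) 0).1 := by
  cases x; exact ⟨fun h => h.2, fun h => ⟨fun i => i.elim, h⟩⟩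

theorem leAux_zero_fst' (x : PGame.{u}) :
    (leAux 0 x).1 ↔ ∀ j, ¬(leAux 0 (x.moveRight j)).2 := by
  cases x; exact ⟨fun h => h.2, fun h => ⟨fun i => i.elim, h⟩⟩

theorem leAux_zero_snd' (x : PGame.{u}) :
    (leAux 0 x).2 ↔ ∀ i, ¬(leAux 0 (x.moveLeft i)).1 := by
  cases x; exact ⟨fun h => h.1, fun h => ⟨h, fun j => j.elim⟩⟩

theorem relab_zero {x y : PGame.{u}} (e : x ≡r y) :
    (((leAux x 0).1 ↔ (leAux y 0).1) ∧ ((leAux x 0).2 ↔ (leAux y 0).2)) ∧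
    (((leAux 0 x).1 ↔ (leAux 0 y).1) ∧ ((leAux 0 x).2 ↔ (leAux 0 y).2)) := by
  induction e with
  | mk L R hL hR ihL ihR =>
    rw [leAux_zero_fst, leAux_zero_fst, leAux_zero_snd, leAux_zero_snd,
      leAux_zero_fst', leAux_zero_fst', leAux_zero_snd', leAux_zero_snd']
    exact ⟨⟨L.forall_congr fun i => not_congr (ihL i).1.2,
      R.forall_congr fun j => not_congr (ihR j).1.1⟩,
      ⟨R.forall_congr fun j => not_congr (ihR j).2.2,
      L.forall_congr fun i => not_congr (ihL i).2.1⟩⟩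

end SetTheory.PGame

section Helpers

lemma edist_eq_two_iff {W : Type*} {H : SimpleGraph W} {a b : W} :
    H.edist a b = 2 ↔ a ≠ b ∧ ¬H.Adj a b ∧ ∃ c, H.Adj a c ∧ H.Adj c b := by
  constructor
  · intro h
    have hne : a ≠ b := by
      intro rfl'; rw [rfl'] at h; simp [edist_self] at h
    have hadj : ¬H.Adj a b := by
      intro hadj; rw [← edist_eq_one_iff_adj] at hadj; rw [hadj] at h; norm_num at h
    refine ⟨hne, hadj, ?_⟩
    obtain ⟨p, hp⟩ := exists_walk_of_edist_eq_coe (by exact_mod_cast h : H.edist a b = (2 : ℕ))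
    match p, hp with
    | .cons h1 (.cons h2 .nil), _ => exact ⟨_, h1, h2⟩
    | .nil, hp => simp at hp
    | .cons _ .nil, hp => simp at hp
    | .cons _ (.cons _ (.cons _ q)), hp => simp [Nat.succ_eq_add_one] at hp
  · rintro ⟨hne, hadj, c, hac, hcb⟩
    have hle : H.edist a b ≤ 2 := by
      have := H.edist_le (Walk.cons hac (Walk.cons hcb Walk.nil))
      simpa using this
    have h0 : H.edist a b ≠ 0 := by simp [edist_eq_zero_iff, hne]
    have h1 : H.edist a b ≠ 1 := fun h => hadj (edist_eq_one_iff_adj.mp h)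
    have htop : H.edist a b ≠ ⊤ := by
      intro h; rw [h] at hle; exact absurd hle (by simp)
    lift H.edist a b to ℕ using htop with n hn
    have hle' : n ≤ 2 := by exact_mod_cast hle
    have h0' : n ≠ 0 := by exact_mod_cast h0
    have h1' : n ≠ 1 := by exact_mod_cast h1
    have : n = 2 := by omega
    exact_mod_cast congrArg Nat.cast this

variable {V : Type*} (G : SimpleGraph V) (VL VR : Finset V)

lemma adj_inl_inl (x y : V) : (gadgetGraph4 G VL VR).Adj (Sum.inl x) (Sum.inl y) ↔ G.Adj x y := by
  simp only [gadgetGraph4, fromRel_adj]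
  constructor
  · rintro ⟨hne, h | h⟩ <;> simp_all <;> exact h.symm
  · intro h; exact ⟨by simpa using h.ne, Or.inl (Or.inl ⟨x, y, h, rfl, rfl⟩)⟩

lemma adj_inl_inr (x : V) (g : Fin 4) :
    (gadgetGraph4 G VL VR).Adj (Sum.inl x) (Sum.inr g) ↔
      (g = 0 ∧ x ∈ VL) ∨ (g = 2 ∧ x ∈ VR) := by
  simp only [gadgetGraph4, fromRel_adj]
  constructor
  · rintro ⟨hne, h | h⟩ <;> simp_all <;> tauto
  · rintro (⟨rfl, hx⟩ | ⟨rfl, hx⟩)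
    · exact ⟨by simp, Or.inr (Or.inr (Or.inl ⟨x, hx, rfl, rfl⟩))⟩
    · exact ⟨by simp, Or.inr (Or.inr (Or.inr (Or.inr (Or.inl ⟨x, hx, rfl, rfl⟩))))⟩

lemma adj_inr_inl (x : V) (g : Fin 4) :
    (gadgetGraph4 G VL VR).Adj (Sum.inr g) (Sum.inl x) ↔
      (g = 0 ∧ x ∈ VL) ∨ (g = 2 ∧ x ∈ VR) := by
  rw [SimpleGraph.adj_comm]; exact adj_inl_inr G VL VR x g

lemma adj_inr_inr (g g' : Fin 4) :
    (gadgetGraph4 G VL VR).Adj (Sum.inr g) (Sum.inr g') ↔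
      (g = 0 ∧ g' = 1) ∨ (g = 1 ∧ g' = 0) ∨ (g = 2 ∧ g' = 3) ∨ (g = 3 ∧ g' = 2) := by
  simp only [gadgetGraph4, fromRel_adj]
  constructor
  · rintro ⟨hne, h | h⟩ <;> simp_all <;> tauto
  · rintro (⟨rfl, rfl⟩ | ⟨rfl, rfl⟩ | ⟨rfl, rfl⟩ | ⟨rfl, rfl⟩)
    · exact ⟨by simp, Or.inl (Or.inr (Or.inr (Or.inl ⟨rfl, rfl⟩)))⟩
    · exact ⟨by simp, Or.inr (Or.inr (Or.inr (Or.inl ⟨rfl, rfl⟩)))⟩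
    · exact ⟨by simp, Or.inl (Or.inr (Or.inr (Or.inr (Or.inr ⟨rfl, rfl⟩))))⟩
    · exact ⟨by simp, Or.inr (Or.inr (Or.inr (Or.inr (Or.inr ⟨rfl, rfl⟩))))⟩

/-- distance from `inl x` to the guard `inr 3` is 2 iff `x ∈ VR`. -/
lemma edist_inl_inr3 (x : V) :
    (gadgetGraph4 G VL VR).edist (Sum.inl x) (Sum.inr 3) = 2 ↔ x ∈ VR := by
  rw [_root_.edist_eq_two_iff]
  constructor
  · rintro ⟨-, -, c, hc1, hc2⟩
    match c with
    | Sum.inl y => rw [adj_inl_inr] at hc2; simp at hc2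
    | Sum.inr g =>
      rw [adj_inr_inr] at hc2
      have : g = 2 := by
        rcases hc2 with ⟨rfl, h⟩ | ⟨rfl, h⟩ | ⟨rfl, h⟩ | ⟨rfl, h⟩ <;> first | rfl | (exact absurd h (by decide))
      subst this
      rw [adj_inl_inr] at hc1
      rcases hc1 with ⟨h, -⟩ | ⟨-, h⟩
      · exact absurd h (by decide)
      · exact h
  · intro hx
    refine ⟨by simp, ?_, Sum.inr 2, ?_, ?_⟩
    · rw [adj_inl_inr]; rintro (⟨h, -⟩ | ⟨h, -⟩) <;> exact absurd h (by decide)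
    · rw [adj_inl_inr]; exact Or.inr ⟨rfl, hx⟩
    · rw [adj_inr_inr]; exact Or.inr (Or.inr (Or.inl ⟨rfl, rfl⟩))

/-- distance from `inl x` to the guard `inr 1` is 2 iff `x ∈ VL`. -/
lemma edist_inl_inr1 (x : V) :
    (gadgetGraph4 G VL VR).edist (Sum.inl x) (Sum.inr 1) = 2 ↔ x ∈ VL := by
  rw [_root_.edist_eq_two_iff]
  constructor
  · rintro ⟨-, -, c, hc1, hc2⟩
    match c with
    | Sum.inl y => rw [adj_inl_inr] at hc2; simp at hc2
    | Sum.inr g =>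
      rw [adj_inr_inr] at hc2
      have : g = 0 := by
        rcases hc2 with ⟨rfl, h⟩ | ⟨rfl, h⟩ | ⟨rfl, h⟩ | ⟨rfl, h⟩ <;> first | rfl | (exact absurd h (by decide))
      subst this
      rw [adj_inl_inr] at hc1
      rcases hc1 with ⟨-, h⟩ | ⟨h, -⟩
      · exact h
      · exact absurd h (by decide)
  · intro hx
    refine ⟨by simp, ?_, Sum.inr 0, ?_, ?_⟩
    · rw [adj_inl_inr]; rintro (⟨h, -⟩ | ⟨h, -⟩) <;> exact absurd h (by decide)
    · rw [adj_inl_inr]; exact Or.inl ⟨rfl, hx⟩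
    · rw [adj_inr_inr]; exact Or.inl ⟨rfl, rfl⟩

variable {G VL VR}

/-- no vertex of `VL` is at distance 2 from a vertex of `VR` in the gadget graph. -/
lemma edist_inl_inl_ne_two (hparts : Disjoint VL VR)
    (hbip : ∀ ⦃x y : V⦄, G.Adj x y → (x ∈ VL ∧ y ∈ VR) ∨ (x ∈ VR ∧ y ∈ VL))
    {x y : V} (hx : x ∈ VL) (hy : y ∈ VR) :
    (gadgetGraph4 G VL VR).edist (Sum.inl x) (Sum.inl y) ≠ 2 := by
  intro h
  obtain ⟨-, -, c, hc1, hc2⟩ := _root_.edist_eq_two_iff.mp h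
  have hxnR : x ∉ VR := Finset.disjoint_left.mp hparts hx
  have hynL : y ∉ VL := Finset.disjoint_right.mp hparts hy
  match c with
  | Sum.inl z =>
    rw [adj_inl_inl] at hc1 hc2
    have hz1 : z ∈ VR := by rcases hbip hc1 with ⟨-, h⟩ | ⟨h, -⟩; exact h; exact absurd h hxnR
    have hz2 : z ∈ VL := by rcases hbip hc2 with ⟨h, -⟩ | ⟨-, h⟩; exact h; exact absurd h hynL
    exact Finset.disjoint_left.mp hparts hz2 hz1
  | Sum.inr g =>
    rw [adj_inl_inr] at hc1
    rw [adj_inr_inl] at hc2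
    rcases hc1 with ⟨rfl, -⟩ | ⟨rfl, h⟩
    · rcases hc2 with ⟨-, h⟩ | ⟨h, -⟩
      · exact hynL h
      · exact absurd h (by decide)
    · exact hxnR h

end Helpers

section MoveIffs

variable {V : Type*} [DecidableEq V] {G : SimpleGraph V} {VL VR : Finset V}

lemma mem_blue_iff {B : Finset V} (x : V) :
    Sum.inl x ∈ ({Sum.inr 1} ∪ B.image Sum.inl : Finset (V ⊕ Fin 4)) ↔ x ∈ B := by
  simp

lemma leftIff (hcover : ∀ v : V, v ∈ VL ∨ v ∈ VR) (hparts : Disjoint VL VR)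
    (hbip : ∀ ⦃x y : V⦄, G.Adj x y → (x ∈ VL ∧ y ∈ VR) ∨ (x ∈ VR ∧ y ∈ VL))
    {B R : Finset V} (hB : B ⊆ VL) (hR : R ⊆ VR) (x : V) :
    LeftMove (gadgetGraph4 G VL VR) {1, 2} {1}
        ({Sum.inr 1} ∪ B.image Sum.inl) ({Sum.inr 3} ∪ R.image Sum.inl) (Sum.inl x) ↔
      x ∈ VL ∧ x ∉ B ∪ R ∧ ∀ u ∈ B ∪ R, ¬G.Adj x u := by
  constructor
  · rintro ⟨h1, h2, h3, h4⟩
    have hxB : x ∉ B := fun h => h1 (by simp [h])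
    have hxR : x ∉ R := fun h => h2 (by simp [h])
    have hxVR : x ∉ VR := fun h =>
      h3 (Sum.inr 3) (by simp) 2 (by simp) (by exact_mod_cast (edist_inl_inr3 G VL VR x).mpr h)
    refine ⟨(hcover x).resolve_right hxVR, by simp [hxB, hxR], ?_⟩
    intro u hu hadj
    rcases Finset.mem_union.mp hu with hu | hu
    · exact h4 (Sum.inl u) (by simp [hu]) 1 (by simp)
        (by exact_mod_cast edist_eq_one_iff_adj.mpr ((adj_inl_inl G VL VR x u).mpr hadj))
    · exact h3 (Sum.inl u) (by simp [hu]) 1 (by simp)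
        (by exact_mod_cast edist_eq_one_iff_adj.mpr ((adj_inl_inl G VL VR x u).mpr hadj))
  · rintro ⟨hxVL, hxBR, hadj⟩
    have hxB : x ∉ B := fun h => hxBR (Finset.mem_union_left _ h)
    have hxR : x ∉ R := fun h => hxBR (Finset.mem_union_right _ h)
    have hxVR : x ∉ VR := Finset.disjoint_left.mp hparts hxVL
    refine ⟨by simp [hxB], by simp [hxR], ?_, ?_⟩
    · intro r hr d hd
      have hr' : r = Sum.inr 3 ∨ ∃ a ∈ R, Sum.inl a = r := by simpa using hr
      have hd' : d = 1 ∨ d = 2 := by simpa using hd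
      rcases hr' with rfl | ⟨a, ha, rfl⟩
      · rcases hd' with rfl | rfl
        · intro h
          have := edist_eq_one_iff_adj.mp (by exact_mod_cast h)
          rw [adj_inl_inr] at this
          rcases this with ⟨h', -⟩ | ⟨h', -⟩ <;> exact absurd h' (by decide)
        · intro h
          exact hxVR ((edist_inl_inr3 G VL VR x).mp (by exact_mod_cast h))
      · rcases hd' with rfl | rfl
        · intro h
          exact hadj a (Finset.mem_union_right _ ha)
            ((adj_inl_inl G VL VR x a).mp (edist_eq_one_iff_adj.mp (by exact_mod_cast h)))
        · intro h
          exact edist_inl_inl_ne_two hparts hbip hxVL (hR ha) (by exact_mod_cast h)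
    · intro b hb s hs
      have hb' : b = Sum.inr 1 ∨ ∃ a ∈ B, Sum.inl a = b := by simpa using hb
      have hs' : s = 1 := by simpa using hs
      subst hs'
      rcases hb' with rfl | ⟨a, ha, rfl⟩
      · intro h
        have := edist_eq_one_iff_adj.mp (by exact_mod_cast h)
        rw [adj_inl_inr] at this
        rcases this with ⟨h', -⟩ | ⟨h', -⟩ <;> exact absurd h' (by decide)
      · intro h
        exact hadj a (Finset.mem_union_left _ ha)
          ((adj_inl_inl G VL VR x a).mp (edist_eq_one_iff_adj.mp (by exact_mod_cast h)))

lemma rightIff (hcover : ∀ v : V, v ∈ VL ∨ v ∈ VR) (hparts : Disjoint VL VR)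
    (hbip : ∀ ⦃x y : V⦄, G.Adj x y → (x ∈ VL ∧ y ∈ VR) ∨ (x ∈ VR ∧ y ∈ VL))
    {B R : Finset V} (hB : B ⊆ VL) (hR : R ⊆ VR) (x : V) :
    RightMove (gadgetGraph4 G VL VR) {1, 2} {1}
        ({Sum.inr 1} ∪ B.image Sum.inl) ({Sum.inr 3} ∪ R.image Sum.inl) (Sum.inl x) ↔
      x ∈ VR ∧ x ∉ B ∪ R ∧ ∀ u ∈ B ∪ R, ¬G.Adj x u := by
  constructor
  · rintro ⟨h1, h2, h3, h4⟩
    have hxB : x ∉ B := fun h => h1 (by simp [h])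
    have hxR : x ∉ R := fun h => h2 (by simp [h])
    have hxVL : x ∉ VL := fun h =>
      h3 (Sum.inr 1) (by simp) 2 (by simp) (by exact_mod_cast (edist_inl_inr1 G VL VR x).mpr h)
    refine ⟨(hcover x).resolve_left hxVL, by simp [hxB, hxR], ?_⟩
    intro u hu hadj
    rcases Finset.mem_union.mp hu with hu | hu
    · exact h3 (Sum.inl u) (by simp [hu]) 1 (by simp)
        (by exact_mod_cast edist_eq_one_iff_adj.mpr ((adj_inl_inl G VL VR x u).mpr hadj))
    · exact h4 (Sum.inl u) (by simp [hu]) 1 (by simp)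
        (by exact_mod_cast edist_eq_one_iff_adj.mpr ((adj_inl_inl G VL VR x u).mpr hadj))
  · rintro ⟨hxVR, hxBR, hadj⟩
    have hxB : x ∉ B := fun h => hxBR (Finset.mem_union_left _ h)
    have hxR : x ∉ R := fun h => hxBR (Finset.mem_union_right _ h)
    have hxVL : x ∉ VL := Finset.disjoint_right.mp hparts hxVR
    refine ⟨by simp [hxB], by simp [hxR], ?_, ?_⟩
    · intro b hb d hd
      have hb' : b = Sum.inr 1 ∨ ∃ a ∈ B, Sum.inl a = b := by simpa using hb
      have hd' : d = 1 ∨ d = 2 := by simpa using hd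
      rcases hb' with rfl | ⟨a, ha, rfl⟩
      · rcases hd' with rfl | rfl
        · intro h
          have := edist_eq_one_iff_adj.mp (by exact_mod_cast h)
          rw [adj_inl_inr] at this
          rcases this with ⟨h', -⟩ | ⟨h', -⟩ <;> exact absurd h' (by decide)
        · intro h
          exact hxVL ((edist_inl_inr1 G VL VR x).mp (by exact_mod_cast h))
      · rcases hd' with rfl | rfl
        · intro h
          exact hadj a (Finset.mem_union_left _ ha)
            ((adj_inl_inl G VL VR x a).mp (edist_eq_one_iff_adj.mp (by exact_mod_cast h)))
        · intro h
          rw [(gadgetGraph4 G VL VR).edist_comm] at h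
          exact edist_inl_inl_ne_two hparts hbip (hB ha) hxVR (by exact_mod_cast h)
    · intro r hr s hs
      have hr' : r = Sum.inr 3 ∨ ∃ a ∈ R, Sum.inl a = r := by simpa using hr
      have hs' : s = 1 := by simpa using hs
      subst hs'
      rcases hr' with rfl | ⟨a, ha, rfl⟩
      · intro h
        have := edist_eq_one_iff_adj.mp (by exact_mod_cast h)
        rw [adj_inl_inr] at this
        rcases this with ⟨h', -⟩ | ⟨h', -⟩ <;> exact absurd h' (by decide)
      · intro h
        exact hadj a (Finset.mem_union_right _ ha)
          ((adj_inl_inl G VL VR x a).mp (edist_eq_one_iff_adj.mp (by exact_mod_cast h)))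

lemma gadgetNoMove {B R : Finset V} (g : Fin 4) :
    ¬LeftMove (gadgetGraph4 G VL VR) {1, 2} {1}
        ({Sum.inr 1} ∪ B.image Sum.inl) ({Sum.inr 3} ∪ R.image Sum.inl) (Sum.inr g) ∧
    ¬RightMove (gadgetGraph4 G VL VR) {1, 2} {1}
        ({Sum.inr 1} ∪ B.image Sum.inl) ({Sum.inr 3} ∪ R.image Sum.inl) (Sum.inr g) := by
  have e01 : (gadgetGraph4 G VL VR).edist (Sum.inr 0) (Sum.inr 1) = ((1 : ℕ) : ℕ∞) := by
    exact_mod_cast edist_eq_one_iff_adj.mpr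
      ((adj_inr_inr G VL VR 0 1).mpr (Or.inl ⟨rfl, rfl⟩))
  have e23 : (gadgetGraph4 G VL VR).edist (Sum.inr 2) (Sum.inr 3) = ((1 : ℕ) : ℕ∞) := by
    exact_mod_cast edist_eq_one_iff_adj.mpr
      ((adj_inr_inr G VL VR 2 3).mpr (Or.inr (Or.inr (Or.inl ⟨rfl, rfl⟩))))
  fin_cases g
  · exact ⟨fun h => h.2.2.2 (Sum.inr 1) (by simp) 1 (by simp) e01,
      fun h => h.2.2.1 (Sum.inr 1) (by simp) 1 (by simp) e01⟩
  · exact ⟨fun h => h.1 (by simp), fun h => h.1 (by simp)⟩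
  · exact ⟨fun h => h.2.2.1 (Sum.inr 3) (by simp) 1 (by simp) e23,
      fun h => h.2.2.2 (Sum.inr 3) (by simp) 1 (by simp) e23⟩
  · exact ⟨fun h => h.2.1 (by simp), fun h => h.2.1 (by simp)⟩

end MoveIffs


def moveEquiv {α β : Type*} {P : α ⊕ β → Prop} {Q : α → Prop}
    (h1 : ∀ x, P (Sum.inl x) ↔ Q x) (h2 : ∀ g, ¬ P (Sum.inr g)) :
    {w // P w} ≃ {v // Q v} where
  toFun w := match w with
    | ⟨Sum.inl x, hw⟩ => ⟨x, (h1 x).mp hw⟩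
    | ⟨Sum.inr g, hw⟩ => absurd hw (h2 g)
  invFun v := ⟨Sum.inl v.1, (h1 v.1).mpr v.2⟩
  left_inv := fun w => match w with
    | ⟨Sum.inl x, hw⟩ => rfl
    | ⟨Sum.inr g, hw⟩ => absurd hw (h2 g)
  right_inv v := rfl

lemma moveEquiv_fst {α β : Type*} {P : α ⊕ β → Prop} {Q : α → Prop}
    (h1 : ∀ x, P (Sum.inl x) ↔ Q x) (h2 : ∀ g, ¬ P (Sum.inr g)) (w : {w // P w}) :
    w.1 = Sum.inl ((moveEquiv h1 h2 w).1) :=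
  match w with
  | ⟨Sum.inl x, hw⟩ => rfl
  | ⟨Sum.inr g, hw⟩ => absurd hw (h2 g)

open SetTheory.PGame in
def mainRel {V : Type*} [Fintype V] [DecidableEq V] (G : SimpleGraph V) (VL VR : Finset V)
    (hcover : ∀ v : V, v ∈ VL ∨ v ∈ VR) (hparts : Disjoint VL VR)
    (hbip : ∀ ⦃x y : V⦄, G.Adj x y → (x ∈ VL ∧ y ∈ VR) ∨ (x ∈ VR ∧ y ∈ VL))
    (B R : Finset V) (hB : B ⊆ VL) (hR : R ⊆ VR) :
    distGame (gadgetGraph4 G VL VR) {1, 2} {1}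
        ({Sum.inr 1} ∪ B.image Sum.inl) ({Sum.inr 3} ∪ R.image Sum.inl) ≡r
      bnkGame G VL VR (B ∪ R) := by
  rw [distGame, bnkGame]
  refine PGame.Relabelling.mk
    (moveEquiv (leftIff hcover hparts hbip hB hR) (fun g => (gadgetNoMove g).1))
    (moveEquiv (rightIff hcover hparts hbip hB hR) (fun g => (gadgetNoMove g).2))
    (fun i => ?_) (fun j => ?_)
  · simp only [PGame.moveLeft_mk]
    have hfst := moveEquiv_fst (leftIff hcover hparts hbip hB hR) (fun g => (gadgetNoMove g).1) i
    obtain ⟨hxL, hxBR, -⟩ :=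
      ((moveEquiv (leftIff hcover hparts hbip hB hR) (fun g => (gadgetNoMove g).1)) i).2
    rw [hfst,
      show ∀ a : V, insert (Sum.inl a) ({Sum.inr 1} ∪ B.image Sum.inl :
          Finset (V ⊕ Fin 4)) = {Sum.inr 1} ∪ (insert a B).image Sum.inl from fun a => by
        rw [Finset.image_insert, Finset.union_insert],
      show ∀ a : V, insert a (B ∪ R) = insert a B ∪ R from
        fun a => (Finset.insert_union a B R).symm]
    exact mainRel G VL VR hcover hparts hbip _ R (Finset.insert_subset hxL hB) hR
  · simp only [PGame.moveRight_mk]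
    have hfst := moveEquiv_fst (rightIff hcover hparts hbip hB hR) (fun g => (gadgetNoMove g).2) j
    obtain ⟨hxR', hxBR, -⟩ :=
      ((moveEquiv (rightIff hcover hparts hbip hB hR) (fun g => (gadgetNoMove g).2)) j).2
    rw [hfst,
      show ∀ a : V, insert (Sum.inl a) ({Sum.inr 3} ∪ R.image Sum.inl :
          Finset (V ⊕ Fin 4)) = {Sum.inr 3} ∪ (insert a R).image Sum.inl from fun a => by
        rw [Finset.image_insert, Finset.union_insert],
      show ∀ a : V, insert a (B ∪ R) = B ∪ insert a R from
        fun a => (Finset.union_insert a B R).symm]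
    exact mainRel G VL VR hcover hparts hbip B _ hB (Finset.insert_subset hxR' hR)
termination_by ((B ∪ R)ᶜ).card
decreasing_by
  · rw [Finset.insert_union, Finset.compl_insert]
    exact Finset.card_erase_lt_of_mem (Finset.mem_compl.2 hxBR)
  · rw [Finset.union_insert, Finset.compl_insert]
    exact Finset.card_erase_lt_of_mem (Finset.mem_compl.2 hxBR)

open SetTheory.PGame in
/-- the distance game `D⟨{1,2},{1}⟩` on `G'` starting from the position with a
blue piece on `bL` and a red piece on `rR` is play-for-play equivalent to
`BiGraph-Node-Kayles` on `G` starting from the empty position. -/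
theorem stmt3 {V : Type*} [Fintype V] [DecidableEq V] (G : SimpleGraph V) (VL VR : Finset V)
    (hcover : ∀ v : V, v ∈ VL ∨ v ∈ VR) (hparts : Disjoint VL VR)
    (hbip : ∀ ⦃x y : V⦄, G.Adj x y → (x ∈ VL ∧ y ∈ VR) ∨ (x ∈ VR ∧ y ∈ VL)) :
    -- positions correspond by restricting the pieces to `V_L ∪ V_R`, and under this
    -- correspondence each player's legal moves agree:
    (∀ B R : Finset V, B ⊆ VL → R ⊆ VR →
      (∀ x : V,
        LeftMove (gadgetGraph4 G VL VR) {1, 2} {1}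
            ({Sum.inr 1} ∪ B.image Sum.inl) ({Sum.inr 3} ∪ R.image Sum.inl) (Sum.inl x) ↔
          x ∈ VL ∧ x ∉ B ∪ R ∧ ∀ u ∈ B ∪ R, ¬G.Adj x u) ∧
      (∀ x : V,
        RightMove (gadgetGraph4 G VL VR) {1, 2} {1}
            ({Sum.inr 1} ∪ B.image Sum.inl) ({Sum.inr 3} ∪ R.image Sum.inl) (Sum.inl x) ↔
          x ∈ VR ∧ x ∉ B ∪ R ∧ ∀ u ∈ B ∪ R, ¬G.Adj x u) ∧
      (∀ g : Fin 4,
        ¬LeftMove (gadgetGraph4 G VL VR) {1, 2} {1}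
            ({Sum.inr 1} ∪ B.image Sum.inl) ({Sum.inr 3} ∪ R.image Sum.inl) (Sum.inr g) ∧
        ¬RightMove (gadgetGraph4 G VL VR) {1, 2} {1}
            ({Sum.inr 1} ∪ B.image Sum.inl) ({Sum.inr 3} ∪ R.image Sum.inl) (Sum.inr g))) ∧
    -- the two games are play-for-play equivalent:
    Nonempty
      (distGame (gadgetGraph4 G VL VR) {1, 2} {1} {Sum.inr 1} {Sum.inr 3} ≡r
        bnkGame G VL VR ∅) ∧
    -- in particular, for each player, that player has a winning strategy moving first
    -- (respectively, second) in one game iff in the other: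
    ((0 ⧏ distGame (gadgetGraph4 G VL VR) {1, 2} {1} {Sum.inr 1} {Sum.inr 3} ↔
        0 ⧏ bnkGame G VL VR ∅) ∧
      (0 ≤ distGame (gadgetGraph4 G VL VR) {1, 2} {1} {Sum.inr 1} {Sum.inr 3} ↔
        0 ≤ bnkGame G VL VR ∅) ∧
      (distGame (gadgetGraph4 G VL VR) {1, 2} {1} {Sum.inr 1} {Sum.inr 3} ⧏ 0 ↔
        bnkGame G VL VR ∅ ⧏ 0) ∧
      (distGame (gadgetGraph4 G VL VR) {1, 2} {1} {Sum.inr 1} {Sum.inr 3} ≤ 0 ↔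
        bnkGame G VL VR ∅ ≤ 0)) := by
  
  have hrel : Nonempty
      (distGame (gadgetGraph4 G VL VR) {1, 2} {1} {Sum.inr 1} {Sum.inr 3} ≡r
        bnkGame G VL VR ∅) := by
    have h := mainRel G VL VR hcover hparts hbip ∅ ∅ (by simp) (by simp)
    simpa using ⟨h⟩
  obtain ⟨e⟩ := hrel
  have heq := PGame.relab_zero e
  refine ⟨fun B R hB hR =>
    ⟨leftIff hcover hparts hbip hB hR, rightIff hcover hparts hbip hB hR,
      fun g => gadgetNoMove g⟩, ⟨e⟩, ?_, ?_, ?_, ?_⟩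
  · exact not_congr heq.1.1
  · exact heq.2.1
  · exact not_congr heq.2.1
  · exact heq.1.1
end

section
/- Let G be a finite bipartite simple graph with parts V_L and V_R, and let G' be formed from G by adding new vertices v, b_L, u, r_R with edges: v adjacent to every vertex of V_L, v–b_L; u adjacent to every vertex of V_R, u–r_R. Consider any position of the distance game D⟨{1,2},{1}⟩ on G' in which blue pieces occupy b_L and possibly some vertices of V_L, red pieces occupy r_R and possibly some vertices of V_R, and no other vertex is occupied. Then an unoccupied vertex x ∈ V_L is a legal Left move if and only if no G-neighbour of x carries a red piece; symmetrically, an unoccupied vertex y ∈ V_R is a legal Right move if and only if no G-neighbour of y carries a blue piece. -/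
open SimpleGraph

lemma edist_ne_two' {W : Type*} (G : SimpleGraph W) {u v : W}
    (h : ∀ w, G.Adj u w → ¬ G.Adj w v) : G.edist u v ≠ 2 := by
  intro h2
  obtain ⟨p, hp⟩ := SimpleGraph.exists_walk_of_edist_eq_coe (k := 2) (by exact_mod_cast h2)
  have a1 := p.adj_getVert_succ (i := 0) (by omega)
  have a2 := p.adj_getVert_succ (i := 1) (by omega)
  rw [p.getVert_zero] at a1
  have : p.getVert 2 = v := by rw [← hp]; exact p.getVert_length
  rw [this] at a2
  exact h _ a1 a2

lemma gadget_adj_inl_inl {V : Type*} (G : SimpleGraph V) (VL VR : Finset V) (a b : V) :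
    (gadgetGraph4 G VL VR).Adj (Sum.inl a) (Sum.inl b) ↔ G.Adj a b := by
  simp only [gadgetGraph4, SimpleGraph.fromRel_adj]
  constructor
  · rintro ⟨hne, h | h⟩ <;>
      rcases h with ⟨x, y, hxy, hx, hy⟩ | ⟨x, _, hx, _⟩ | ⟨hx, _⟩ | ⟨y, _, hy, _⟩ | ⟨hx, _⟩ <;>
      simp_all
    exact hxy.symm
  · intro h
    exact ⟨by simp [h.ne], Or.inl (Or.inl ⟨a, b, h, rfl, rfl⟩)⟩

lemma gadget_adj_inl_inr {V : Type*} (G : SimpleGraph V) (VL VR : Finset V) (a : V) (i : Fin 4) :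
    (gadgetGraph4 G VL VR).Adj (Sum.inl a) (Sum.inr i) ↔ (i = 0 ∧ a ∈ VL) ∨ (i = 2 ∧ a ∈ VR) := by
  simp only [gadgetGraph4, SimpleGraph.fromRel_adj]
  constructor
  · rintro ⟨hne, h | h⟩ <;>
      rcases h with ⟨x, y, hxy, hx, hy⟩ | ⟨x, hxm, hx, hy⟩ | ⟨hx, hy⟩ | ⟨y, hym, hx, hy⟩ | ⟨hx, hy⟩ <;>
      simp_all
  · rintro (⟨rfl, ha⟩ | ⟨rfl, ha⟩)
    · exact ⟨by simp, Or.inr (Or.inr (Or.inl ⟨a, ha, rfl, rfl⟩))⟩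
    · exact ⟨by simp, Or.inr (Or.inr (Or.inr (Or.inr (Or.inl ⟨a, ha, rfl, rfl⟩))))⟩

lemma gadget_adj_inr_inr {V : Type*} (G : SimpleGraph V) (VL VR : Finset V) (i j : Fin 4) :
    (gadgetGraph4 G VL VR).Adj (Sum.inr i) (Sum.inr j) ↔
      (i = 0 ∧ j = 1) ∨ (i = 1 ∧ j = 0) ∨ (i = 2 ∧ j = 3) ∨ (i = 3 ∧ j = 2) := by
  simp only [gadgetGraph4, SimpleGraph.fromRel_adj]
  constructor
  · rintro ⟨hne, h | h⟩ <;>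
      rcases h with ⟨x, y, hxy, hx, hy⟩ | ⟨x, hxm, hx, hy⟩ | ⟨hx, hy⟩ | ⟨y, hym, hx, hy⟩ | ⟨hx, hy⟩ <;>
      simp_all
  · rintro (⟨rfl, rfl⟩ | ⟨rfl, rfl⟩ | ⟨rfl, rfl⟩ | ⟨rfl, rfl⟩) <;>
      exact ⟨by simp, by tauto⟩


/-- in the distance game `D⟨{1,2},{1}⟩` on `G'`, in any position where blue
pieces occupy `bL` and possibly some vertices of `V_L`, and red pieces occupy `rR` and
possibly some vertices of `V_R`, an unoccupied `x ∈ V_L` is a legal Left move iff no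
`G`-neighbour of `x` carries a red piece, and an unoccupied `y ∈ V_R` is a legal Right move
iff no `G`-neighbour of `y` carries a blue piece. -/
theorem stmt5 {V : Type*} [Fintype V] [DecidableEq V] (G : SimpleGraph V) (VL VR : Finset V)
    (hcover : ∀ v : V, v ∈ VL ∨ v ∈ VR) (hparts : Disjoint VL VR)
    (hbip : ∀ ⦃x y : V⦄, G.Adj x y → (x ∈ VL ∧ y ∈ VR) ∨ (x ∈ VR ∧ y ∈ VL))
    (B R : Finset V) (hB : B ⊆ VL) (hR : R ⊆ VR)
    (blue red : Finset (V ⊕ Fin 4))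
    (hblue : blue = {Sum.inr 1} ∪ B.image Sum.inl)
    (hred : red = {Sum.inr 3} ∪ R.image Sum.inl) :
    -- an unoccupied vertex `x ∈ V_L` is a legal Left move iff no `G`-neighbour of `x`
    -- carries a red piece:
    (∀ x ∈ VL, Sum.inl x ∉ blue → Sum.inl x ∉ red →
      (LeftMove (gadgetGraph4 G VL VR) {1, 2} {1} blue red (Sum.inl x) ↔
        ∀ y : V, G.Adj x y → Sum.inl y ∉ red)) ∧
    -- an unoccupied vertex `y ∈ V_R` is a legal Right move iff no `G`-neighbour of `y`
    -- carries a blue piece: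
    (∀ y ∈ VR, Sum.inl y ∉ blue → Sum.inl y ∉ red →
      (RightMove (gadgetGraph4 G VL VR) {1, 2} {1} blue red (Sum.inl y) ↔
        ∀ z : V, G.Adj y z → Sum.inl z ∉ blue)) := by
  
  subst hblue hred
  have hLR : ∀ a ∈ VL, a ∉ VR := fun a ha => Finset.disjoint_left.mp hparts ha
  have hRL : ∀ a ∈ VR, a ∉ VL := fun a ha => Finset.disjoint_right.mp hparts ha
  set H := gadgetGraph4 G VL VR with hH
  have hii : ∀ a b : V, H.Adj (Sum.inl a) (Sum.inl b) ↔ G.Adj a b :=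
    gadget_adj_inl_inl G VL VR
  have hir : ∀ (a : V) (i : Fin 4), H.Adj (Sum.inl a) (Sum.inr i) ↔
      (i = 0 ∧ a ∈ VL) ∨ (i = 2 ∧ a ∈ VR) := gadget_adj_inl_inr G VL VR
  have hrr : ∀ i j : Fin 4, H.Adj (Sum.inr i) (Sum.inr j) ↔
      (i = 0 ∧ j = 1) ∨ (i = 1 ∧ j = 0) ∨ (i = 2 ∧ j = 3) ∨ (i = 3 ∧ j = 2) :=
    gadget_adj_inr_inr G VL VR
  constructor
  · -- Left part
    intro x hx hxb hxr
    have hxVR : x ∉ VR := hLR x hx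
    constructor
    · rintro ⟨-, -, hD, -⟩ y hxy hy
      have h1 := hD (Sum.inl y) hy 1 (by simp)
      rw [Nat.cast_one, Ne, SimpleGraph.edist_eq_one_iff_adj, hii] at h1
      exact h1 hxy
    · intro hno
      refine ⟨hxb, hxr, ?_, ?_⟩
      · rintro r hr d hd
        simp only [Set.mem_insert_iff, Set.mem_singleton_iff] at hd
        simp only [Finset.mem_union, Finset.mem_singleton, Finset.mem_image] at hr
        rcases hr with rfl | ⟨z, hz, rfl⟩
        · rcases hd with rfl | rfl
          · rw [Nat.cast_one, Ne, SimpleGraph.edist_eq_one_iff_adj, hir]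
            simp
          · rw [Nat.cast_ofNat]
            apply edist_ne_two'
            rintro (a | i) hw hwv
            · rw [hir] at hwv; simp at hwv
            · rw [hir] at hw
              rcases hw with ⟨rfl, -⟩ | ⟨rfl, h2⟩
              · rw [hrr] at hwv; simp at hwv
              · exact hxVR h2
        · have hzVR : z ∈ VR := hR hz
          rcases hd with rfl | rfl
          · rw [Nat.cast_one, Ne, SimpleGraph.edist_eq_one_iff_adj, hii]
            intro hadj
            exact hno z hadj (Finset.mem_union.mpr (Or.inr (Finset.mem_image_of_mem _ hz)))
          · rw [Nat.cast_ofNat]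
            apply edist_ne_two'
            rintro (a | i) hw hwv
            · rw [hii] at hw hwv
              have haVR : a ∈ VR := by
                rcases hbip hw with ⟨-, h⟩ | ⟨h, -⟩
                · exact h
                · exact absurd h hxVR
              rcases hbip hwv with ⟨h, -⟩ | ⟨-, h⟩
              · exact hRL a haVR h
              · exact hRL z hzVR h
            · rw [hir] at hw
              have h3 : H.Adj (Sum.inl z) (Sum.inr i) := hwv.symm
              rw [hir] at h3
              rcases h3 with ⟨rfl, h⟩ | ⟨rfl, -⟩
              · exact hRL z hzVR h
              · rcases hw with ⟨h02, -⟩ | ⟨-, h⟩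
                · exact absurd h02 (by decide)
                · exact hxVR h
      · rintro b hb s hs
        simp only [Set.mem_singleton_iff] at hs
        subst hs
        simp only [Finset.mem_union, Finset.mem_singleton, Finset.mem_image] at hb
        rw [Nat.cast_one, Ne, SimpleGraph.edist_eq_one_iff_adj]
        rcases hb with rfl | ⟨c, hc, rfl⟩
        · rw [hir]; simp
        · rw [hii]
          intro hadj
          rcases hbip hadj with ⟨-, h⟩ | ⟨h, -⟩
          · exact hLR c (hB hc) h
          · exact hxVR h
  · -- Right part
    intro y hy hyb hyr
    have hyVL : y ∉ VL := hRL y hy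
    constructor
    · rintro ⟨-, -, hD, -⟩ z hyz hz
      have h1 := hD (Sum.inl z) hz 1 (by simp)
      rw [Nat.cast_one, Ne, SimpleGraph.edist_eq_one_iff_adj, hii] at h1
      exact h1 hyz
    · intro hno
      refine ⟨hyb, hyr, ?_, ?_⟩
      · rintro b hb d hd
        simp only [Set.mem_insert_iff, Set.mem_singleton_iff] at hd
        simp only [Finset.mem_union, Finset.mem_singleton, Finset.mem_image] at hb
        rcases hb with rfl | ⟨c, hc, rfl⟩
        · rcases hd with rfl | rfl
          · rw [Nat.cast_one, Ne, SimpleGraph.edist_eq_one_iff_adj, hir]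
            simp
          · rw [Nat.cast_ofNat]
            apply edist_ne_two'
            rintro (a | i) hw hwv
            · rw [hir] at hwv; simp at hwv
            · rw [hir] at hw
              rcases hw with ⟨rfl, h⟩ | ⟨rfl, -⟩
              · exact hyVL h
              · rw [hrr] at hwv; simp at hwv
        · have hcVL : c ∈ VL := hB hc
          rcases hd with rfl | rfl
          · rw [Nat.cast_one, Ne, SimpleGraph.edist_eq_one_iff_adj, hii]
            intro hadj
            exact hno c hadj (Finset.mem_union.mpr (Or.inr (Finset.mem_image_of_mem _ hc)))
          · rw [Nat.cast_ofNat]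
            apply edist_ne_two'
            rintro (a | i) hw hwv
            · rw [hii] at hw hwv
              have haVL : a ∈ VL := by
                rcases hbip hw with ⟨h, -⟩ | ⟨-, h⟩
                · exact absurd h hyVL
                · exact h
              rcases hbip hwv with ⟨-, h⟩ | ⟨h, -⟩
              · exact hLR c hcVL h
              · exact hLR a haVL h
            · rw [hir] at hw
              have h3 : H.Adj (Sum.inl c) (Sum.inr i) := hwv.symm
              rw [hir] at h3
              rcases h3 with ⟨rfl, -⟩ | ⟨rfl, h⟩
              · rcases hw with ⟨-, h⟩ | ⟨h20, -⟩
                · exact hyVL h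
                · exact absurd h20 (by decide)
              · exact hLR c hcVL h
      · rintro r hr s hs
        simp only [Set.mem_singleton_iff] at hs
        subst hs
        simp only [Finset.mem_union, Finset.mem_singleton, Finset.mem_image] at hr
        rw [Nat.cast_one, Ne, SimpleGraph.edist_eq_one_iff_adj]
        rcases hr with rfl | ⟨z, hz, rfl⟩
        · rw [hir]; simp
        · rw [hii]
          intro hadj
          rcases hbip hadj with ⟨h, -⟩ | ⟨-, h⟩
          · exact hyVL h
          · exact hRL z (hR hz) h
end

section
/- For every integer r ≥ 1 there exists a finite connected simple graph F with three distinct distinguished vertices p_B, p_R, v such that: the graph distance from p_B to v equals r, the graph distance from p_R to v equals r, the graph distance from p_B to p_R equals r+1, and every vertex u of F other than p_B and p_R satisfies dist(u, p_B) ≤ r and dist(u, p_R) ≤ r. (Consequently, in any distance game D⟨D,S⟩ with D ∪ S ⊆ {1,…,r} and {1,…,r} equal to D or to S, placing a blue piece on p_B and a red piece on p_R is a legal configuration that makes every other vertex of F unplayable by both players, while any vertex attached to F only through v is at distance at least r+1 from p_B and from p_R.) -/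
namespace Stmt6Aux

/-- vertex predicate: `pB = (0,0)`, `pR = (r+1,0)`, interior `[1,r] × [0,r]`. -/
def P (r : ℤ) (p : ℤ × ℤ) : Prop :=
  (p.1 = 0 ∧ p.2 = 0) ∨ (p.1 = r + 1 ∧ p.2 = 0) ∨
    (1 ≤ p.1 ∧ p.1 ≤ r ∧ 0 ≤ p.2 ∧ p.2 ≤ r)

/-- Chebyshev distance, abs-free. -/
def D (p q : ℤ × ℤ) : ℤ :=
  max (max (p.1 - q.1) (q.1 - p.1)) (max (p.2 - q.2) (q.2 - p.2))

lemma D_comm (p q : ℤ × ℤ) : D p q = D q p := by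
  unfold D; rw [max_comm (p.1 - q.1), max_comm (p.2 - q.2)]

lemma D_le_iff (p q : ℤ × ℤ) (k : ℤ) :
    D p q ≤ k ↔ (p.1 - q.1 ≤ k ∧ q.1 - p.1 ≤ k ∧ p.2 - q.2 ≤ k ∧ q.2 - p.2 ≤ k) := by
  unfold D; simp only [max_le_iff, and_assoc]

lemma D_eq_iff (p q : ℤ × ℤ) (k : ℤ) :
    D p q = k ↔ ((p.1 - q.1 ≤ k ∧ q.1 - p.1 ≤ k ∧ p.2 - q.2 ≤ k ∧ q.2 - p.2 ≤ k) ∧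
      (k ≤ p.1 - q.1 ∨ k ≤ q.1 - p.1 ∨ k ≤ p.2 - q.2 ∨ k ≤ q.2 - p.2)) := by
  rw [le_antisymm_iff, D_le_iff]
  unfold D
  simp only [le_max_iff, and_assoc]
  tauto

lemma D_nonneg (p q : ℤ × ℤ) : 0 ≤ D p q := by
  unfold D; omega

def W (r : ℤ) := {p : ℤ × ℤ // P r p}

def G (r : ℤ) : SimpleGraph (W r) where
  Adj u w := u ≠ w ∧ D u.1 w.1 ≤ 1
  symm := ⟨by rintro u w ⟨h1, h2⟩; exact ⟨h1.symm, by rwa [D_comm]⟩⟩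
  loopless := ⟨fun u h => h.1 rfl⟩

/-- helper: build a step witness from purely linear facts. -/
lemma build (r zx zy x y a b d : ℤ)
    (hd : D (x, y) (a, b) = d)
    (h1 : (zx = 0 ∧ zy = 0) ∨ (zx = r + 1 ∧ zy = 0) ∨
            (1 ≤ zx ∧ zx ≤ r ∧ 0 ≤ zy ∧ zy ≤ r))
    (h2 : ¬(zx = x ∧ zy = y))
    (h3 : zx - x ≤ 1 ∧ x - zx ≤ 1 ∧ zy - y ≤ 1 ∧ y - zy ≤ 1)
    (h4 : (zx - a ≤ d - 1 ∧ a - zx ≤ d - 1 ∧ zy - b ≤ d - 1 ∧ b - zy ≤ d - 1)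
        ∧ (d - 1 ≤ zx - a ∨ d - 1 ≤ a - zx ∨ d - 1 ≤ zy - b ∨ d - 1 ≤ b - zy)) :
    ∃ z : ℤ × ℤ, P r z ∧ z ≠ (x, y) ∧ D z (x, y) ≤ 1 ∧ D z (a, b) + 1 = D (x, y) (a, b) := by
  refine ⟨(zx, zy), h1, ?_, ?_, ?_⟩
  · simp only [Ne, Prod.mk.injEq]; exact h2
  · exact (D_le_iff (zx, zy) (x, y) 1).mpr h3
  · have h5 : D (zx, zy) (a, b) = d - 1 := (D_eq_iff (zx, zy) (a, b) (d - 1)).mpr h4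
    omega

set_option maxHeartbeats 3000000 in
/-- geodesic step lemma -/
lemma step (r : ℤ) (hr : 1 ≤ r) (u w : ℤ × ℤ) (hu : P r u) (hw : P r w)
    (hne : u ≠ w) :
    ∃ z : ℤ × ℤ, P r z ∧ z ≠ u ∧ D z u ≤ 1 ∧ D z w + 1 = D u w := by
  obtain ⟨x, y⟩ := u; obtain ⟨a, b⟩ := w
  simp only [P] at hu hw
  rw [Ne, Prod.mk.injEq, not_and_or] at hne
  obtain ⟨d, hd⟩ : ∃ d, D (x, y) (a, b) = d := ⟨_, rfl⟩
  have hdf : (x - a ≤ d ∧ a - x ≤ d ∧ y - b ≤ d ∧ b - y ≤ d) ∧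
      (d ≤ x - a ∨ d ≤ a - x ∨ d ≤ y - b ∨ d ≤ b - y) :=
    (D_eq_iff (x, y) (a, b) d).mp hd
  by_cases hA : a = 0 ∧ x = 1 ∧ 2 ≤ y
  · exact build r 1 (y - 1) x y a b d hd (by clear hd hdf hne; omega)
      (by clear hd; omega) (by clear hd; omega) (by clear hd hu hne; omega)
  by_cases hB : a = r + 1 ∧ x = r ∧ 2 ≤ y
  · exact build r r (y - 1) x y a b d hd (by clear hd hdf hne; omega)
      (by clear hd; omega) (by clear hd; omega) (by clear hd hu hne; omega)
  rcases lt_trichotomy x a with hx | hx | hx <;> rcases lt_trichotomy y b with hy | hy | hy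
  · exact build r (x + 1) (y + 1) x y a b d hd (by clear hd hdf hne; omega)
      (by clear hd hdf hu hw hA hB; omega) (by clear hd hdf hu hw hA hB hne; omega)
      (by clear hd hu hw hA hB hne; omega)
  · exact build r (x + 1) y x y a b d hd (by clear hd hdf hne; omega)
      (by clear hd hdf hu hw hA hB; omega) (by clear hd hdf hu hw hA hB hne; omega)
      (by clear hd hu hw hA hB hne; omega)
  · exact build r (x + 1) (y - 1) x y a b d hd (by clear hd hdf hne; omega)
      (by clear hd hdf hu hw hA hB; omega) (by clear hd hdf hu hw hA hB hne; omega)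
      (by clear hd hu hw hA hB hne; omega)
  · exact build r x (y + 1) x y a b d hd (by clear hd hdf hne; omega)
      (by clear hd hdf hu hw hA hB; omega) (by clear hd hdf hu hw hA hB hne; omega)
      (by clear hd hu hw hA hB hne; omega)
  · rcases hne with h | h
    exacts [absurd hx h, absurd hy h]
  · exact build r x (y - 1) x y a b d hd (by clear hd hdf hne; omega)
      (by clear hd hdf hu hw hA hB; omega) (by clear hd hdf hu hw hA hB hne; omega)
      (by clear hd hu hw hA hB hne; omega)
  · exact build r (x - 1) (y + 1) x y a b d hd (by clear hd hdf hne; omega)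
      (by clear hd hdf hu hw hA hB; omega) (by clear hd hdf hu hw hA hB hne; omega)
      (by clear hd hu hw hA hB hne; omega)
  · exact build r (x - 1) y x y a b d hd (by clear hd hdf hne; omega)
      (by clear hd hdf hu hw hA hB; omega) (by clear hd hdf hu hw hA hB hne; omega)
      (by clear hd hu hw hA hB hne; omega)
  · exact build r (x - 1) (y - 1) x y a b d hd (by clear hd hdf hne; omega)
      (by clear hd hdf hu hw hA hB; omega) (by clear hd hdf hu hw hA hB hne; omega)
      (by clear hd hu hw hA hB hne; omega)

lemma exists_walk (r : ℤ) (hr : 1 ≤ r) :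
    ∀ n : ℕ, ∀ u w : W r, D u.1 w.1 = n → ∃ p : (G r).Walk u w, p.length = n := by
  intro n
  induction n with
  | zero =>
    intro u w h
    have huw : u = w := by
      have h' := (D_eq_iff u.1 w.1 0).mp (by exact_mod_cast h)
      apply Subtype.ext
      apply Prod.ext <;> omega
    subst huw
    exact ⟨.nil, rfl⟩
  | succ n ih =>
    intro u w h
    have hne : u.1 ≠ w.1 := by
      intro hc
      rw [hc, (D_eq_iff w.1 w.1 0).mpr (by omega)] at h
      omega
    obtain ⟨z, hz, hzu, hz1, hzD⟩ := step r hr u.1 w.1 u.2 w.2 hne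
    have hD : D z w.1 = (n : ℤ) := by
      have h' : D u.1 w.1 = ((n : ℤ) + 1) := by exact_mod_cast h
      omega
    obtain ⟨p, hp⟩ := ih ⟨z, hz⟩ w hD
    have hadj : (G r).Adj u ⟨z, hz⟩ :=
      ⟨fun hc => hzu (congrArg Subtype.val hc).symm, by rwa [D_comm]⟩
    exact ⟨.cons hadj p, (SimpleGraph.Walk.length_cons hadj p).trans (congrArg (· + 1) hp)⟩

lemma walk_le (r : ℤ) (u w : W r) (p : (G r).Walk u w) :
    D u.1 w.1 ≤ p.length := by
  induction p with
  | nil =>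
    rw [(D_eq_iff _ _ 0).mpr (by omega)]
    exact_mod_cast Int.ofNat_nonneg _
  | @cons u z w h q ih =>
    have htri : D u.1 w.1 ≤ D u.1 z.1 + D z.1 w.1 := by
      obtain ⟨d1, hd1⟩ : ∃ d, D u.1 z.1 = d := ⟨_, rfl⟩
      obtain ⟨d2, hd2⟩ : ∃ d, D z.1 w.1 = d := ⟨_, rfl⟩
      have h1 := (D_eq_iff u.1 z.1 d1).mp hd1
      have h2 := (D_eq_iff z.1 w.1 d2).mp hd2
      rw [hd1, hd2, D_le_iff]
      omega
    have hadj := h.2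
    simp only [SimpleGraph.Walk.length_cons]
    push_cast
    omega

lemma edist_eq (r : ℤ) (hr : 1 ≤ r) (u w : W r) :
    (G r).edist u w = ((D u.1 w.1).toNat : ℕ∞) := by
  refine le_antisymm ?_ ?_
  · obtain ⟨p, hp⟩ := exists_walk r hr (D u.1 w.1).toNat u w
      (by rw [Int.toNat_of_nonneg (D_nonneg _ _)])
    exact hp ▸ SimpleGraph.edist_le p
  · rw [SimpleGraph.edist_eq_sInf]
    refine le_sInf ?_
    rintro _ ⟨p, rfl⟩
    have hwl := walk_le r u w p
    exact_mod_cast Nat.cast_le.mpr (by omega : (D u.1 w.1).toNat ≤ p.length)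

end Stmt6Aux

open Stmt6Aux in
/-- for every `r ≥ 1` there is a finite connected simple graph `F` with three
distinct distinguished vertices `pB`, `pR`, `v` such that `dist(pB, v) = r`,
`dist(pR, v) = r`, `dist(pB, pR) = r + 1`, and every vertex `u` other than `pB` and `pR`
satisfies `dist(u, pB) ≤ r` and `dist(u, pR) ≤ r`.  (This is the forbidden vertex
gadget `F(r)`.) -/
theorem stmt6 (r : ℕ) (hr : 1 ≤ r) :
    ∃ (W : Type) (_ : Fintype W) (F : SimpleGraph W) (pB pR v : W),
      F.Connected ∧
      pB ≠ pR ∧ pB ≠ v ∧ pR ≠ v ∧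
      F.edist pB v = (r : ℕ∞) ∧
      F.edist pR v = (r : ℕ∞) ∧
      F.edist pB pR = ((r : ℕ∞) + 1) ∧
      ∀ u : W, u ≠ pB → u ≠ pR → F.edist u pB ≤ (r : ℕ∞) ∧ F.edist u pR ≤ (r : ℕ∞) := by
  have hr' : 1 ≤ (r : ℤ) := by omega
  have hfin : {p : ℤ × ℤ | P (r : ℤ) p}.Finite := by
    apply Set.Finite.subset (Set.finite_Icc ((0 : ℤ), (0 : ℤ)) ((r : ℤ) + 1, (r : ℤ)))
    rintro ⟨x, y⟩ h
    simp only [P, Set.mem_setOf_eq] at h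
    simp only [Set.mem_Icc, Prod.mk_le_mk]
    omega
  refine ⟨W (r : ℤ), hfin.fintype, G (r : ℤ),
    ⟨(0, 0), Or.inl ⟨rfl, rfl⟩⟩,
    ⟨((r : ℤ) + 1, 0), Or.inr (Or.inl ⟨rfl, rfl⟩)⟩,
    ⟨(1, (r : ℤ)), Or.inr (Or.inr ⟨le_refl _, hr', by omega, le_refl _⟩)⟩,
    ?_, ?_, ?_, ?_, ?_, ?_, ?_, ?_⟩
  · have : Nonempty (W (r : ℤ)) := ⟨⟨(0, 0), Or.inl ⟨rfl, rfl⟩⟩⟩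
    refine ⟨fun u w => ?_⟩
    obtain ⟨p, _⟩ := exists_walk (r : ℤ) hr' (D u.1 w.1).toNat u w
      (by rw [Int.toNat_of_nonneg (D_nonneg _ _)])
    exact ⟨p⟩
  · intro h
    have h1 := congrArg (fun t : W (r : ℤ) => t.1.1) h
    simp only at h1
    omega
  · intro h
    have h1 := congrArg (fun t : W (r : ℤ) => t.1.2) h
    simp only at h1
    omega
  · intro h
    have h1 := congrArg (fun t : W (r : ℤ) => t.1.1) h
    simp only at h1
    omega
  · refine (edist_eq _ hr' _ _).trans ?_
    rw [show D (0, 0) (1, (r : ℤ)) = (r : ℤ) from (D_eq_iff _ _ _).mpr (by omega)]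
    rw [Int.toNat_natCast]
  · refine (edist_eq _ hr' _ _).trans ?_
    rw [show D ((r : ℤ) + 1, 0) (1, (r : ℤ)) = (r : ℤ) from (D_eq_iff _ _ _).mpr (by omega)]
    rw [Int.toNat_natCast]
  · refine (edist_eq _ hr' _ _).trans ?_
    rw [show D (0, 0) ((r : ℤ) + 1, 0) = (r : ℤ) + 1 from (D_eq_iff _ _ _).mpr (by omega)]
    rw [show ((r : ℤ) + 1).toNat = r + 1 by omega]
    push_cast
    rfl
  · intro u hu1 hu2
    have hmem := u.2
    simp only [P] at hmem
    have hx1 : ¬(u.1.1 = 0 ∧ u.1.2 = 0) := by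
      rintro ⟨h1, h2⟩
      exact hu1 (Subtype.ext (Prod.ext h1 h2))
    have hx2 : ¬(u.1.1 = (r : ℤ) + 1 ∧ u.1.2 = 0) := by
      rintro ⟨h1, h2⟩
      exact hu2 (Subtype.ext (Prod.ext h1 h2))
    have hint : 1 ≤ u.1.1 ∧ u.1.1 ≤ (r : ℤ) ∧ 0 ≤ u.1.2 ∧ u.1.2 ≤ (r : ℤ) := by
      tauto
    constructor
    · refine (edist_eq _ hr' _ _).le.trans ?_
      have hD : D u.1 (0, 0) ≤ (r : ℤ) := (D_le_iff _ _ _).mpr (by omega)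
      exact_mod_cast Nat.cast_le.mpr (by omega : (D u.1 (0, 0)).toNat ≤ r)
    · refine (edist_eq _ hr' _ _).le.trans ?_
      have hD : D u.1 ((r : ℤ) + 1, 0) ≤ (r : ℤ) := (D_le_iff _ _ _).mpr (by omega)
      exact_mod_cast Nat.cast_le.mpr (by omega : (D u.1 ((r : ℤ) + 1, 0)).toNat ≤ r)
end

section
/- For every finite simple graph G and every integer n ≥ 1, there exist a finite simple graph G' with V(G) ⊆ V(G') and disjoint sets Blue_0, Red_0 ⊆ V(G') \ V(G) such that: (a) every vertex of V(G') \ (V(G) ∪ Blue_0 ∪ Red_0) is at graph distance at most n in G' from some vertex of Blue_0 and at distance at most n from some vertex of Red_0; (b) every vertex of V(G) is at distance at least n+1 in G' from every vertex of Blue_0 ∪ Red_0; (c) for distinct u, v ∈ V(G), dist_{G'}(u,v) = n if uv is an edge of G, and dist_{G'}(u,v) ≥ n+1 otherwise; (d) any two distinct vertices of Blue_0 ∪ Red_0 are at distance at least n+1 in G'. -/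
universe u

open SimpleGraph

namespace Stmt9Aux

lemma chain_le {W : Type*} (G : SimpleGraph W) (g : ℕ → W) :
    ∀ m : ℕ, (∀ i, i < m → G.Adj (g i) (g (i+1))) → G.edist (g 0) (g m) ≤ (m : ℕ∞) := by
  intro m
  induction m with
  | zero => intro _; simp
  | succ m ih =>
    intro h
    have h1 : G.edist (g m) (g (m+1)) ≤ (1 : ℕ∞) := by
      have : ((SimpleGraph.Walk.cons (h m (Nat.lt_succ_self m)) SimpleGraph.Walk.nil).length : ℕ∞) = 1 := by
        simp
      exact le_trans (SimpleGraph.edist_le _) (le_of_eq this)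
    calc G.edist (g 0) (g (m+1)) ≤ G.edist (g 0) (g m) + G.edist (g m) (g (m+1)) :=
          SimpleGraph.edist_triangle
      _ ≤ (m : ℕ∞) + 1 := add_le_add (ih fun i hi => h i (by omega)) h1
      _ = ((m+1 : ℕ) : ℕ∞) := by push_cast; ring

lemma walk_pot {W : Type*} (G : SimpleGraph W) (f : W → ℕ)
    (hf : ∀ x y, G.Adj x y → f y ≤ f x + 1) (y : W) :
    ∀ {x : W} (p : G.Walk x y), f y ≤ p.length + f x := by
  intro x p
  induction p with
  | nil => simp
  | @cons a b c h q ih =>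
    have h1 := hf a b h
    simp only [SimpleGraph.Walk.length_cons]
    omega

lemma pot_le {W : Type*} (G : SimpleGraph W) (f : W → ℕ)
    (hf : ∀ x y, G.Adj x y → f y ≤ f x + 1) (x y : W) :
    (f y : ℕ∞) ≤ G.edist x y + (f x : ℕ∞) := by
  by_cases hr : G.Reachable x y
  · obtain ⟨p, hp⟩ := hr.exists_walk_length_eq_edist
    rw [← hp]
    have h2 : ((f y : ℕ) : ℕ∞) ≤ ((p.length + f x : ℕ) : ℕ∞) := by
      exact_mod_cast walk_pot G f hf y p
    simpa [Nat.cast_add] using h2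
  · rw [SimpleGraph.edist_eq_top_of_not_reachable hr, top_add]
    exact le_top

noncomputable section
open scoped Classical

variable {V : Type u} (G : SimpleGraph V) (n : ℕ)

abbrev EdgeT [LinearOrder V] := {p : V × V // G.Adj p.1 p.2 ∧ p.1 < p.2}

def Lq : ℕ := (n-1)/2
def Aq : ℕ := n - 1 - Lq n

lemma hLA (hn : 1 ≤ n) : Lq n + Aq n + 1 = n ∧ 2 * Aq n ≤ n + 1 ∧ n + 1 ≤ 2 * Aq n + 2
    ∧ Lq n ≤ Aq n := by
  have h1 : Lq n = (n-1)/2 := rfl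
  have h2 : Aq n = n - 1 - Lq n := rfl
  omega

abbrev Wt [LinearOrder V] : Type u :=
  V ⊕ (EdgeT G × Fin (n-1) × (Unit ⊕ Fin (Lq n) ⊕ Fin (n+2)))

variable [LinearOrder V]

def Sv (e : EdgeT G) (i : Fin (n-1)) : Wt G n := Sum.inr (e, i, Sum.inl ())
def Qv (e : EdgeT G) (i : Fin (n-1)) (j : Fin (Lq n)) : Wt G n := Sum.inr (e, i, Sum.inr (Sum.inl j))
def Pv (e : EdgeT G) (i : Fin (n-1)) (k : Fin (n+2)) : Wt G n := Sum.inr (e, i, Sum.inr (Sum.inr k))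
def qv (e : EdgeT G) (i : Fin (n-1)) (j : ℕ) : Wt G n :=
  if h : j < Lq n then Qv G n e i ⟨j, h⟩ else Sv G n e i

def Rel (x y : Wt G n) : Prop :=
  (n = 1 ∧ ∃ e : EdgeT G, x = Sum.inl e.val.1 ∧ y = Sum.inl e.val.2) ∨
  (∃ e i, x = Sum.inl e.val.1 ∧ y = Sv G n e i ∧ (i : ℕ) = 0) ∨
  (∃ e i, x = Sum.inl e.val.2 ∧ y = Sv G n e i ∧ (i : ℕ) + 2 = n) ∨
  (∃ e i i', x = Sv G n e i ∧ y = Sv G n e i' ∧ (i' : ℕ) = (i : ℕ) + 1) ∨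
  (∃ e i j, j < Lq n ∧ x = qv G n e i (j+1) ∧ y = qv G n e i j) ∨
  (∃ e i k, x = qv G n e i 0 ∧ y = Pv G n e i k ∧ ((k : ℕ) = Aq n ∨ (k : ℕ) + Aq n = n + 1)) ∨
  (∃ e i k k', x = Pv G n e i k ∧ y = Pv G n e i k' ∧ (k' : ℕ) = (k : ℕ) + 1)

def Gr : SimpleGraph (Wt G n) := SimpleGraph.fromRel (Rel G n)

/-! ### potentials -/

def mins (i : ℕ) : ℕ := min (i+1) (n - (i+1))
def gdp (k : ℕ) : ℕ := min (Nat.dist k (Aq n)) (Nat.dist k (n+1 - Aq n))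

def dep : Wt G n → ℕ
  | Sum.inl _ => 0
  | Sum.inr (_, i, Sum.inl _) => mins n i
  | Sum.inr (_, i, Sum.inr (Sum.inl j)) => mins n i + (Lq n - j)
  | Sum.inr (_, i, Sum.inr (Sum.inr k)) => mins n i + Lq n + 1 + gdp n k

def hV (u x : V) : ℕ := if x = u then 0 else if G.Adj u x then n else n+1

def hS (u : V) (e : EdgeT G) (i : Fin (n-1)) : ℕ :=
  if e.val.1 = u then (i:ℕ)+1 else if e.val.2 = u then n - ((i:ℕ)+1) else n+1

def hu (u : V) : Wt G n → ℕ
  | Sum.inl x => hV G n u x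
  | Sum.inr (e, i, Sum.inl _) => hS G n u e i
  | Sum.inr (e, i, Sum.inr (Sum.inl j)) => min (n+1) (hS G n u e i + (Lq n - j))
  | Sum.inr (e, i, Sum.inr (Sum.inr k)) => min (n+1) (hS G n u e i + Lq n + 1 + gdp n k)

def mkb (blue : Bool) (k : ℕ) : ℕ := if blue then k else n+1-k

def psi (e₀ : EdgeT G) (i₀ : Fin (n-1)) (blue : Bool) : Wt G n → ℕ
  | Sum.inl _ => n+1
  | Sum.inr (e, i, Sum.inl _) => if e = e₀ ∧ i = i₀ then n else n+1
  | Sum.inr (e, i, Sum.inr (Sum.inl j)) => if e = e₀ ∧ i = i₀ then Aq n + 1 + (j:ℕ) else n+1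
  | Sum.inr (e, i, Sum.inr (Sum.inr k)) => if e = e₀ ∧ i = i₀ then
      min (n+1) (min (mkb n blue k) ((mkb n blue k - (n+1 - Aq n)) + Aq n + 2)) else n+1

lemma hS_le (u : V) (e : EdgeT G) (i : Fin (n-1)) : hS G n u e i ≤ n + 1 := by
  have := i.isLt
  unfold hS; split_ifs <;> omega

lemma dep_qv (e : EdgeT G) (i : Fin (n-1)) (t : ℕ) (ht : t ≤ Lq n) :
    dep G n (qv G n e i t) = mins n i + (Lq n - t) := by
  unfold qv
  split_ifs with h
  · simp [dep, Qv]
  · have : t = Lq n := by omega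
    simp [dep, Sv, this]

lemma hu_qv (u : V) (e : EdgeT G) (i : Fin (n-1)) (t : ℕ) (ht : t ≤ Lq n) :
    hu G n u (qv G n e i t) = min (n+1) (hS G n u e i + (Lq n - t)) := by
  unfold qv
  split_ifs with h
  · simp [hu, Qv]
  · have h2 : t = Lq n := by omega
    have := hS_le G n u e i
    simp [hu, Sv, h2]
    omega

lemma psi_qv (hn : 1 ≤ n) (e₀ : EdgeT G) (i₀ : Fin (n-1)) (blue : Bool)
    (e : EdgeT G) (i : Fin (n-1)) (t : ℕ) (ht : t ≤ Lq n) :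
    psi G n e₀ i₀ blue (qv G n e i t)
      = if e = e₀ ∧ i = i₀ then Aq n + 1 + t else n + 1 := by
  have hl := hLA n hn
  by_cases hc : e = e₀ ∧ i = i₀
  · unfold qv
    split_ifs with h
    · simp [psi, Qv, hc]
    · have h2 : t = Lq n := by omega
      simp [psi, Sv, hc, h2]
      omega
  · unfold qv
    split_ifs with h
    · simp [psi, Qv, hc]
    · simp [psi, Sv, hc]
/-! ### Lipschitz lemmas -/

set_option maxHeartbeats 1000000

lemma lip_dep (hn : 1 ≤ n) :
    ∀ x y, Rel G n x y → dep G n x ≤ dep G n y + 1 ∧ dep G n y ≤ dep G n x + 1 := by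
  have hl := hLA n hn
  intro x y h
  rcases h with ⟨hn1, e, hx, hy⟩ | ⟨e, i, hx, hy, hi⟩ | ⟨e, i, hx, hy, hi⟩ |
    ⟨e, i, i', hx, hy, hi⟩ | ⟨e, i, j, hj, hx, hy⟩ | ⟨e, i, k, hx, hy, hk⟩ |
    ⟨e, i, k, k', hx, hy, hk⟩ <;> subst hx hy
  · simp [dep]
  · have := i.isLt
    simp [dep, Sv, mins]
    omega
  · have := i.isLt
    simp [dep, Sv, mins]
    omega
  · have := i.isLt; have := i'.isLt
    simp [dep, Sv, mins]
    omega
  · rw [dep_qv G n e i (j+1) (by omega), dep_qv G n e i j (by omega)]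
    omega
  · rw [dep_qv G n e i 0 (by omega)]
    have := k.isLt
    simp [dep, Pv, gdp, Nat.dist]
    omega
  · have := k.isLt; have := k'.isLt
    simp [dep, Pv, gdp, Nat.dist]
    omega

lemma lip_hu (hn : 1 ≤ n) (u : V) :
    ∀ x y, Rel G n x y → hu G n u x ≤ hu G n u y + 1 ∧ hu G n u y ≤ hu G n u x + 1 := by
  have hl := hLA n hn
  intro x y h
  rcases h with ⟨hn1, e, hx, hy⟩ | ⟨e, i, hx, hy, hi⟩ | ⟨e, i, hx, hy, hi⟩ |
    ⟨e, i, i', hx, hy, hi⟩ | ⟨e, i, j, hj, hx, hy⟩ | ⟨e, i, k, hx, hy, hk⟩ |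
    ⟨e, i, k, k', hx, hy, hk⟩ <;> subst hx hy
  · have hadj := e.prop.1
    have hne : e.val.1 ≠ e.val.2 := hadj.ne
    by_cases h1 : e.val.1 = u
    · have h2 : ¬ e.val.2 = u := fun h => hne (h1.trans h.symm)
      have ha : G.Adj u e.val.2 := h1 ▸ hadj
      simp [hu, hV, h1, h2, ha]
      omega
    · by_cases h2 : e.val.2 = u
      · have ha : G.Adj u e.val.1 := h2 ▸ hadj.symm
        simp [hu, hV, h1, h2, ha]
        omega
      · simp only [hu, hV, if_neg h1, if_neg h2]
        split_ifs <;> omega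
  · have hi2 := i.isLt
    have hadj := e.prop.1
    have hne : e.val.1 ≠ e.val.2 := hadj.ne
    by_cases h1 : e.val.1 = u
    · have h2 : ¬ e.val.2 = u := fun h => hne (h1.trans h.symm)
      simp [hu, hV, hS, Sv, h1, h2]
      omega
    · by_cases h2 : e.val.2 = u
      · have ha : G.Adj u e.val.1 := h2 ▸ hadj.symm
        simp [hu, hV, hS, Sv, h1, h2, ha]
        omega
      · simp only [hu, hV, hS, Sv, if_neg h1, if_neg h2]
        split_ifs <;> omega
  · have hi2 := i.isLt
    have hadj := e.prop.1
    have hne : e.val.1 ≠ e.val.2 := hadj.ne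
    by_cases h2 : e.val.2 = u
    · have h1 : ¬ e.val.1 = u := fun h => hne (h.trans h2.symm)
      simp [hu, hV, hS, Sv, h1, h2]
      omega
    · by_cases h1 : e.val.1 = u
      · have ha : G.Adj u e.val.2 := h1 ▸ hadj
        simp [hu, hV, hS, Sv, h1, h2, ha]
        omega
      · simp only [hu, hV, hS, Sv, if_neg h1, if_neg h2]
        split_ifs <;> omega
  · have hi2 := i.isLt; have hi3 := i'.isLt
    simp only [hu, hS, Sv]
    split_ifs <;> omega
  · rw [hu_qv G n u e i (j+1) (by omega), hu_qv G n u e i j (by omega)]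
    have := hS_le G n u e i
    omega
  · rw [hu_qv G n u e i 0 (by omega)]
    have := k.isLt
    have := hS_le G n u e i
    simp only [hu, Pv, gdp, Nat.dist]
    omega
  · have := k.isLt; have := k'.isLt
    have := hS_le G n u e i
    simp only [hu, Pv, gdp, Nat.dist]
    omega

lemma lip_psi (hn : 1 ≤ n) (e₀ : EdgeT G) (i₀ : Fin (n-1)) (blue : Bool) :
    ∀ x y, Rel G n x y → psi G n e₀ i₀ blue x ≤ psi G n e₀ i₀ blue y + 1 ∧
      psi G n e₀ i₀ blue y ≤ psi G n e₀ i₀ blue x + 1 := by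
  have hl := hLA n hn
  intro x y h
  rcases h with ⟨hn1, e, hx, hy⟩ | ⟨e, i, hx, hy, hi⟩ | ⟨e, i, hx, hy, hi⟩ |
    ⟨e, i, i', hx, hy, hi⟩ | ⟨e, i, j, hj, hx, hy⟩ | ⟨e, i, k, hx, hy, hk⟩ |
    ⟨e, i, k, k', hx, hy, hk⟩ <;> subst hx hy
  · simp [psi]
  · simp only [psi, Sv]
    split_ifs <;> omega
  · simp only [psi, Sv]
    split_ifs <;> omega
  · simp only [psi, Sv]
    split_ifs <;> omega
  · rw [psi_qv G n hn e₀ i₀ blue e i (j+1) (by omega), psi_qv G n hn e₀ i₀ blue e i j (by omega)]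
    split_ifs <;> omega
  · rw [psi_qv G n hn e₀ i₀ blue e i 0 (by omega)]
    have := k.isLt
    cases blue <;> simp only [psi, Pv, mkb, Bool.false_eq_true, if_true, if_false] <;>
      split_ifs <;> omega
  · have := k.isLt; have := k'.isLt
    cases blue <;> simp only [psi, Pv, mkb, Bool.false_eq_true, if_true, if_false] <;>
      split_ifs <;> omega

/-! ### adjacency helpers -/

lemma pv_ne (e : EdgeT G) (i : Fin (n-1)) (k k' : Fin (n+2)) (h : (k:ℕ) ≠ (k':ℕ)) :
    Pv G n e i k ≠ Pv G n e i k' := by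
  simp [Pv, Fin.ext_iff, h]

lemma qv_ne_pv (e : EdgeT G) (i : Fin (n-1)) (t : ℕ) (k : Fin (n+2)) :
    qv G n e i t ≠ Pv G n e i k := by
  unfold qv; split_ifs <;> simp [Qv, Sv, Pv]

lemma qv_ne (e : EdgeT G) (i : Fin (n-1)) (t t' : ℕ) (ht : t ≤ Lq n) (ht' : t' ≤ Lq n)
    (h : t ≠ t') : qv G n e i t ≠ qv G n e i t' := by
  unfold qv; split_ifs <;> simp [Qv, Sv, Fin.ext_iff] <;> omega

lemma adj_pv (e : EdgeT G) (i : Fin (n-1)) (k k' : Fin (n+2)) (h : (k':ℕ) = (k:ℕ)+1) :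
    (Gr G n).Adj (Pv G n e i k) (Pv G n e i k') := by
  refine (SimpleGraph.fromRel_adj _ _ _).mpr ⟨pv_ne G n e i k k' (by omega), Or.inl ?_⟩
  unfold Rel
  exact Or.inr (Or.inr (Or.inr (Or.inr (Or.inr (Or.inr ⟨e, i, k, k', rfl, rfl, h⟩)))))

lemma adj_qv (e : EdgeT G) (i : Fin (n-1)) (t : ℕ) (ht : t < Lq n) :
    (Gr G n).Adj (qv G n e i (t+1)) (qv G n e i t) := by
  refine (SimpleGraph.fromRel_adj _ _ _).mpr
    ⟨qv_ne G n e i (t+1) t (by omega) (by omega) (by omega), Or.inl ?_⟩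
  unfold Rel
  exact Or.inr (Or.inr (Or.inr (Or.inr (Or.inl ⟨e, i, t, ht, rfl, rfl⟩))))

lemma adj_qv_pv (e : EdgeT G) (i : Fin (n-1)) (k : Fin (n+2))
    (h : (k:ℕ) = Aq n ∨ (k:ℕ) + Aq n = n+1) :
    (Gr G n).Adj (qv G n e i 0) (Pv G n e i k) := by
  refine (SimpleGraph.fromRel_adj _ _ _).mpr ⟨qv_ne_pv G n e i 0 k, Or.inl ?_⟩
  unfold Rel
  exact Or.inr (Or.inr (Or.inr (Or.inr (Or.inr (Or.inl ⟨e, i, k, rfl, rfl, h⟩)))))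

/-- a convenient total version of `Pv` -/
def pv (e : EdgeT G) (i : Fin (n-1)) (m : ℕ) : Wt G n :=
  Pv G n e i ⟨min m (n+1), by omega⟩

lemma adj_pv' (e : EdgeT G) (i : Fin (n-1)) (m : ℕ) (hm : m < n+1) :
    (Gr G n).Adj (pv G n e i m) (pv G n e i (m+1)) := by
  apply adj_pv
  simp
  omega

lemma edist_pv_down (e : EdgeT G) (i : Fin (n-1)) (k : ℕ) (hk : k ≤ n+1) :
    (Gr G n).edist (pv G n e i k) (pv G n e i 0) ≤ (k : ℕ∞) := by
  have := chain_le (Gr G n) (fun j => pv G n e i (k - j)) k ?_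
  · simpa using this
  · intro j hj
    have h1 : k - j = (k - (j+1)) + 1 := by omega
    rw [h1]
    exact (adj_pv' G n e i (k - (j+1)) (by omega)).symm

lemma edist_pv_up (e : EdgeT G) (i : Fin (n-1)) (k : ℕ) (hk : k ≤ n+1) :
    (Gr G n).edist (pv G n e i k) (pv G n e i (n+1)) ≤ ((n+1-k : ℕ) : ℕ∞) := by
  have := chain_le (Gr G n) (fun j => pv G n e i (k + j)) (n+1-k) ?_
  · have h2 : k + (n+1-k) = n+1 := by omega
    simpa [h2] using this
  · intro j hj
    exact adj_pv' G n e i (k+j) (by omega)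

lemma edist_qv_down (e : EdgeT G) (i : Fin (n-1)) (t : ℕ) (ht : t ≤ Lq n) :
    (Gr G n).edist (qv G n e i t) (qv G n e i 0) ≤ (t : ℕ∞) := by
  have := chain_le (Gr G n) (fun j => qv G n e i (t - j)) t ?_
  · simpa using this
  · intro j hj
    have h1 : t - j = (t - (j+1)) + 1 := by omega
    rw [h1]
    exact adj_qv G n e i (t - (j+1)) (by omega)

/-- the spine walk -/
def spineg (e : EdgeT G) (j : ℕ) : Wt G n :=
  if h : 1 ≤ j ∧ j ≤ n-1 then Sv G n e ⟨j-1, by omega⟩ else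
  if j = 0 then Sum.inl e.val.1 else Sum.inl e.val.2

lemma edist_ends (hn : 1 ≤ n) (e : EdgeT G) :
    (Gr G n).edist (Sum.inl e.val.1) (Sum.inl e.val.2) ≤ (n : ℕ∞) := by
  have hne : e.val.1 ≠ e.val.2 := e.prop.1.ne
  have := chain_le (Gr G n) (spineg G n e) n ?_
  · have h0 : spineg G n e 0 = Sum.inl e.val.1 := by
      unfold spineg
      rw [dif_neg (by omega), if_pos rfl]
    have h1 : spineg G n e n = Sum.inl e.val.2 := by
      unfold spineg
      rw [dif_neg (by omega), if_neg (by omega)]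
    rwa [h0, h1] at this
  · intro j hj
    rcases Nat.eq_or_lt_of_le hn with hn1 | hn2
    · -- n = 1 : single edge
      have hj0 : j = 0 := by omega
      subst hj0
      have h0 : spineg G n e 0 = Sum.inl e.val.1 := by
        unfold spineg
        rw [dif_neg (by omega), if_pos rfl]
      have h1 : spineg G n e 1 = Sum.inl e.val.2 := by
        unfold spineg
        rw [dif_neg (by omega), if_neg (by omega)]
      rw [h0, h1]
      refine (SimpleGraph.fromRel_adj _ _ _).mpr ⟨by simpa using hne, Or.inl ?_⟩
      unfold Rel
      exact Or.inl ⟨hn1.symm, e, rfl, rfl⟩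
    · by_cases hj0 : j = 0
      · subst hj0
        have h0 : spineg G n e 0 = Sum.inl e.val.1 := by
          unfold spineg
          rw [dif_neg (by omega), if_pos rfl]
        have h1 : spineg G n e 1 = Sv G n e ⟨0, by omega⟩ := by
          unfold spineg
          rw [dif_pos (by omega)]
        rw [h0, h1]
        refine (SimpleGraph.fromRel_adj _ _ _).mpr ⟨by simp [Sv], Or.inl ?_⟩
        unfold Rel
        exact Or.inr (Or.inl ⟨e, ⟨0, by omega⟩, rfl, rfl, rfl⟩)
      · by_cases hj1 : j + 1 ≤ n - 1
        · have h0 : spineg G n e j = Sv G n e ⟨j-1, by omega⟩ := by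
            unfold spineg
            rw [dif_pos (by constructor <;> omega)]
          have h1 : spineg G n e (j+1) = Sv G n e ⟨j, by omega⟩ := by
            unfold spineg
            rw [dif_pos (by constructor <;> omega)]
            simp
          rw [h0, h1]
          refine (SimpleGraph.fromRel_adj _ _ _).mpr ⟨by simp [Sv, Fin.ext_iff]; omega, Or.inl ?_⟩
          unfold Rel
          refine Or.inr (Or.inr (Or.inr (Or.inl ⟨e, ⟨j-1, by omega⟩, ⟨j, by omega⟩, rfl, rfl, by simp; omega⟩)))
        · -- j = n-1, next is the endpoint
          have h0 : spineg G n e j = Sv G n e ⟨j-1, by omega⟩ := by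
            unfold spineg
            rw [dif_pos (by constructor <;> omega)]
          have h1 : spineg G n e (j+1) = Sum.inl e.val.2 := by
            unfold spineg
            rw [dif_neg (by omega), if_neg (by omega)]
          rw [h0, h1]
          refine ((SimpleGraph.fromRel_adj _ _ _).mpr ⟨by simp [Sv], Or.inl ?_⟩).symm
          unfold Rel
          refine Or.inr (Or.inr (Or.inl ⟨e, ⟨j-1, by omega⟩, rfl, rfl, by simp; omega⟩))

lemma edist_le_one_of_adj {W : Type*} {G : SimpleGraph W} {x y : W} (h : G.Adj x y) :
    G.edist x y ≤ 1 := by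
  have := SimpleGraph.edist_le (SimpleGraph.Walk.cons h SimpleGraph.Walk.nil)
  simpa using this

lemma qv_L (e : EdgeT G) (i : Fin (n-1)) : qv G n e i (Lq n) = Sv G n e i := by
  unfold qv; rw [dif_neg (lt_irrefl _)]

lemma pv0 (e : EdgeT G) (i : Fin (n-1)) : pv G n e i 0 = Pv G n e i ⟨0, by omega⟩ := by
  simp [pv, Pv, Fin.ext_iff]

lemma pvtop (e : EdgeT G) (i : Fin (n-1)) : pv G n e i (n+1) = Pv G n e i ⟨n+1, by omega⟩ := by
  simp [pv, Pv, Fin.ext_iff]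

lemma edist_qvt_blue (hn : 1 ≤ n) (e : EdgeT G) (i : Fin (n-1)) (t : ℕ) (ht : t ≤ Lq n) :
    (Gr G n).edist (qv G n e i t) (pv G n e i 0) ≤ ((t + 1 + Aq n : ℕ) : ℕ∞) := by
  have hl := hLA n hn
  have h1 := edist_qv_down G n e i t ht
  have h2 : (Gr G n).edist (qv G n e i 0) (pv G n e i (Aq n)) ≤ 1 := by
    apply edist_le_one_of_adj
    have : pv G n e i (Aq n) = Pv G n e i ⟨min (Aq n) (n+1), by omega⟩ := rfl
    rw [this]
    apply adj_qv_pv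
    left
    simp
    omega
  have h3 := edist_pv_down G n e i (Aq n) (by omega)
  calc (Gr G n).edist (qv G n e i t) (pv G n e i 0)
      ≤ (Gr G n).edist (qv G n e i t) (qv G n e i 0) +
        (Gr G n).edist (qv G n e i 0) (pv G n e i 0) := SimpleGraph.edist_triangle
    _ ≤ (Gr G n).edist (qv G n e i t) (qv G n e i 0) +
        ((Gr G n).edist (qv G n e i 0) (pv G n e i (Aq n)) +
         (Gr G n).edist (pv G n e i (Aq n)) (pv G n e i 0)) := by
          gcongr
          exact SimpleGraph.edist_triangle
    _ ≤ (t : ℕ∞) + (1 + (Aq n : ℕ∞)) := by gcongr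
    _ = ((t + 1 + Aq n : ℕ) : ℕ∞) := by push_cast; ring

lemma edist_qvt_red (hn : 1 ≤ n) (e : EdgeT G) (i : Fin (n-1)) (t : ℕ) (ht : t ≤ Lq n) :
    (Gr G n).edist (qv G n e i t) (pv G n e i (n+1)) ≤ ((t + 1 + Aq n : ℕ) : ℕ∞) := by
  have hl := hLA n hn
  have h1 := edist_qv_down G n e i t ht
  have h2 : (Gr G n).edist (qv G n e i 0) (pv G n e i (n+1-Aq n)) ≤ 1 := by
    apply edist_le_one_of_adj
    have : pv G n e i (n+1-Aq n) = Pv G n e i ⟨min (n+1-Aq n) (n+1), by omega⟩ := rfl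
    rw [this]
    apply adj_qv_pv
    right
    simp
    omega
  have h3 := edist_pv_up G n e i (n+1-Aq n) (by omega)
  have h4 : n+1 - (n+1 - Aq n) = Aq n := by omega
  rw [h4] at h3
  calc (Gr G n).edist (qv G n e i t) (pv G n e i (n+1))
      ≤ (Gr G n).edist (qv G n e i t) (qv G n e i 0) +
        (Gr G n).edist (qv G n e i 0) (pv G n e i (n+1)) := SimpleGraph.edist_triangle
    _ ≤ (Gr G n).edist (qv G n e i t) (qv G n e i 0) +
        ((Gr G n).edist (qv G n e i 0) (pv G n e i (n+1-Aq n)) +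
         (Gr G n).edist (pv G n e i (n+1-Aq n)) (pv G n e i (n+1))) := by
          gcongr
          exact SimpleGraph.edist_triangle
    _ ≤ (t : ℕ∞) + (1 + (Aq n : ℕ∞)) := by gcongr
    _ = ((t + 1 + Aq n : ℕ) : ℕ∞) := by push_cast; ring

lemma lower_bound (f : Wt G n → ℕ)
    (hf : ∀ x y, Rel G n x y → f x ≤ f y + 1 ∧ f y ≤ f x + 1)
    (x y : Wt G n) (hx : f x = 0) (m : ℕ) (hm : m ≤ f y) :
    (m : ℕ∞) ≤ (Gr G n).edist x y := by
  have hlip : ∀ a b, (Gr G n).Adj a b → f b ≤ f a + 1 := by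
    intro a b hab
    rcases hab.2 with h' | h'
    · exact (hf a b h').2
    · exact (hf b a h').1
  have hp := pot_le (Gr G n) f hlip x y
  rw [hx] at hp
  simp only [Nat.cast_zero, add_zero] at hp
  calc (m : ℕ∞) ≤ (f y : ℕ∞) := by exact_mod_cast hm
    _ ≤ _ := hp

lemma qv_eq_Qv (e : EdgeT G) (i : Fin (n-1)) (j : Fin (Lq n)) :
    qv G n e i (j : ℕ) = Qv G n e i j := by
  unfold qv
  rw [dif_pos j.isLt]

lemma pv_eq_Pv (e : EdgeT G) (i : Fin (n-1)) (k : Fin (n+2)) :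
    pv G n e i (k : ℕ) = Pv G n e i k := by
  have := k.isLt
  simp [pv, Pv, Fin.ext_iff]
  omega

lemma Pv_inj {e e' : EdgeT G} {i i' : Fin (n-1)} {k k' : Fin (n+2)} :
    Pv G n e i k = Pv G n e' i' k' ↔ e = e' ∧ i = i' ∧ k = k' := by
  simp [Pv]

lemma psi_at_self (e : EdgeT G) (i : Fin (n-1)) (blue : Bool) (k : Fin (n+2))
    (hk : (k : ℕ) = if blue then 0 else n+1) :
    psi G n e i blue (Pv G n e i k) = 0 := by
  cases blue <;> simp at hk <;> simp [psi, Pv, mkb, hk]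

lemma psi_at_other (hn : 1 ≤ n) (e : EdgeT G) (i : Fin (n-1)) (blue : Bool)
    (e' : EdgeT G) (i' : Fin (n-1)) (k' : Fin (n+2))
    (h : ¬(e' = e ∧ i' = i) ∨ (k' : ℕ) = (if blue then n+1 else 0)) :
    n + 1 ≤ psi G n e i blue (Pv G n e' i' k') := by
  have hl := hLA n hn
  by_cases hc : e' = e ∧ i' = i
  · obtain ⟨rfl, rfl⟩ := hc
    rcases h with h | h
    · exact absurd ⟨rfl, rfl⟩ h
    · cases blue <;> simp at h <;> simp [psi, Pv, mkb, h] <;> omega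
  · simp [psi, Pv, hc]

end
end Stmt9Aux


open Stmt9Aux

/-- for every finite simple graph `G` and every `n ≥ 1` there is a finite simple
graph `G'` containing the vertices of `G` (via an embedding `ι`), together with disjoint sets
`Blue0`, `Red0` of new vertices, satisfying conditions (a)–(d). -/
theorem stmt9 {V : Type u} [Fintype V] (G : SimpleGraph V) (n : ℕ) (hn : 1 ≤ n) :
    ∃ (W : Type u) (_ : Fintype W) (G' : SimpleGraph W) (ι : V ↪ W)
      (Blue0 Red0 : Finset W),
      Disjoint Blue0 Red0 ∧ (∀ v : V, ι v ∉ Blue0 ∧ ι v ∉ Red0) ∧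
      -- (a) every extra vertex is within distance `n` of `Blue0` and of `Red0`:
      (∀ w : W, (∀ v : V, ι v ≠ w) → w ∉ Blue0 → w ∉ Red0 →
        (∃ b ∈ Blue0, G'.edist w b ≤ (n : ℕ∞)) ∧ (∃ r ∈ Red0, G'.edist w r ≤ (n : ℕ∞))) ∧
      -- (b) every vertex of `V(G)` is at distance at least `n+1` from `Blue0 ∪ Red0`:
      (∀ v : V, ∀ w : W, w ∈ Blue0 ∨ w ∈ Red0 → (n : ℕ∞) + 1 ≤ G'.edist (ι v) w) ∧
      -- (c) distances between vertices of `V(G)`: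
      (∀ u v : V, u ≠ v →
        (G.Adj u v → G'.edist (ι u) (ι v) = (n : ℕ∞)) ∧
        (¬G.Adj u v → (n : ℕ∞) + 1 ≤ G'.edist (ι u) (ι v))) ∧
      -- (d) distinct vertices of `Blue0 ∪ Red0` are at distance at least `n+1`:
      (∀ w₁ w₂ : W, w₁ ∈ Blue0 ∨ w₁ ∈ Red0 → w₂ ∈ Blue0 ∨ w₂ ∈ Red0 → w₁ ≠ w₂ →
        (n : ℕ∞) + 1 ≤ G'.edist w₁ w₂) := by

  classical
  letI : LinearOrder V := LinearOrder.lift' (Fintype.equivFin V) (Fintype.equivFin V).injective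
  have hl := Stmt9Aux.hLA n hn
  letI : Fintype (Wt G n) := Fintype.ofFinite _
  refine ⟨Wt G n, inferInstance, Gr G n, ⟨Sum.inl, Sum.inl_injective⟩,
    Finset.univ.filter (fun w => ∃ e i, w = Pv G n e i ⟨0, by omega⟩),
    Finset.univ.filter (fun w => ∃ e i, w = Pv G n e i ⟨n+1, by omega⟩),
    ?_, ?_, ?_, ?_, ?_, ?_⟩
  · -- Disjoint
    rw [Finset.disjoint_left]
    rintro w hw hw'
    simp only [Finset.mem_filter, Finset.mem_univ, true_and] at hw hw'
    obtain ⟨e, i, rfl⟩ := hw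
    obtain ⟨e', i', heq⟩ := hw'
    rw [Pv_inj] at heq
    have h2 := congrArg Fin.val heq.2.2
    simp at h2
  · -- ι v not colored
    intro v
    constructor <;>
      · simp only [Finset.mem_filter, Finset.mem_univ, true_and, Function.Embedding.coeFn_mk]
        rintro ⟨e, i, heq⟩
        simp [Pv] at heq
  · -- (a)
    rintro (x | ⟨e, i, (_ | j | k)⟩) hw hb hr
    · exact (hw x rfl).elim
    · -- spine vertex
      refine ⟨⟨Pv G n e i ⟨0, by omega⟩,
          Finset.mem_filter.mpr ⟨Finset.mem_univ _, e, i, rfl⟩, ?_⟩,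
        ⟨Pv G n e i ⟨n+1, by omega⟩,
          Finset.mem_filter.mpr ⟨Finset.mem_univ _, e, i, rfl⟩, ?_⟩⟩
      · have h := edist_qvt_blue G n hn e i (Lq n) le_rfl
        rw [qv_L, pv0, show Lq n + 1 + Aq n = n from by omega] at h
        exact h
      · have h := edist_qvt_red G n hn e i (Lq n) le_rfl
        rw [qv_L, pvtop, show Lq n + 1 + Aq n = n from by omega] at h
        exact h
    · -- gadget q vertex
      have hj := j.isLt
      refine ⟨⟨Pv G n e i ⟨0, by omega⟩,
          Finset.mem_filter.mpr ⟨Finset.mem_univ _, e, i, rfl⟩, ?_⟩,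
        ⟨Pv G n e i ⟨n+1, by omega⟩,
          Finset.mem_filter.mpr ⟨Finset.mem_univ _, e, i, rfl⟩, ?_⟩⟩
      · have h := edist_qvt_blue G n hn e i (j : ℕ) (by omega)
        rw [qv_eq_Qv, pv0] at h
        exact le_trans h (Nat.cast_le.mpr (by omega))
      · have h := edist_qvt_red G n hn e i (j : ℕ) (by omega)
        rw [qv_eq_Qv, pvtop] at h
        exact le_trans h (Nat.cast_le.mpr (by omega))
    · -- gadget p vertex
      have hk := k.isLt
      have hk0 : (k : ℕ) ≠ 0 := by
        intro h0
        apply hb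
        refine Finset.mem_filter.mpr ⟨Finset.mem_univ _, e, i, ?_⟩
        show Pv G n e i k = _
        rw [show k = (⟨0, by omega⟩ : Fin (n+2)) from Fin.ext h0]
      have hk1 : (k : ℕ) ≠ n+1 := by
        intro h0
        apply hr
        refine Finset.mem_filter.mpr ⟨Finset.mem_univ _, e, i, ?_⟩
        show Pv G n e i k = _
        rw [show k = (⟨n+1, by omega⟩ : Fin (n+2)) from Fin.ext h0]
      refine ⟨⟨Pv G n e i ⟨0, by omega⟩,
          Finset.mem_filter.mpr ⟨Finset.mem_univ _, e, i, rfl⟩, ?_⟩,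
        ⟨Pv G n e i ⟨n+1, by omega⟩,
          Finset.mem_filter.mpr ⟨Finset.mem_univ _, e, i, rfl⟩, ?_⟩⟩
      · have h := edist_pv_down G n e i (k : ℕ) (by omega)
        rw [pv_eq_Pv, pv0] at h
        exact le_trans h (Nat.cast_le.mpr (by omega))
      · have h := edist_pv_up G n e i (k : ℕ) (by omega)
        rw [pv_eq_Pv, pvtop] at h
        exact le_trans h (Nat.cast_le.mpr (by omega))
  · -- (b)
    intro v w hw
    have hcol : ∃ e i, ∃ k : Fin (n+2), ((k : ℕ) = 0 ∨ (k : ℕ) = n+1) ∧ w = Pv G n e i k := by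
      rcases hw with hw | hw <;>
        simp only [Finset.mem_filter, Finset.mem_univ, true_and] at hw <;>
        obtain ⟨e, i, rfl⟩ := hw
      · exact ⟨e, i, _, Or.inl rfl, rfl⟩
      · exact ⟨e, i, _, Or.inr rfl, rfl⟩
    obtain ⟨e, i, k, hk, rfl⟩ := hcol
    have hi := i.isLt
    have hm : n + 1 ≤ dep G n (Pv G n e i k) := by
      simp only [dep, Pv, gdp, mins, Nat.dist]
      omega
    have h := lower_bound G n (dep G n) (lip_dep G n hn) (Sum.inl v) (Pv G n e i k) rfl (n+1) hm
    calc (n : ℕ∞) + 1 = ((n+1 : ℕ) : ℕ∞) := by push_cast; ring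
      _ ≤ _ := h
  · -- (c)
    intro u v huv
    constructor
    · intro hadj
      have hup : (Gr G n).edist (Sum.inl u) (Sum.inl v) ≤ (n : ℕ∞) := by
        rcases lt_or_gt_of_ne huv with hlt | hlt
        · exact edist_ends G n hn ⟨(u, v), hadj, hlt⟩
        · rw [SimpleGraph.edist_comm]
          exact edist_ends G n hn ⟨(v, u), hadj.symm, hlt⟩
      have hx : Stmt9Aux.hu G n u (Sum.inl u) = 0 := by simp [Stmt9Aux.hu, hV]
      have hm : n ≤ Stmt9Aux.hu G n u (Sum.inl v) := by
        simp only [Stmt9Aux.hu, hV, if_neg (Ne.symm huv), if_pos hadj]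
        exact le_rfl
      have hlow := lower_bound G n (Stmt9Aux.hu G n u) (lip_hu G n hn u)
        (Sum.inl u) (Sum.inl v) hx n hm
      exact le_antisymm hup hlow
    · intro hnadj
      have hx : Stmt9Aux.hu G n u (Sum.inl u) = 0 := by simp [Stmt9Aux.hu, hV]
      have hm : n + 1 ≤ Stmt9Aux.hu G n u (Sum.inl v) := by
        simp only [Stmt9Aux.hu, hV, if_neg (Ne.symm huv), if_neg hnadj]
        exact le_rfl
      have h := lower_bound G n (Stmt9Aux.hu G n u) (lip_hu G n hn u)
        (Sum.inl u) (Sum.inl v) hx (n+1) hm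
      calc (n : ℕ∞) + 1 = ((n+1 : ℕ) : ℕ∞) := by push_cast; ring
        _ ≤ _ := h
  · -- (d)
    have hcol : ∀ w : Wt G n,
        (w ∈ Finset.univ.filter (fun w => ∃ e i, w = Pv G n e i ⟨0, by omega⟩) ∨
         w ∈ Finset.univ.filter (fun w => ∃ e i, w = Pv G n e i ⟨n+1, by omega⟩)) →
        ∃ e i, ∃ k : Fin (n+2), ((k : ℕ) = 0 ∨ (k : ℕ) = n+1) ∧ w = Pv G n e i k := by
      intro w hw
      rcases hw with hw | hw <;>
        simp only [Finset.mem_filter, Finset.mem_univ, true_and] at hw <;>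
        obtain ⟨e, i, rfl⟩ := hw
      · exact ⟨e, i, _, Or.inl rfl, rfl⟩
      · exact ⟨e, i, _, Or.inr rfl, rfl⟩
    intro w1 w2 h1 h2 hne
    obtain ⟨e, i, k, hk, rfl⟩ := hcol w1 h1
    obtain ⟨e', i', k', hk', rfl⟩ := hcol w2 h2
    have key : ∀ blue : Bool, (k : ℕ) = (if blue then 0 else n+1) →
        (n : ℕ∞) + 1 ≤ (Gr G n).edist (Pv G n e i k) (Pv G n e' i' k') := by
      intro blue hkb
      have hx := psi_at_self G n e i blue k hkb
      have hm : n + 1 ≤ psi G n e i blue (Pv G n e' i' k') := by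
        apply psi_at_other G n hn e i blue e' i' k'
        by_cases hc : e' = e ∧ i' = i
        · obtain ⟨rfl, rfl⟩ := hc
          right
          have hkk : (k' : ℕ) ≠ (k : ℕ) := fun hsame =>
            hne (by rw [Pv_inj]; exact ⟨rfl, rfl, Fin.ext hsame.symm⟩)
          cases blue <;> simp only [Bool.false_eq_true, ↓reduceIte] at hkb ⊢ <;> omega
        · exact Or.inl hc
      have h := lower_bound G n (psi G n e i blue) (lip_psi G n hn e i blue)
        (Pv G n e i k) (Pv G n e' i' k') hx (n+1) hm
      calc (n : ℕ∞) + 1 = ((n+1 : ℕ) : ℕ∞) := by push_cast; ring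
        _ ≤ _ := h
    rcases hk with hk | hk
    · exact key true (by simpa using hk)
    · exact key false (by simpa using hk)
end

section
/- For every finite simple graph G and every integer m ≥ 1, there exist a finite simple graph G' with V(G) ⊆ V(G') and disjoint sets Blue_0, Red_0 ⊆ V(G') \ V(G) such that: (a) every vertex of V(G') \ (V(G) ∪ Blue_0 ∪ Red_0) is at graph distance at most m in G' from some vertex of Blue_0 and at distance at most m from some vertex of Red_0; (b) every vertex of V(G) is at distance at least m+1 in G' from every vertex of Blue_0 ∪ Red_0; (c) for distinct u, v ∈ V(G), dist_{G'}(u,v) = m if uv is an edge of G, and dist_{G'}(u,v) ≥ m+1 otherwise; (d) any two distinct vertices of Blue_0 ∪ Red_0 are at distance at least m+1 in G'. -/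
universe u




namespace Stmt12

variable {V : Type u}

abbrev W (V : Type u) (m : ℕ) : Type u := V ⊕ (V × V × (Fin (m-1) ⊕ Fin (m+2)))

/-- |a - b| on ℕ -/
def dd (a b : ℕ) : ℕ := (a - b) + (b - a)

def Rel (G : SimpleGraph V) (m : ℕ) : W V m → W V m → Prop
  | .inl u, .inl v => m = 1 ∧ G.Adj u v
  | .inl u, .inr (a, b, .inl i) =>
      G.Adj a b ∧ ((u = a ∧ (i : ℕ) = 0) ∨ (u = b ∧ (i : ℕ) + 2 = m))
  | .inl u, .inr (a, b, .inr j) => m = 1 ∧ G.Adj a b ∧ (u = a ∨ u = b) ∧ (j : ℕ) = 1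
  | .inr (a, b, .inl i), .inr (a', b', .inl i') =>
      a = a' ∧ b = b' ∧ (i' : ℕ) = (i : ℕ) + 1
  | .inr (a, b, .inl i), .inr (a', b', .inr j) =>
      a = a' ∧ b = b' ∧ ((i : ℕ) + 1 = m/2 ∨ (i : ℕ) + 1 = (m+1)/2) ∧
        ((j : ℕ) = (m+1)/2 ∨ (j : ℕ) = m/2 + 1)
  | .inr (a, b, .inr j), .inr (a', b', .inr j') =>
      a = a' ∧ b = b' ∧ (j' : ℕ) = (j : ℕ) + 1
  | _, _ => False

def Gm (G : SimpleGraph V) (m : ℕ) : SimpleGraph (W V m) where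
  Adj x y := x ≠ y ∧ (Rel G m x y ∨ Rel G m y x)
  symm := ⟨fun x y ⟨h1, h2⟩ => ⟨Ne.symm h1, h2.symm⟩⟩
  loopless := ⟨fun _ h => h.1 rfl⟩

section chain

variable {X : Type*} {H : SimpleGraph X}

lemma walk_pot {f : X → ℕ} (hf : ∀ x y, H.Adj x y → f y ≤ f x + 1) {x y : X}
    (p : H.Walk x y) : f y ≤ f x + p.length := by
  induction p with
  | nil => simp
  | cons h p ih =>
    have := hf _ _ h
    simp only [SimpleGraph.Walk.length_cons]
    omega

lemma le_edist_of_pot {f : X → ℕ} (hf : ∀ x y, H.Adj x y → f y ≤ f x + 1) (x y : X) :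
    (f y : ℕ∞) ≤ (f x : ℕ∞) + H.edist x y := by
  by_cases hr : H.Reachable x y
  · obtain ⟨p, hp⟩ := hr.exists_walk_length_eq_edist
    rw [← hp]
    exact_mod_cast walk_pot hf p
  · rw [SimpleGraph.edist_eq_top_of_not_reachable hr]
    simp

lemma le_edist_of_pot' {f : X → ℕ} (hf : ∀ x y, H.Adj x y → f y ≤ f x + 1) (x y : X)
    (h0 : f x = 0) {c : ℕ} (hc : c ≤ f y) : (c : ℕ∞) ≤ H.edist x y := by
  have := le_edist_of_pot hf x y
  rw [h0] at this
  simp only [Nat.cast_zero, zero_add] at this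
  exact le_trans (by exact_mod_cast hc) this

lemma edist_le_chain (v : ℕ → X) :
    ∀ n, (∀ i, i < n → H.Adj (v i) (v (i+1))) → H.edist (v 0) (v n) ≤ (n : ℕ∞)
  | 0, _ => by simp [SimpleGraph.edist_self]
  | n+1, h => by
    have h1 := edist_le_chain v n (fun i hi => h i (by omega))
    have h2 : H.edist (v n) (v (n+1)) ≤ 1 :=
      le_of_eq (SimpleGraph.edist_eq_one_iff_adj.mpr (h n (by omega)))
    calc H.edist (v 0) (v (n+1)) ≤ H.edist (v 0) (v n) + H.edist (v n) (v (n+1)) :=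
            SimpleGraph.edist_triangle
      _ ≤ (n : ℕ∞) + 1 := add_le_add h1 h2
      _ = ((n+1 : ℕ) : ℕ∞) := by push_cast; ring

end chain

end Stmt12

namespace Stmt12

variable {V : Type u} {G : SimpleGraph V} {m : ℕ}

def qv (m : ℕ) (a b : V) (i : Fin (m-1)) : W V m := .inr (a, b, .inl i)
def cv (m : ℕ) (a b : V) (j : Fin (m+2)) : W V m := .inr (a, b, .inr j)

lemma cpath_le (a b : V) (j n : ℕ) (h : j + n < m+2) :
    (Gm G m).edist (cv m a b ⟨j, by omega⟩) (cv m a b ⟨j+n, h⟩) ≤ (n : ℕ∞) := by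
  have key := edist_le_chain (H := Gm G m)
    (fun i => cv m a b ⟨min (j+i) (j+n), by omega⟩) n (fun i hi => by
      refine ⟨?_, Or.inl ?_⟩
      · simp only [cv, ne_eq, Sum.inr.injEq, Sum.inl.injEq, Prod.mk.injEq, Fin.ext_iff, Fin.val_mk, true_and]
        omega
      · exact ⟨rfl, rfl, by simp only [Fin.val_mk]; omega⟩)
  have e0 : (cv m a b ⟨min (j+0) (j+n), by omega⟩ : W V m) = cv m a b ⟨j, by omega⟩ := by
    simp only [cv, Sum.inr.injEq, Sum.inl.injEq, Prod.mk.injEq, Fin.ext_iff, Fin.val_mk, true_and]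
    omega
  have e1 : (cv m a b ⟨min (j+n) (j+n), by omega⟩ : W V m) = cv m a b ⟨j+n, h⟩ := by
    simp only [cv, Sum.inr.injEq, Sum.inl.injEq, Prod.mk.injEq, Fin.ext_iff, Fin.val_mk, true_and]
    omega
  rw [← e0, ← e1]
  exact key

lemma cpath_le' (a b : V) (j j' : Fin (m+2)) :
    (Gm G m).edist (cv m a b j) (cv m a b j') ≤ ((dd j j' : ℕ) : ℕ∞) := by
  have main : ∀ (x y : Fin (m+2)), (x:ℕ) ≤ y →
      (Gm G m).edist (cv m a b x) (cv m a b y) ≤ ((dd x y : ℕ) : ℕ∞) := by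
    intro x y hxy
    have h2 : (x:ℕ) + ((y:ℕ) - x) < m + 2 := by omega
    have := cpath_le (G := G) (m := m) a b x ((y:ℕ) - x) h2
    have e0 : (cv m a b ⟨(x:ℕ), by omega⟩ : W V m) = cv m a b x := by simp [cv]
    have e1 : (cv m a b ⟨(x:ℕ) + ((y:ℕ) - x), h2⟩ : W V m) = cv m a b y := by
      simp only [cv, Sum.inr.injEq, Sum.inl.injEq, Prod.mk.injEq, Fin.ext_iff, Fin.val_mk, true_and]
      omega
    rw [e0, e1] at this
    exact le_trans this (Nat.cast_le.mpr (by unfold dd; omega))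
  rcases le_total (j : ℕ) (j' : ℕ) with h | h
  · exact main j j' h
  · rw [SimpleGraph.edist_comm]
    exact le_trans (main j' j h) (Nat.cast_le.mpr (by unfold dd; omega))

lemma qpath_le (a b : V) (i n : ℕ) (h : i + n < m-1) :
    (Gm G m).edist (qv m a b ⟨i, by omega⟩) (qv m a b ⟨i+n, h⟩) ≤ (n : ℕ∞) := by
  have key := edist_le_chain (H := Gm G m)
    (fun t => qv m a b ⟨min (i+t) (i+n), by omega⟩) n (fun t ht => by
      refine ⟨?_, Or.inl ?_⟩
      · simp only [qv, ne_eq, Sum.inr.injEq, Sum.inl.injEq, Prod.mk.injEq, Fin.ext_iff, Fin.val_mk, true_and]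
        omega
      · exact ⟨rfl, rfl, by simp only [Fin.val_mk]; omega⟩)
  have e0 : (qv m a b ⟨min (i+0) (i+n), by omega⟩ : W V m) = qv m a b ⟨i, by omega⟩ := by
    simp only [qv, Sum.inr.injEq, Sum.inl.injEq, Prod.mk.injEq, Fin.ext_iff, Fin.val_mk, true_and]
    omega
  have e1 : (qv m a b ⟨min (i+n) (i+n), by omega⟩ : W V m) = qv m a b ⟨i+n, h⟩ := by
    simp only [qv, Sum.inr.injEq, Sum.inl.injEq, Prod.mk.injEq, Fin.ext_iff, Fin.val_mk, true_and]
    omega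
  rw [← e0, ← e1]
  exact key

lemma qpath_le' (a b : V) (i i' : Fin (m-1)) :
    (Gm G m).edist (qv m a b i) (qv m a b i') ≤ ((dd i i' : ℕ) : ℕ∞) := by
  have main : ∀ (x y : Fin (m-1)), (x:ℕ) ≤ y →
      (Gm G m).edist (qv m a b x) (qv m a b y) ≤ ((dd x y : ℕ) : ℕ∞) := by
    intro x y hxy
    have h2 : (x:ℕ) + ((y:ℕ) - x) < m - 1 := by omega
    have := qpath_le (G := G) (m := m) a b x ((y:ℕ) - x) h2
    have e0 : (qv m a b ⟨(x:ℕ), by omega⟩ : W V m) = qv m a b x := by simp [qv]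
    have e1 : (qv m a b ⟨(x:ℕ) + ((y:ℕ) - x), h2⟩ : W V m) = qv m a b y := by
      simp only [qv, Sum.inr.injEq, Sum.inl.injEq, Prod.mk.injEq, Fin.ext_iff, Fin.val_mk, true_and]
      omega
    rw [e0, e1] at this
    exact le_trans this (Nat.cast_le.mpr (by unfold dd; omega))
  rcases le_total (i : ℕ) (i' : ℕ) with h | h
  · exact main i i' h
  · rw [SimpleGraph.edist_comm]
    exact le_trans (main i' i h) (Nat.cast_le.mpr (by unfold dd; omega))

lemma conn_adj (a b : V) (i : Fin (m-1)) (j : Fin (m+2))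
    (hi : (i:ℕ) + 1 = m/2 ∨ (i:ℕ) + 1 = (m+1)/2)
    (hj : (j:ℕ) = (m+1)/2 ∨ (j:ℕ) = m/2 + 1) :
    (Gm G m).Adj (qv m a b i) (cv m a b j) :=
  ⟨by simp [qv, cv], Or.inl ⟨rfl, rfl, hi, hj⟩⟩

end Stmt12

namespace Stmt12
variable {V : Type u}
namespace Pot

open Classical in
noncomputable def vbase (G : SimpleGraph V) (m : ℕ) (u w : V) : ℕ :=
  if w = u then 0 else if G.Adj u w then m else m+1

def gq (m α β k : ℕ) : ℕ := min (min (α + k) (β + (m - k))) (m+1)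

def gc (m α β j : ℕ) : ℕ :=
  min (min (min (gq m α β (m/2) + 1 + dd ((m+1)/2) j) (gq m α β (m/2) + 1 + dd (m/2+1) j))
          (min (gq m α β ((m+1)/2) + 1 + dd ((m+1)/2) j) (gq m α β ((m+1)/2) + 1 + dd (m/2+1) j)))
      (m+1)

def hq (m t k : ℕ) : ℕ :=
  min (min (min (dd ((m+1)/2) t + 1 + dd (m/2) k) (dd (m/2+1) t + 1 + dd (m/2) k))
          (min (dd ((m+1)/2) t + 1 + dd ((m+1)/2) k) (dd (m/2+1) t + 1 + dd ((m+1)/2) k)))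
      (m+1)

open Classical in
noncomputable def fV (G : SimpleGraph V) (m : ℕ) (u : V) : W V m → ℕ
  | .inl w => vbase G m u w
  | .inr (a, b, .inl i) =>
      if G.Adj a b then gq m (vbase G m u a) (vbase G m u b) ((i:ℕ)+1) else m+1
  | .inr (a, b, .inr j) =>
      if G.Adj a b then gc m (vbase G m u a) (vbase G m u b) (j:ℕ) else m+1

open Classical in
noncomputable def fC (m : ℕ) (a0 b0 : V) (t : ℕ) : W V m → ℕ
  | .inl _ => m+1
  | .inr (a, b, .inl i) => if a = a0 ∧ b = b0 then hq m t ((i:ℕ)+1) else m+1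
  | .inr (a, b, .inr j) => if a = a0 ∧ b = b0 then min (dd (j:ℕ) t) (m+1) else m+1

variable {G : SimpleGraph V} {m : ℕ}

lemma vbase_le (u w : V) : vbase G m u w ≤ m+1 := by
  unfold vbase; split_ifs <;> omega

lemma vbase_dd (hm : 1 ≤ m) (u : V) {a b : V} (h : G.Adj a b) :
    dd (vbase G m u a) (vbase G m u b) ≤ m := by
  have hab : a ≠ b := h.ne
  have h2 : a = u → G.Adj u b := fun ha => ha ▸ h
  have h3 : b = u → G.Adj u a := fun hb => hb ▸ h.symm
  unfold vbase dd
  split_ifs <;> simp_all <;> omega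

end Pot

end Stmt12

namespace Stmt12
namespace Pot
variable {V : Type u}

set_option maxHeartbeats 1000000

lemma gq_le (m α β k : ℕ) : gq m α β k ≤ m + 1 := by simp only [gq]; omega

lemma gq_lip (m α β k k' : ℕ) (h1 : k' ≤ k + 1) (h2 : k ≤ k' + 1) :
    gq m α β k' ≤ gq m α β k + 1 := by
  simp only [gq]; omega

lemma conn_lip (m α β k j : ℕ) (hm : 1 ≤ m)
    (hk : k = m/2 ∨ k = (m+1)/2) (hj : j = (m+1)/2 ∨ j = m/2 + 1) :
    gc m α β j ≤ gq m α β k + 1 ∧ gq m α β k ≤ gc m α β j + 1 := by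
  have e1 := gq_le m α β (m/2)
  have e2 := gq_le m α β ((m+1)/2)
  have e3 : gq m α β (m/2) ≤ gq m α β ((m+1)/2) + 1 := gq_lip m α β _ _ (by omega) (by omega)
  have e4 : gq m α β ((m+1)/2) ≤ gq m α β (m/2) + 1 := gq_lip m α β _ _ (by omega) (by omega)
  simp only [gc]
  rcases hk with rfl | rfl <;> rcases hj with rfl | rfl <;>
    · generalize gq m α β (m/2) = g1 at *
      generalize gq m α β ((m+1)/2) = g2 at *
      simp only [dd] at *
      omega

lemma dd_mono (p k k' : ℕ) (h1 : k' ≤ k + 1) (h2 : k ≤ k' + 1) : dd p k' ≤ dd p k + 1 := by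
  simp only [dd]; omega

lemma min5_lip (a1 a2 a3 a4 b1 b2 b3 b4 c : ℕ)
    (h1 : b1 ≤ a1 + 1) (h2 : b2 ≤ a2 + 1) (h3 : b3 ≤ a3 + 1) (h4 : b4 ≤ a4 + 1) :
    min (min (min b1 b2) (min b3 b4)) c ≤ min (min (min a1 a2) (min a3 a4)) c + 1 := by
  omega

lemma gc_lipj (m α β j j' : ℕ) (h1 : j' ≤ j + 1) (h2 : j ≤ j' + 1) :
    gc m α β j' ≤ gc m α β j + 1 := by
  simp only [gc]
  refine min5_lip _ _ _ _ _ _ _ _ _ ?_ ?_ ?_ ?_ <;>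
    · have := dd_mono ((m+1)/2) j j' h1 h2
      have := dd_mono (m/2+1) j j' h1 h2
      omega

lemma gc_zero (m α β : ℕ) (hm : 1 ≤ m) : m+1 ≤ gc m α β 0 := by
  simp only [gc, gq, dd]; omega

lemma gc_top (m α β : ℕ) (hm : 1 ≤ m) : m+1 ≤ gc m α β (m+1) := by
  simp only [gc, gq, dd]; omega

lemma bd_a (m α β : ℕ) (hm : 1 ≤ m) (hd : dd α β ≤ m) (hα : α ≤ m+1) :
    gq m α β 1 ≤ α + 1 ∧ α ≤ gq m α β 1 + 1 := by
  simp only [gq, dd] at *; omega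

lemma bd_b (m α β k : ℕ) (hk : k + 1 = m) (hd : dd α β ≤ m) (hβ : β ≤ m+1) :
    gq m α β k ≤ β + 1 ∧ β ≤ gq m α β k + 1 := by
  simp only [gq, dd] at *; omega

lemma m1_c (α β γ : ℕ) (hm : (1:ℕ) = 1) (hd : dd α β ≤ 1) (hα : α ≤ 2) (hβ : β ≤ 2)
    (hγ : γ = α ∨ γ = β) :
    gc 1 α β 1 ≤ γ + 1 ∧ γ ≤ gc 1 α β 1 + 1 := by
  rcases hγ with rfl | rfl <;> · simp only [gc, gq, dd] at *; omega

end Pot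
end Stmt12

namespace Stmt12
namespace Pot
variable {V : Type u}

set_option maxHeartbeats 1000000

lemma hq_le (m t k : ℕ) : hq m t k ≤ m + 1 := by simp only [hq]; omega

lemma hq_lip (m t k k' : ℕ) (h1 : k' ≤ k + 1) (h2 : k ≤ k' + 1) :
    hq m t k' ≤ hq m t k + 1 := by
  simp only [hq]
  refine min5_lip _ _ _ _ _ _ _ _ _ ?_ ?_ ?_ ?_ <;>
    · have := dd_mono (m/2) k k' h1 h2
      have := dd_mono ((m+1)/2) k k' h1 h2
      omega

lemma hq_bd (m t k : ℕ) (hm : 2 ≤ m) (ht : t = 0 ∨ t = m+1) (hk : k = 1 ∨ k + 1 = m) :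
    m ≤ hq m t k := by
  rcases ht with rfl | rfl <;> rcases hk with rfl | hk <;> · simp only [hq, dd]; omega

lemma hq_conn (m t k j : ℕ) (hm : 1 ≤ m) (ht : t = 0 ∨ t = m+1)
    (hk : k = m/2 ∨ k = (m+1)/2) (hj : j = (m+1)/2 ∨ j = m/2 + 1) :
    min (dd j t) (m+1) ≤ hq m t k + 1 ∧ hq m t k ≤ min (dd j t) (m+1) + 1 := by
  rcases ht with rfl | rfl <;> rcases hk with rfl | rfl <;> rcases hj with rfl | rfl <;>
    · simp only [hq, dd]; omega

end Pot
end Stmt12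

namespace Stmt12
namespace Pot
variable {V : Type u} {G : SimpleGraph V} {m : ℕ}

set_option maxHeartbeats 1000000

lemma fV_lip (hm : 1 ≤ m) (u : V) : ∀ x y : W V m, Rel G m x y →
    fV G m u y ≤ fV G m u x + 1 ∧ fV G m u x ≤ fV G m u y + 1 := by
  intro x y h
  rcases x with u' | ⟨a, b, i | j⟩ <;> rcases y with v' | ⟨a', b', i' | j'⟩ <;>
    try exact h.elim
  · -- inl, inl
    obtain ⟨hm1, hadj⟩ := h
    have hd := vbase_dd (G := G) hm u hadj
    simp only [fV]
    unfold dd at hd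
    omega
  · -- inl, q
    obtain ⟨hadj, hc⟩ := h
    have hd := vbase_dd (G := G) hm u hadj
    have hA := vbase_le (G := G) (m := m) u a'
    have hB := vbase_le (G := G) (m := m) u b'
    simp only [fV]
    rw [if_pos hadj]
    rcases hc with ⟨rfl, hi⟩ | ⟨rfl, hi⟩
    · have e : (i' : ℕ) + 1 = 1 := by omega
      rw [e]
      have := bd_a m (vbase G m u u') (vbase G m u b') hm hd hA
      omega
    · have := bd_b m (vbase G m u a') (vbase G m u u') ((i' : ℕ) + 1) (by omega) hd hB
      omega
  · -- inl, c  (m = 1)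
    obtain ⟨hm1, hadj, hor, hj⟩ := h
    subst hm1
    have hd := vbase_dd (G := G) hm u hadj
    have hA := vbase_le (G := G) (m := 1) u a'
    have hB := vbase_le (G := G) (m := 1) u b'
    simp only [fV]
    rw [if_pos hadj, hj]
    have := m1_c (vbase G 1 u a') (vbase G 1 u b') (vbase G 1 u u') rfl hd hA hB
      (by rcases hor with rfl | rfl
          · exact Or.inl rfl
          · exact Or.inr rfl)
    omega
  · -- q, q
    obtain ⟨rfl, rfl, hi⟩ := h
    simp only [fV]
    by_cases hadj : G.Adj a b
    · rw [if_pos hadj, if_pos hadj]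
      constructor <;> apply gq_lip <;> omega
    · rw [if_neg hadj, if_neg hadj]
      omega
  · -- q, c  (connection)
    obtain ⟨rfl, rfl, hi, hj⟩ := h
    simp only [fV]
    by_cases hadj : G.Adj a b
    · rw [if_pos hadj, if_pos hadj]
      have := conn_lip m (vbase G m u a) (vbase G m u b) ((i : ℕ) + 1) (j' : ℕ) hm hi hj
      omega
    · rw [if_neg hadj, if_neg hadj]
      omega
  · -- c, c
    obtain ⟨rfl, rfl, hj⟩ := h
    simp only [fV]
    by_cases hadj : G.Adj a b
    · rw [if_pos hadj, if_pos hadj]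
      constructor <;> apply gc_lipj <;> omega
    · rw [if_neg hadj, if_neg hadj]
      omega

lemma fC_lip (hm : 1 ≤ m) (a0 b0 : V) (t : ℕ) (ht : t = 0 ∨ t = m+1) :
    ∀ x y : W V m, Rel G m x y →
    fC m a0 b0 t y ≤ fC m a0 b0 t x + 1 ∧ fC m a0 b0 t x ≤ fC m a0 b0 t y + 1 := by
  intro x y h
  rcases x with u' | ⟨a, b, i | j⟩ <;> rcases y with v' | ⟨a', b', i' | j'⟩ <;>
    try exact h.elim
  · -- inl, inl
    simp only [fC]
    omega
  · -- inl, q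
    simp only [fC]
    by_cases hp : a' = a0 ∧ b' = b0
    · rw [if_pos hp]
      have hm2 : 2 ≤ m := by have := i'.isLt; omega
      obtain ⟨hadj, hc⟩ := h
      have h1 := hq_bd m t ((i' : ℕ) + 1) hm2 ht (by omega)
      have h2 := hq_le m t ((i' : ℕ) + 1)
      omega
    · rw [if_neg hp]
      omega
  · -- inl, c  (m = 1)
    obtain ⟨hm1, hadj, hor, hj⟩ := h
    subst hm1
    simp only [fC]
    by_cases hp : a' = a0 ∧ b' = b0
    · rw [if_pos hp, hj]
      rcases ht with rfl | rfl <;> · simp only [dd]; omega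
    · rw [if_neg hp]
      omega
  · -- q, q
    obtain ⟨rfl, rfl, hi⟩ := h
    simp only [fC]
    by_cases hp : a = a0 ∧ b = b0
    · rw [if_pos hp, if_pos hp]
      constructor <;> apply hq_lip <;> omega
    · rw [if_neg hp, if_neg hp]
      omega
  · -- q, c
    obtain ⟨rfl, rfl, hi, hj⟩ := h
    simp only [fC]
    by_cases hp : a = a0 ∧ b = b0
    · rw [if_pos hp, if_pos hp]
      have := hq_conn m t ((i : ℕ) + 1) (j' : ℕ) hm ht hi hj
      omega
    · rw [if_neg hp, if_neg hp]
      omega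
  · -- c, c
    obtain ⟨rfl, rfl, hj⟩ := h
    simp only [fC]
    by_cases hp : a = a0 ∧ b = b0
    · rw [if_pos hp, if_pos hp, hj]
      simp only [dd]
      omega
    · rw [if_neg hp, if_neg hp]
      omega

lemma adj_lip {f : W V m → ℕ}
    (hrel : ∀ x y : W V m, Rel G m x y → f y ≤ f x + 1 ∧ f x ≤ f y + 1) :
    ∀ x y : W V m, (Gm G m).Adj x y → f y ≤ f x + 1 :=
  fun x y hxy => hxy.2.elim (fun h => (hrel x y h).1) (fun h => (hrel y x h).2)

end Pot
end Stmt12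

namespace Stmt12
variable {V : Type u} {G : SimpleGraph V} {m : ℕ}
open Pot

set_option maxHeartbeats 1000000

lemma tri3 {X : Type*} (H : SimpleGraph X) (x y z t : X) :
    H.edist x t ≤ H.edist x y + H.edist y z + H.edist z t :=
  le_trans SimpleGraph.edist_triangle
    (add_le_add_left SimpleGraph.edist_triangle _)

lemma adj_edist_le {x y : W V m} (h : (Gm G m).Adj x y) : (Gm G m).edist x y ≤ 1 :=
  le_of_eq (SimpleGraph.edist_eq_one_iff_adj.mpr h)

lemma cast_m1 : ((m : ℕ∞) + 1) = ((m + 1 : ℕ) : ℕ∞) := by push_cast; ring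

namespace Pot

lemma vbase_self (u : V) : vbase G m u u = 0 := by simp [vbase]

lemma vbase_of_adj {u w : V} (h : G.Adj u w) : vbase G m u w = m := by
  unfold vbase
  rw [if_neg h.ne', if_pos h]

lemma vbase_of_nadj {u w : V} (hne : w ≠ u) (h : ¬ G.Adj u w) : vbase G m u w = m + 1 := by
  unfold vbase
  rw [if_neg hne, if_neg h]

lemma fV_c_end (hm : 1 ≤ m) (u a b : V) (j : Fin (m+2)) (hj : (j:ℕ) = 0 ∨ (j:ℕ) = m+1) :
    m + 1 ≤ fV G m u (cv m a b j) := by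
  simp only [fV, cv]
  by_cases hadj : G.Adj a b
  · rw [if_pos hadj]
    rcases hj with hj | hj <;> rw [hj]
    · exact gc_zero m _ _ hm
    · exact gc_top m _ _ hm
  · rw [if_neg hadj]

lemma lb_V (hm : 1 ≤ m) (u : V) (y : W V m) {c : ℕ} (hc : c ≤ fV G m u y) :
    (c : ℕ∞) ≤ (Gm G m).edist (.inl u) y :=
  le_edist_of_pot' (adj_lip (fV_lip hm u)) _ y (by simp only [fV]; exact vbase_self u) hc

lemma lb_C (hm : 1 ≤ m) (a0 b0 : V) (t : ℕ) (ht : t = 0 ∨ t = m+1)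
    (jt : Fin (m+2)) (hjt : (jt : ℕ) = t) (y : W V m) {c : ℕ}
    (hc : c ≤ fC m a0 b0 t y) :
    (c : ℕ∞) ≤ (Gm G m).edist (cv m a0 b0 jt) y := by
  refine le_edist_of_pot' (adj_lip (fC_lip hm a0 b0 t ht)) _ y ?_ hc
  simp only [fC, cv]
  split_ifs with hcond
  · simp [dd, hjt]
  · exact absurd (by simp) hcond

end Pot

lemma b_helper (hm : 1 ≤ m) (a0 b0 : V) (t : ℕ) (ht : t = 0 ∨ t = m+1)
    (jt : Fin (m+2)) (hjt : (jt : ℕ) = t) (v : V) :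
    (m : ℕ∞) + 1 ≤ (Gm G m).edist (.inl v) (cv m a0 b0 jt) := by
  rw [SimpleGraph.edist_comm, cast_m1]
  exact lb_C hm a0 b0 t ht jt hjt _ (le_refl (m+1))

lemma d_helper (hm : 1 ≤ m) (a0 b0 a b : V) (t s : ℕ)
    (ht : t = 0 ∨ t = m+1) (hs : s = 0 ∨ s = m+1)
    (jt js : Fin (m+2)) (hjt : (jt : ℕ) = t) (hjs : (js : ℕ) = s)
    (hne : cv m a0 b0 jt ≠ cv m a b js) :
    (m : ℕ∞) + 1 ≤ (Gm G m).edist (cv m a0 b0 jt) (cv m a b js) := by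
  rw [cast_m1]
  refine lb_C hm a0 b0 t ht jt hjt _ ?_
  simp only [fC, cv]
  split_ifs with hp
  · obtain ⟨rfl, rfl⟩ := hp
    have hst : s ≠ t := by
      intro hst
      apply hne
      simp only [cv, Sum.inr.injEq, Prod.mk.injEq, true_and]
      exact Fin.ext (by omega)
    simp only [dd]
    omega
  · exact le_refl _

end Stmt12

namespace Stmt12
variable {V : Type u} {G : SimpleGraph V} {m : ℕ}
open Pot

set_option maxHeartbeats 1000000

lemma cast3 {a b d : ℕ} (h : a + 1 + b ≤ d) :
    (a : ℕ∞) + 1 + (b : ℕ∞) ≤ (d : ℕ∞) := by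
  rw [show (1:ℕ∞) = ((1:ℕ):ℕ∞) from rfl, ← Nat.cast_add, ← Nat.cast_add]
  exact Nat.cast_le.mpr h

lemma q_to_c_aux (a b : V) (i : Fin (m-1)) (tj : Fin (m+2)) (K J : ℕ)
    (hK : K < m - 1) (hJ : J < m + 2)
    (hK1 : K + 1 = m/2 ∨ K + 1 = (m+1)/2) (hJ1 : J = (m+1)/2 ∨ J = m/2 + 1)
    (hsum : dd (i:ℕ) K + 1 + dd J (tj:ℕ) ≤ m) :
    (Gm G m).edist (qv m a b i) (cv m a b tj) ≤ (m : ℕ∞) := by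
  refine le_trans (tri3 (Gm G m) _ (qv m a b ⟨K, hK⟩) (cv m a b ⟨J, hJ⟩) _) ?_
  have h1 := qpath_le' (G := G) a b i ⟨K, hK⟩
  have h2 : (Gm G m).edist (qv m a b ⟨K,hK⟩) (cv m a b ⟨J,hJ⟩) ≤ 1 :=
    adj_edist_le (conn_adj a b _ _ (by simpa using hK1) (by simpa using hJ1))
  have h3 := cpath_le' (G := G) a b ⟨J,hJ⟩ tj
  refine le_trans (add_le_add (add_le_add h1 h2) h3) ?_
  simpa using cast3 hsum

lemma q_to_c (hm : 1 ≤ m) (a b : V) (i : Fin (m-1)) (tj : Fin (m+2))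
    (ht : (tj:ℕ) = 0 ∨ (tj:ℕ) = m+1) :
    (Gm G m).edist (qv m a b i) (cv m a b tj) ≤ (m : ℕ∞) := by
  have hm2 : 2 ≤ m := by have := i.isLt; omega
  have hilt := i.isLt
  by_cases hk : (i:ℕ) + 1 ≤ m/2 <;> rcases ht with ht | ht
  · exact q_to_c_aux a b i tj (m/2 - 1) ((m+1)/2) (by omega) (by omega)
      (Or.inl (by omega)) (Or.inl rfl) (by simp only [dd]; omega)
  · exact q_to_c_aux a b i tj (m/2 - 1) (m/2 + 1) (by omega) (by omega)
      (Or.inl (by omega)) (Or.inr rfl) (by simp only [dd]; omega)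
  · exact q_to_c_aux a b i tj ((m+1)/2 - 1) ((m+1)/2) (by omega) (by omega)
      (Or.inr (by omega)) (Or.inl rfl) (by simp only [dd]; omega)
  · exact q_to_c_aux a b i tj ((m+1)/2 - 1) (m/2 + 1) (by omega) (by omega)
      (Or.inr (by omega)) (Or.inr rfl) (by simp only [dd]; omega)

lemma c_to_c (a b : V) (j tj : Fin (m+2)) (hsum : dd (j:ℕ) (tj:ℕ) ≤ m) :
    (Gm G m).edist (cv m a b j) (cv m a b tj) ≤ (m : ℕ∞) :=
  le_trans (cpath_le' a b j tj) (Nat.cast_le.mpr hsum)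

lemma adj_upper (hm : 1 ≤ m) {u v : V} (hadj : G.Adj u v) :
    (Gm G m).edist (.inl u) (.inl v) ≤ (m : ℕ∞) := by
  by_cases hm1 : m = 1
  · subst hm1
    have h : (Gm G 1).Adj (.inl u) (.inl v) := ⟨by simp [hadj.ne], Or.inl ⟨rfl, hadj⟩⟩
    exact le_trans (adj_edist_le h) (by norm_num)
  · have hm2 : 2 ≤ m := by omega
    refine le_trans
      (tri3 (Gm G m) _ (qv m u v ⟨0, by omega⟩) (qv m u v ⟨m-2, by omega⟩) _) ?_
    have h1 : (Gm G m).edist (.inl u) (qv m u v ⟨0, by omega⟩) ≤ 1 :=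
      adj_edist_le ⟨by simp [qv], Or.inl ⟨hadj, Or.inl ⟨rfl, rfl⟩⟩⟩
    have h2' := qpath_le (G := G) (m := m) u v 0 (m-2) (by omega)
    have e : (qv m u v ⟨0+(m-2), by omega⟩ : W V m) = qv m u v ⟨m-2, by omega⟩ := by
      simp only [qv, Sum.inr.injEq, Sum.inl.injEq, Prod.mk.injEq, Fin.ext_iff, Fin.val_mk,
        true_and]
      omega
    rw [e] at h2'
    have h3 : (Gm G m).edist (qv m u v ⟨m-2, by omega⟩) (.inl v) ≤ 1 := by
      rw [SimpleGraph.edist_comm]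
      exact adj_edist_le ⟨by simp [qv], Or.inl ⟨hadj, Or.inr ⟨rfl, by simp; omega⟩⟩⟩
    refine le_trans (add_le_add (add_le_add h1 h2') h3) ?_
    calc (1 : ℕ∞) + (m-2 : ℕ) + 1 = ((1 + (m-2) + 1 : ℕ) : ℕ∞) := by push_cast; ring
      _ ≤ (m : ℕ∞) := Nat.cast_le.mpr (by omega)

end Stmt12


set_option maxHeartbeats 1000000 in
/-- for every finite simple graph `G` and every `m ≥ 1` there is a finite simple
graph `G'` containing the vertices of `G` (via an embedding `ι`), together with disjoint sets
`Blue0`, `Red0` of new vertices, satisfying conditions (a)–(d). -/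
theorem stmt12 {V : Type u} [Fintype V] (G : SimpleGraph V) (m : ℕ) (hm : 1 ≤ m) :
    ∃ (W : Type u) (_ : Fintype W) (G' : SimpleGraph W) (ι : V ↪ W)
      (Blue0 Red0 : Finset W),
      Disjoint Blue0 Red0 ∧ (∀ v : V, ι v ∉ Blue0 ∧ ι v ∉ Red0) ∧
      -- (a) every extra vertex is within distance `m` of `Blue0` and of `Red0`:
      (∀ w : W, (∀ v : V, ι v ≠ w) → w ∉ Blue0 → w ∉ Red0 →
        (∃ b ∈ Blue0, G'.edist w b ≤ (m : ℕ∞)) ∧ (∃ r ∈ Red0, G'.edist w r ≤ (m : ℕ∞))) ∧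
      -- (b) every vertex of `V(G)` is at distance at least `m+1` from `Blue0 ∪ Red0`:
      (∀ v : V, ∀ w : W, w ∈ Blue0 ∨ w ∈ Red0 → (m : ℕ∞) + 1 ≤ G'.edist (ι v) w) ∧
      -- (c) distances between vertices of `V(G)`:
      (∀ u v : V, u ≠ v →
        (G.Adj u v → G'.edist (ι u) (ι v) = (m : ℕ∞)) ∧
        (¬G.Adj u v → (m : ℕ∞) + 1 ≤ G'.edist (ι u) (ι v))) ∧
      -- (d) distinct vertices of `Blue0 ∪ Red0` are at distance at least `m+1`:
      (∀ w₁ w₂ : W, w₁ ∈ Blue0 ∨ w₁ ∈ Red0 → w₂ ∈ Blue0 ∨ w₂ ∈ Red0 → w₁ ≠ w₂ →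
        (m : ℕ∞) + 1 ≤ G'.edist w₁ w₂) := by
  classical
  refine ⟨Stmt12.W V m, inferInstance, Stmt12.Gm G m, ⟨Sum.inl, Sum.inl_injective⟩,
    Finset.univ.image (fun p : V × V => Stmt12.cv m p.1 p.2 ⟨0, by omega⟩),
    Finset.univ.image (fun p : V × V => Stmt12.cv m p.1 p.2 ⟨m+1, by omega⟩),
    ?_, ?_, ?_, ?_, ?_, ?_⟩
  · -- Disjoint
    rw [Finset.disjoint_left]
    rintro w hw1 hw2
    obtain ⟨p, -, hp⟩ := Finset.mem_image.mp hw1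
    obtain ⟨q, -, hq⟩ := Finset.mem_image.mp hw2
    rw [← hp] at hq
    simp only [Stmt12.cv, Sum.inr.injEq, Prod.mk.injEq, Fin.ext_iff, Fin.val_mk] at hq
    omega
  · -- ι v not blue/red
    intro v
    constructor <;>
      · intro hmem
        obtain ⟨p, -, hp⟩ := Finset.mem_image.mp hmem
        exact absurd hp (by simp [Stmt12.cv])
  · -- (a)
    rintro (v | ⟨a, b, i | j⟩) hV hB hR
    · exact absurd rfl (hV v)
    · constructor
      · exact ⟨Stmt12.cv m a b ⟨0, by omega⟩,
          Finset.mem_image.mpr ⟨(a,b), Finset.mem_univ _, rfl⟩,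
          Stmt12.q_to_c hm a b i _ (Or.inl rfl)⟩
      · exact ⟨Stmt12.cv m a b ⟨m+1, by omega⟩,
          Finset.mem_image.mpr ⟨(a,b), Finset.mem_univ _, rfl⟩,
          Stmt12.q_to_c hm a b i _ (Or.inr rfl)⟩
    · have hj0 : (j:ℕ) ≠ 0 := by
        intro h0
        refine hB (Finset.mem_image.mpr ⟨(a,b), Finset.mem_univ _, ?_⟩)
        have e : (⟨0, by omega⟩ : Fin (m+2)) = j := Fin.ext (by simpa using h0.symm)
        rw [Stmt12.cv, e]
      have hjm : (j:ℕ) ≠ m+1 := by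
        intro h0
        refine hR (Finset.mem_image.mpr ⟨(a,b), Finset.mem_univ _, ?_⟩)
        have e : (⟨m+1, by omega⟩ : Fin (m+2)) = j := Fin.ext (by simpa using h0.symm)
        rw [Stmt12.cv, e]
      have hjlt := j.isLt
      constructor
      · exact ⟨Stmt12.cv m a b ⟨0, by omega⟩,
          Finset.mem_image.mpr ⟨(a,b), Finset.mem_univ _, rfl⟩,
          Stmt12.c_to_c a b j _ (by simp only [Stmt12.dd]; omega)⟩
      · exact ⟨Stmt12.cv m a b ⟨m+1, by omega⟩,
          Finset.mem_image.mpr ⟨(a,b), Finset.mem_univ _, rfl⟩,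
          Stmt12.c_to_c a b j _ (by simp only [Stmt12.dd]; omega)⟩
  · -- (b)
    rintro v w (hw | hw)
    · obtain ⟨p, -, hp⟩ := Finset.mem_image.mp hw
      rw [← hp]
      exact Stmt12.b_helper hm p.1 p.2 0 (Or.inl rfl) _ rfl v
    · obtain ⟨p, -, hp⟩ := Finset.mem_image.mp hw
      rw [← hp]
      exact Stmt12.b_helper hm p.1 p.2 (m+1) (Or.inr rfl) _ rfl v
  · -- (c)
    intro u v hne
    constructor
    · intro hadj
      refine le_antisymm (Stmt12.adj_upper hm hadj) ?_
      exact Stmt12.Pot.lb_V hm u (.inl v)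
        (by simp only [Stmt12.Pot.fV]
            exact le_of_eq (Stmt12.Pot.vbase_of_adj hadj).symm)
    · intro hnadj
      rw [Stmt12.cast_m1]
      exact Stmt12.Pot.lb_V hm u (.inl v)
        (by simp only [Stmt12.Pot.fV]
            exact le_of_eq (Stmt12.Pot.vbase_of_nadj (Ne.symm hne) hnadj).symm)
  · -- (d)
    rintro w1 w2 (h1 | h1) (h2 | h2) hne <;>
      obtain ⟨p, -, hp⟩ := Finset.mem_image.mp h1 <;>
      obtain ⟨q, -, hq⟩ := Finset.mem_image.mp h2 <;>
      rw [← hp, ← hq] at hne ⊢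
    · exact Stmt12.d_helper hm p.1 p.2 q.1 q.2 0 0 (Or.inl rfl) (Or.inl rfl) _ _ rfl rfl hne
    · exact Stmt12.d_helper hm p.1 p.2 q.1 q.2 0 (m+1) (Or.inl rfl) (Or.inr rfl) _ _ rfl rfl hne
    · exact Stmt12.d_helper hm p.1 p.2 q.1 q.2 (m+1) 0 (Or.inr rfl) (Or.inl rfl) _ _ rfl rfl hne
    · exact Stmt12.d_helper hm p.1 p.2 q.1 q.2 (m+1) (m+1) (Or.inr rfl) (Or.inr rfl) _ _ rfl rfl hne
end

section
/- For every finite simple graph G and every integer k ≥ 1, there exist a finite simple graph G' with V(G) ⊆ V(G') and disjoint sets Blue_0, Red_0 ⊆ V(G') \ V(G) such that: (a) every vertex of V(G') \ (V(G) ∪ Blue_0 ∪ Red_0) is at graph distance at most k in G' from some vertex of Blue_0 and at distance at most k from some vertex of Red_0; (b) every vertex of V(G) is at distance at least k+1 in G' from every vertex of Blue_0 ∪ Red_0; (c) for distinct u, v ∈ V(G), dist_{G'}(u,v) = k if uv is an edge of G, and dist_{G'}(u,v) ≥ k+1 otherwise; (d) any two distinct vertices of Blue_0 ∪ Red_0 are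 at distance at least k+1 in G'. -/
universe u

open scoped Classical

namespace Stmt14C

variable {V : Type u} (G : SimpleGraph V) [LinearOrder V] (k : ℕ)

abbrev W' (V : Type u) (k : ℕ) : Type u :=
  V ⊕ (V × V × Fin (3*k+3) × Option (Fin (3*k+3) ⊕ Fin (3*k+3)))

variable (V) in
def fn (n : ℕ) : Fin (3*k+3) := ⟨n % (3*k+3), Nat.mod_lt _ (by omega)⟩

lemma fn_val {k n : ℕ} (h : n < 3*k+3) : (fn k n).val = n := Nat.mod_eq_of_lt h

def pV (x y : V) (a : ℕ) : W' V k := Sum.inr (x, y, fn k a, none)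
def cyv (x y : V) (a j : ℕ) : W' V k := Sum.inr (x, y, fn k a, some (Sum.inl (fn k j)))
def ppv (x y : V) (a i : ℕ) : W' V k := Sum.inr (x, y, fn k a, some (Sum.inr (fn k i)))
def pv (x y : V) (a i : ℕ) : W' V k := if i = 0 then pV k x y a else ppv k x y a i

/-- validity of a path-vertex position -/
def B (x y : V) (a : ℕ) : Prop := x < y ∧ G.Adj x y ∧ 1 ≤ a ∧ a ≤ k - 1

lemma B.k2 {x y : V} {a : ℕ} (h : B G k x y a) : 2 ≤ k := by
  rcases h with ⟨-, -, h1, h2⟩; omega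

def Rel : W' V k → W' V k → Prop := fun w₁ w₂ =>
  (k = 1 ∧ ∃ x y, x < y ∧ G.Adj x y ∧ w₁ = Sum.inl x ∧ w₂ = Sum.inl y) ∨
  (∃ x y, B G k x y 1 ∧ w₁ = Sum.inl x ∧ w₂ = pV k x y 1) ∨
  (∃ x y, B G k x y (k-1) ∧ w₁ = pV k x y (k-1) ∧ w₂ = Sum.inl y) ∨
  (∃ x y a, B G k x y a ∧ B G k x y (a+1) ∧ w₁ = pV k x y a ∧ w₂ = pV k x y (a+1)) ∨
  (∃ x y a i, B G k x y a ∧ i + 2 ≤ k/2 ∧ w₁ = pv k x y a i ∧ w₂ = pv k x y a (i+1)) ∨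
  (∃ x y a, B G k x y a ∧ w₁ = pv k x y a (k/2 - 1) ∧ w₂ = cyv k x y a (k - k/2)) ∨
  (∃ x y a, B G k x y a ∧ w₁ = pv k x y a (k/2 - 1) ∧ w₂ = cyv k x y a (k/2 + 1)) ∨
  (∃ x y a j, B G k x y a ∧ j + 1 ≤ 2*k+1 ∧ w₁ = cyv k x y a j ∧ w₂ = cyv k x y a (j+1)) ∨
  (∃ x y a, B G k x y a ∧ w₁ = cyv k x y a (2*k+1) ∧ w₂ = cyv k x y a 0)

def Gr : SimpleGraph (W' V k) := SimpleGraph.fromRel (Rel G k)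

-- certificates
noncomputable def baseU (u x y : V) (a : ℕ) : ℕ := if x = u then a else if y = u then k - a else k+1

noncomputable def fU (u : V) : W' V k → ℕ
  | Sum.inl v => if v = u then 0 else if G.Adj u v then k else k+1
  | Sum.inr (x, y, a, none) => baseU k u x y a.val
  | Sum.inr (x, y, a, some _) => min (k+1) (baseU k u x y a.val + 1)

noncomputable def hB (x₀ y₀ : V) (a₀ : ℕ) : W' V k → ℕ
  | Sum.inl _ => k+1
  | Sum.inr (x, y, a, c) =>
    if x = x₀ ∧ y = y₀ ∧ a.val = a₀ then
      match c with
      | none => k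
      | some (Sum.inr i) => k - i.val
      | some (Sum.inl j) => min j.val (2*k+2 - j.val)
    else k+1

noncomputable def hR (x₀ y₀ : V) (a₀ : ℕ) : W' V k → ℕ
  | Sum.inl _ => k+1
  | Sum.inr (x, y, a, c) =>
    if x = x₀ ∧ y = y₀ ∧ a.val = a₀ then
      match c with
      | none => k
      | some (Sum.inr i) => k - i.val
      | some (Sum.inl j) => if j.val ≤ k+1 then k+1 - j.val else j.val - (k+1)
    else k+1


/-! machinery -/

lemma lip_adj {f : W' V k → ℕ}
    (hf : ∀ w₁ w₂, Rel G k w₁ w₂ → f w₁ ≤ f w₂ + 1 ∧ f w₂ ≤ f w₁ + 1) :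
    ∀ w₁ w₂, (Gr G k).Adj w₁ w₂ → f w₂ ≤ f w₁ + 1 := by
  intro w₁ w₂ h
  rcases h with ⟨-, h | h⟩
  · exact (hf _ _ h).2
  · exact (hf _ _ h).1

lemma walk_bound {f : W' V k → ℕ}
    (hf : ∀ w₁ w₂, Rel G k w₁ w₂ → f w₁ ≤ f w₂ + 1 ∧ f w₂ ≤ f w₁ + 1) :
    ∀ {w₁ w₂ : W' V k} (p : (Gr G k).Walk w₁ w₂), f w₂ ≤ f w₁ + p.length := by
  intro w₁ w₂ p
  induction p with
  | nil => simp
  | cons h p ih =>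
    have := lip_adj G k hf _ _ h
    simpa [Nat.add_comm, Nat.add_assoc, Nat.add_left_comm] using
      Nat.add_le_add_right (le_trans ih (by omega)) 0

lemma edist_lower {f : W' V k → ℕ}
    (hf : ∀ w₁ w₂, Rel G k w₁ w₂ → f w₁ ≤ f w₂ + 1 ∧ f w₂ ≤ f w₁ + 1)
    (w₁ w₂ : W' V k) (h0 : f w₁ = 0) :
    (f w₂ : ℕ∞) ≤ (Gr G k).edist w₁ w₂ := by
  by_cases hr : (Gr G k).Reachable w₁ w₂
  · obtain ⟨p, hp⟩ := hr.exists_walk_length_eq_edist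
    have hb := walk_bound G k hf p
    rw [h0, Nat.zero_add] at hb
    calc (f w₂ : ℕ∞) ≤ (p.length : ℕ∞) := by exact_mod_cast hb
      _ = _ := hp
  · rw [SimpleGraph.edist_eq_top_of_not_reachable hr]; exact le_top

lemma fn_inj {k a b : ℕ} (ha : a < 3*k+3) (hb : b < 3*k+3) (h : fn k a = fn k b) : a = b := by
  have := congrArg Fin.val h
  rwa [fn_val ha, fn_val hb] at this

lemma adj_edist_le {w₁ w₂ : W' V k} (h : (Gr G k).Adj w₁ w₂) :
    (Gr G k).edist w₁ w₂ ≤ 1 :=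
  le_of_eq (SimpleGraph.edist_eq_one_iff_adj.mpr h)


/-! adjacency constructors -/

section Adjs

variable {G k}

lemma adj_R0 {x y : V} (hk1 : k = 1) (hxy : x < y) (ha : G.Adj x y) :
    (Gr G k).Adj (Sum.inl x) (Sum.inl y) := by
  refine ⟨by simpa using hxy.ne, Or.inl ?_⟩
  exact Or.inl ⟨hk1, x, y, hxy, ha, rfl, rfl⟩

lemma adj_R1 {x y : V} (h : B G k x y 1) :
    (Gr G k).Adj (Sum.inl x) (pV k x y 1) := by
  refine ⟨by simp [pV], Or.inl ?_⟩
  exact Or.inr (Or.inl ⟨x, y, h, rfl, rfl⟩)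

lemma adj_R2 {x y : V} (h : B G k x y (k-1)) :
    (Gr G k).Adj (pV k x y (k-1)) (Sum.inl y) := by
  refine ⟨by simp [pV], Or.inl ?_⟩
  exact Or.inr (Or.inr (Or.inl ⟨x, y, h, rfl, rfl⟩))

lemma adj_R3 {x y : V} {a : ℕ} (h : B G k x y a) (h' : B G k x y (a+1)) :
    (Gr G k).Adj (pV k x y a) (pV k x y (a+1)) := by
  have hle : a + 1 ≤ k - 1 := h'.2.2.2
  refine ⟨?_, Or.inl (Or.inr (Or.inr (Or.inr (Or.inl ⟨x, y, a, h, h', rfl, rfl⟩))))⟩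
  intro hc
  simp only [pV, Sum.inr.injEq, Prod.mk.injEq] at hc
  exact absurd (fn_inj (by omega) (by omega) hc.2.2.1) (by omega)

lemma adj_R4 {x y : V} {a i : ℕ} (h : B G k x y a) (hi : i + 2 ≤ k/2) :
    (Gr G k).Adj (pv k x y a i) (pv k x y a (i+1)) := by
  refine ⟨?_, Or.inl (Or.inr (Or.inr (Or.inr (Or.inr (Or.inl ⟨x, y, a, i, h, hi, rfl, rfl⟩)))))⟩
  rcases Nat.eq_zero_or_pos i with hi0 | hi0
  · subst hi0
    simp [pv, pV, ppv]
  · have : i ≠ 0 := by omega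
    have hik : i + 2 ≤ k / 2 := hi
    intro hc
    simp only [pv, if_neg this, if_neg (by omega : ¬ i + 1 = 0), ppv, Sum.inr.injEq,
      Prod.mk.injEq, Option.some.injEq] at hc
    exact absurd (fn_inj (by omega) (by omega) hc.2.2.2) (by omega)

lemma adj_R5 {x y : V} {a : ℕ} (h : B G k x y a) :
    (Gr G k).Adj (pv k x y a (k/2 - 1)) (cyv k x y a (k - k/2)) := by
  refine ⟨?_, Or.inl (Or.inr (Or.inr (Or.inr (Or.inr (Or.inr (Or.inl ⟨x, y, a, h, rfl, rfl⟩))))))⟩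
  by_cases h0 : k/2 - 1 = 0 <;> simp [pv, h0, pV, ppv, cyv]

lemma adj_R6 {x y : V} {a : ℕ} (h : B G k x y a) :
    (Gr G k).Adj (pv k x y a (k/2 - 1)) (cyv k x y a (k/2 + 1)) := by
  refine ⟨?_, Or.inl (Or.inr (Or.inr (Or.inr (Or.inr (Or.inr (Or.inr (Or.inl
    ⟨x, y, a, h, rfl, rfl⟩)))))))⟩
  by_cases h0 : k/2 - 1 = 0 <;> simp [pv, h0, pV, ppv, cyv]

lemma adj_R7 {x y : V} {a j : ℕ} (h : B G k x y a) (hj : j + 1 ≤ 2*k+1) :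
    (Gr G k).Adj (cyv k x y a j) (cyv k x y a (j+1)) := by
  refine ⟨?_, Or.inl (Or.inr (Or.inr (Or.inr (Or.inr (Or.inr (Or.inr (Or.inr (Or.inl
    ⟨x, y, a, j, h, hj, rfl, rfl⟩))))))))⟩
  intro hc
  simp only [cyv, Sum.inr.injEq, Prod.mk.injEq, Option.some.injEq, Sum.inl.injEq] at hc
  exact absurd (fn_inj (by omega) (by omega) hc.2.2.2) (by omega)

lemma adj_R8 {x y : V} {a : ℕ} (h : B G k x y a) :
    (Gr G k).Adj (cyv k x y a (2*k+1)) (cyv k x y a 0) := by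
  refine ⟨?_, Or.inl (Or.inr (Or.inr (Or.inr (Or.inr (Or.inr (Or.inr (Or.inr (Or.inr
    ⟨x, y, a, h, rfl, rfl⟩))))))))⟩
  intro hc
  simp only [cyv, Sum.inr.injEq, Prod.mk.injEq, Option.some.injEq, Sum.inl.injEq] at hc
  exact absurd (fn_inj (by omega) (by omega) hc.2.2.2) (by omega)

end Adjs


/-! chain upper bounds -/

section Chains

variable {G k} {x y : V} {a : ℕ}

lemma cy_chain (h : B G k x y a) :
    ∀ d i, i + d ≤ 2*k+1 →
      (Gr G k).edist (cyv k x y a i) (cyv k x y a (i+d)) ≤ (d : ℕ∞) := by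
  intro d
  induction d with
  | zero => intro i _; simp
  | succ d ih =>
    intro i hid
    calc (Gr G k).edist (cyv k x y a i) (cyv k x y a (i+(d+1)))
        ≤ (Gr G k).edist (cyv k x y a i) (cyv k x y a (i+d)) +
          (Gr G k).edist (cyv k x y a (i+d)) (cyv k x y a (i+d+1)) :=
          SimpleGraph.edist_triangle
      _ ≤ (d : ℕ∞) + 1 :=
          add_le_add (ih i (by omega)) (adj_edist_le G k (adj_R7 h (by omega)))
      _ = ((d+1 : ℕ) : ℕ∞) := by norm_cast

lemma cy_le (h : B G k x y a) {i j : ℕ} (hij : i ≤ j) (hj : j ≤ 2*k+1) :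
    (Gr G k).edist (cyv k x y a i) (cyv k x y a j) ≤ ((j - i : ℕ) : ℕ∞) := by
  have hj' : j = i + (j - i) := by omega
  rw [hj']
  simpa using cy_chain h (j - i) i (by omega)

lemma pv_chain (h : B G k x y a) :
    ∀ d i, i + d ≤ k/2 - 1 →
      (Gr G k).edist (pv k x y a i) (pv k x y a (i+d)) ≤ (d : ℕ∞) := by
  intro d
  induction d with
  | zero => intro i _; simp
  | succ d ih =>
    intro i hid
    calc (Gr G k).edist (pv k x y a i) (pv k x y a (i+(d+1)))
        ≤ (Gr G k).edist (pv k x y a i) (pv k x y a (i+d)) +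
          (Gr G k).edist (pv k x y a (i+d)) (pv k x y a (i+d+1)) :=
          SimpleGraph.edist_triangle
      _ ≤ (d : ℕ∞) + 1 :=
          add_le_add (ih i (by omega)) (adj_edist_le G k (adj_R4 h (by omega)))
      _ = ((d+1 : ℕ) : ℕ∞) := by norm_cast

lemma pv_le (h : B G k x y a) {i : ℕ} (hi : i ≤ k/2 - 1) :
    (Gr G k).edist (pv k x y a i) (pv k x y a (k/2 - 1)) ≤ ((k/2 - 1 - i : ℕ) : ℕ∞) := by
  have hj' : k/2 - 1 = i + (k/2 - 1 - i) := by omega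
  calc (Gr G k).edist (pv k x y a i) (pv k x y a (k/2 - 1))
      = (Gr G k).edist (pv k x y a i) (pv k x y a (i + (k/2 - 1 - i))) := by rw [← hj']
    _ ≤ _ := pv_chain h _ i (by omega)

lemma pV_chain (hxy : x < y) (hadj : G.Adj x y) :
    ∀ d a, 1 ≤ a → a + d ≤ k - 1 →
      (Gr G k).edist (pV k x y a) (pV k x y (a+d)) ≤ (d : ℕ∞) := by
  intro d
  induction d with
  | zero => intro a _ _; simp
  | succ d ih =>
    intro a ha had
    calc (Gr G k).edist (pV k x y a) (pV k x y (a+(d+1)))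
        ≤ (Gr G k).edist (pV k x y a) (pV k x y (a+d)) +
          (Gr G k).edist (pV k x y (a+d)) (pV k x y (a+d+1)) :=
          SimpleGraph.edist_triangle
      _ ≤ (d : ℕ∞) + 1 :=
          add_le_add (ih a ha (by omega))
            (adj_edist_le G k (adj_R3 ⟨hxy, hadj, by omega, by omega⟩
              ⟨hxy, hadj, by omega, by omega⟩))
      _ = ((d+1 : ℕ) : ℕ∞) := by norm_cast

lemma pv_to_blue (h : B G k x y a) {i : ℕ} (hi : i ≤ k/2 - 1) :
    (Gr G k).edist (pv k x y a i) (cyv k x y a 0) ≤ ((k - i : ℕ) : ℕ∞) := by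
  have hk2 : 2 ≤ k := h.k2
  have ht1 : 1 ≤ k/2 := by omega
  calc (Gr G k).edist (pv k x y a i) (cyv k x y a 0)
      ≤ (Gr G k).edist (pv k x y a i) (pv k x y a (k/2 - 1)) +
        (Gr G k).edist (pv k x y a (k/2 - 1)) (cyv k x y a (k - k/2)) +
        (Gr G k).edist (cyv k x y a (k - k/2)) (cyv k x y a 0) := by
        refine le_trans (SimpleGraph.edist_triangle (v := cyv k x y a (k - k/2))) ?_
        exact add_le_add_left (SimpleGraph.edist_triangle (v := pv k x y a (k/2 - 1))) _
    _ ≤ ((k/2 - 1 - i : ℕ) : ℕ∞) + 1 + ((k - k/2 - 0 : ℕ) : ℕ∞) := by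
        refine add_le_add (add_le_add (pv_le h hi) (adj_edist_le G k (adj_R5 h))) ?_
        rw [SimpleGraph.edist_comm]
        exact cy_le h (by omega) (by omega)
    _ = ((k - i : ℕ) : ℕ∞) := by
        rw [show ((1 : ℕ∞)) = ((1 : ℕ) : ℕ∞) by norm_cast, ← Nat.cast_add, ← Nat.cast_add]
        congr 1
        omega

lemma pv_to_red (h : B G k x y a) {i : ℕ} (hi : i ≤ k/2 - 1) :
    (Gr G k).edist (pv k x y a i) (cyv k x y a (k+1)) ≤ ((k - i : ℕ) : ℕ∞) := by
  have hk2 : 2 ≤ k := h.k2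
  have ht1 : 1 ≤ k/2 := by omega
  calc (Gr G k).edist (pv k x y a i) (cyv k x y a (k+1))
      ≤ (Gr G k).edist (pv k x y a i) (pv k x y a (k/2 - 1)) +
        (Gr G k).edist (pv k x y a (k/2 - 1)) (cyv k x y a (k/2 + 1)) +
        (Gr G k).edist (cyv k x y a (k/2 + 1)) (cyv k x y a (k+1)) := by
        refine le_trans (SimpleGraph.edist_triangle (v := cyv k x y a (k/2 + 1))) ?_
        exact add_le_add_left (SimpleGraph.edist_triangle (v := pv k x y a (k/2 - 1))) _
    _ ≤ ((k/2 - 1 - i : ℕ) : ℕ∞) + 1 + ((k + 1 - (k/2 + 1) : ℕ) : ℕ∞) := by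
        refine add_le_add (add_le_add (pv_le h hi) (adj_edist_le G k (adj_R6 h))) ?_
        exact cy_le h (by omega) (by omega)
    _ = ((k - i : ℕ) : ℕ∞) := by
        rw [show ((1 : ℕ∞)) = ((1 : ℕ) : ℕ∞) by norm_cast, ← Nat.cast_add, ← Nat.cast_add]
        congr 1
        omega

lemma cy_to_blue (h : B G k x y a) {j : ℕ} (hj : j ≤ 2*k+1) (hj1 : j ≠ k+1) :
    (Gr G k).edist (cyv k x y a j) (cyv k x y a 0) ≤ (k : ℕ∞) := by
  have hk2 : 2 ≤ k := h.k2
  rcases le_or_gt j k with hle | hlt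
  · rw [SimpleGraph.edist_comm]
    calc (Gr G k).edist (cyv k x y a 0) (cyv k x y a j) ≤ ((j - 0 : ℕ) : ℕ∞) :=
          cy_le h (by omega) (by omega)
      _ ≤ (k : ℕ∞) := by exact_mod_cast Nat.le_of_lt_succ (by omega)
  · have hj2 : k + 2 ≤ j := by omega
    calc (Gr G k).edist (cyv k x y a j) (cyv k x y a 0)
        ≤ (Gr G k).edist (cyv k x y a j) (cyv k x y a (2*k+1)) +
          (Gr G k).edist (cyv k x y a (2*k+1)) (cyv k x y a 0) :=
          SimpleGraph.edist_triangle
      _ ≤ ((2*k+1 - j : ℕ) : ℕ∞) + 1 :=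
          add_le_add (cy_le h (by omega) (by omega)) (adj_edist_le G k (adj_R8 h))
      _ ≤ (k : ℕ∞) := by
          rw [show ((1 : ℕ∞)) = ((1 : ℕ) : ℕ∞) by norm_cast, ← Nat.cast_add]
          exact_mod_cast (by omega : 2*k+1 - j + 1 ≤ k)

lemma cy_to_red (h : B G k x y a) {j : ℕ} (hj : j ≤ 2*k+1) (hj0 : j ≠ 0) :
    (Gr G k).edist (cyv k x y a j) (cyv k x y a (k+1)) ≤ (k : ℕ∞) := by
  rcases le_or_gt j (k+1) with hle | hlt
  · calc (Gr G k).edist (cyv k x y a j) (cyv k x y a (k+1)) ≤ ((k+1-j : ℕ) : ℕ∞) :=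
        cy_le h (by omega) (by omega)
      _ ≤ (k : ℕ∞) := by exact_mod_cast (by omega : k + 1 - j ≤ k)
  · rw [SimpleGraph.edist_comm]
    calc (Gr G k).edist (cyv k x y a (k+1)) (cyv k x y a j) ≤ ((j - (k+1) : ℕ) : ℕ∞) :=
        cy_le h (by omega) (by omega)
      _ ≤ (k : ℕ∞) := by exact_mod_cast (by omega : j - (k+1) ≤ k)

lemma inl_to_inl (hxy : x < y) (hadj : G.Adj x y) (hk2 : 2 ≤ k) :
    (Gr G k).edist (Sum.inl x : W' V k) (Sum.inl y) ≤ (k : ℕ∞) := by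
  have hB1 : B G k x y 1 := ⟨hxy, hadj, le_refl _, by omega⟩
  have hBk : B G k x y (k-1) := ⟨hxy, hadj, by omega, le_refl _⟩
  calc (Gr G k).edist (Sum.inl x : W' V k) (Sum.inl y)
      ≤ (Gr G k).edist (Sum.inl x : W' V k) (pV k x y 1) +
        (Gr G k).edist (pV k x y 1) (pV k x y (1 + (k-2))) +
        (Gr G k).edist (pV k x y (1 + (k-2))) (Sum.inl y) := by
        refine le_trans (SimpleGraph.edist_triangle (v := pV k x y (1 + (k-2)))) ?_
        exact add_le_add_left (SimpleGraph.edist_triangle (v := pV k x y 1)) _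
    _ ≤ 1 + ((k-2 : ℕ) : ℕ∞) + 1 := by
        refine add_le_add (add_le_add (adj_edist_le G k (adj_R1 hB1))
          (pV_chain hxy hadj (k-2) 1 (le_refl _) (by omega))) ?_
        have : 1 + (k-2) = k - 1 := by omega
        rw [this]
        exact adj_edist_le G k (adj_R2 hBk)
    _ = (k : ℕ∞) := by
        rw [show ((1 : ℕ∞)) = ((1 : ℕ) : ℕ∞) by norm_cast, ← Nat.cast_add, ← Nat.cast_add]
        norm_cast
        omega

end Chains


/-! certificate evaluations -/

section Evals

variable {G k}

lemma fU_inl (u v : V) :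
    fU G k u (Sum.inl v : W' V k) = if v = u then 0 else if G.Adj u v then k else k+1 := rfl

lemma fU_pV (u x y : V) {a : ℕ} (ha : a < 3*k+3) :
    fU G k u (pV k x y a) = baseU k u x y a := by
  simp [fU, pV, fn_val ha]

lemma fU_cyv (u x y : V) {a : ℕ} (ha : a < 3*k+3) (j : ℕ) :
    fU G k u (cyv k x y a j) = min (k+1) (baseU k u x y a + 1) := by
  simp [fU, cyv, fn_val ha]

lemma fU_ppv (u x y : V) {a : ℕ} (ha : a < 3*k+3) (i : ℕ) :
    fU G k u (ppv k x y a i) = min (k+1) (baseU k u x y a + 1) := by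
  simp [fU, ppv, fn_val ha]

lemma hB_inl (x₀ y₀ : V) (a₀ : ℕ) (v : V) :
    hB k x₀ y₀ a₀ (Sum.inl v : W' V k) = k+1 := rfl

lemma hB_pV (x₀ y₀ : V) (a₀ : ℕ) (x y : V) {a : ℕ} (ha : a < 3*k+3) :
    hB k x₀ y₀ a₀ (pV k x y a) = if x = x₀ ∧ y = y₀ ∧ a = a₀ then k else k+1 := by
  simp only [hB, pV, fn_val ha]

lemma hB_cyv (x₀ y₀ : V) (a₀ : ℕ) (x y : V) {a j : ℕ} (ha : a < 3*k+3) (hj : j < 3*k+3) :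
    hB k x₀ y₀ a₀ (cyv k x y a j) =
      if x = x₀ ∧ y = y₀ ∧ a = a₀ then min j (2*k+2 - j) else k+1 := by
  simp only [hB, cyv, fn_val ha, fn_val hj]

lemma hB_ppv (x₀ y₀ : V) (a₀ : ℕ) (x y : V) {a i : ℕ} (ha : a < 3*k+3) (hi : i < 3*k+3) :
    hB k x₀ y₀ a₀ (ppv k x y a i) =
      if x = x₀ ∧ y = y₀ ∧ a = a₀ then k - i else k+1 := by
  simp only [hB, ppv, fn_val ha, fn_val hi]

lemma hR_inl (x₀ y₀ : V) (a₀ : ℕ) (v : V) :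
    hR k x₀ y₀ a₀ (Sum.inl v : W' V k) = k+1 := rfl

lemma hR_pV (x₀ y₀ : V) (a₀ : ℕ) (x y : V) {a : ℕ} (ha : a < 3*k+3) :
    hR k x₀ y₀ a₀ (pV k x y a) = if x = x₀ ∧ y = y₀ ∧ a = a₀ then k else k+1 := by
  simp only [hR, pV, fn_val ha]

lemma hR_cyv (x₀ y₀ : V) (a₀ : ℕ) (x y : V) {a j : ℕ} (ha : a < 3*k+3) (hj : j < 3*k+3) :
    hR k x₀ y₀ a₀ (cyv k x y a j) =
      if x = x₀ ∧ y = y₀ ∧ a = a₀ then (if j ≤ k+1 then k+1 - j else j - (k+1)) else k+1 := by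
  simp only [hR, cyv, fn_val ha, fn_val hj]

lemma hR_ppv (x₀ y₀ : V) (a₀ : ℕ) (x y : V) {a i : ℕ} (ha : a < 3*k+3) (hi : i < 3*k+3) :
    hR k x₀ y₀ a₀ (ppv k x y a i) =
      if x = x₀ ∧ y = y₀ ∧ a = a₀ then k - i else k+1 := by
  simp only [hR, ppv, fn_val ha, fn_val hi]

end Evals


/-! Lipschitz property of the certificates -/

lemma lip_fU (u : V) :
    ∀ w₁ w₂, Rel G k w₁ w₂ → fU G k u w₁ ≤ fU G k u w₂ + 1 ∧ fU G k u w₂ ≤ fU G k u w₁ + 1 := by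
  intro w₁ w₂ h
  rcases h with ⟨hk1, x, y, hxy, hadj, rfl, rfl⟩ |
    ⟨x, y, ⟨hxy, hadj, h1, h2⟩, rfl, rfl⟩ |
    ⟨x, y, ⟨hxy, hadj, h1, h2⟩, rfl, rfl⟩ |
    ⟨x, y, a, ⟨hxy, hadj, h1, h2⟩, ⟨-, -, h3, h4⟩, rfl, rfl⟩ |
    ⟨x, y, a, i, ⟨hxy, hadj, h1, h2⟩, hi, rfl, rfl⟩ |
    ⟨x, y, a, ⟨hxy, hadj, h1, h2⟩, rfl, rfl⟩ |
    ⟨x, y, a, ⟨hxy, hadj, h1, h2⟩, rfl, rfl⟩ |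
    ⟨x, y, a, j, ⟨hxy, hadj, h1, h2⟩, hj, rfl, rfl⟩ |
    ⟨x, y, a, ⟨hxy, hadj, h1, h2⟩, rfl, rfl⟩
  -- R0 : two original vertices, k = 1
  · rw [fU_inl, fU_inl]
    split_ifs <;> constructor <;>
      first
        | omega
        | (exfalso; subst_vars;
            first
              | exact absurd hadj (by assumption)
              | exact absurd hadj.symm (by assumption)
              | exact absurd hxy (lt_irrefl _))
  -- R1 : inl x -- pV x y 1
  · rw [fU_inl, fU_pV u x y (by omega)]
    unfold baseU
    split_ifs <;> constructor <;>
      first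
        | omega
        | (exfalso; subst_vars;
            first
              | exact absurd hadj (by assumption)
              | exact absurd hadj.symm (by assumption)
              | exact absurd hxy (lt_irrefl _))
  -- R2 : pV x y (k-1) -- inl y
  · rw [fU_inl, fU_pV u x y (by omega)]
    unfold baseU
    split_ifs <;> constructor <;>
      first
        | omega
        | (exfalso; subst_vars;
            first
              | exact absurd hadj (by assumption)
              | exact absurd hadj.symm (by assumption)
              | exact absurd hxy (lt_irrefl _))
  -- R3 : pV a -- pV (a+1)
  · rw [fU_pV u x y (by omega), fU_pV u x y (by omega)]
    unfold baseU
    split_ifs <;> constructor <;> omega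
  -- R4 : pv i -- pv (i+1)
  · rcases Nat.eq_zero_or_pos i with rfl | hi0
    · rw [show pv k x y a 0 = pV k x y a from if_pos rfl,
        show pv k x y a 1 = ppv k x y a 1 from if_neg one_ne_zero,
        fU_pV u x y (by omega), fU_ppv u x y (by omega)]
      unfold baseU
      split_ifs <;> constructor <;> omega
    · rw [show pv k x y a i = ppv k x y a i from if_neg (by omega),
        show pv k x y a (i+1) = ppv k x y a (i+1) from if_neg (by omega),
        fU_ppv u x y (by omega), fU_ppv u x y (by omega)]
      constructor <;> omega
  -- R5 : pv (k/2-1) -- cyv (k - k/2)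
  · rcases Nat.eq_zero_or_pos (k/2 - 1) with h0 | h0
    · rw [h0, show pv k x y a 0 = pV k x y a from if_pos rfl,
        fU_pV u x y (by omega), fU_cyv u x y (by omega)]
      unfold baseU
      split_ifs <;> constructor <;> omega
    · rw [show pv k x y a (k/2-1) = ppv k x y a (k/2-1) from if_neg (by omega),
        fU_ppv u x y (by omega), fU_cyv u x y (by omega)]
      constructor <;> omega
  -- R6 : pv (k/2-1) -- cyv (k/2+1)
  · rcases Nat.eq_zero_or_pos (k/2 - 1) with h0 | h0
    · rw [h0, show pv k x y a 0 = pV k x y a from if_pos rfl,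
        fU_pV u x y (by omega), fU_cyv u x y (by omega)]
      unfold baseU
      split_ifs <;> constructor <;> omega
    · rw [show pv k x y a (k/2-1) = ppv k x y a (k/2-1) from if_neg (by omega),
        fU_ppv u x y (by omega), fU_cyv u x y (by omega)]
      constructor <;> omega
  -- R7 : cyv j -- cyv (j+1)
  · rw [fU_cyv u x y (by omega), fU_cyv u x y (by omega)]
    constructor <;> omega
  -- R8 : cyv (2k+1) -- cyv 0
  · rw [fU_cyv u x y (by omega), fU_cyv u x y (by omega)]
    constructor <;> omega


lemma lip_hB (x₀ y₀ : V) (a₀ : ℕ) :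
    ∀ w₁ w₂, Rel G k w₁ w₂ →
      hB k x₀ y₀ a₀ w₁ ≤ hB k x₀ y₀ a₀ w₂ + 1 ∧ hB k x₀ y₀ a₀ w₂ ≤ hB k x₀ y₀ a₀ w₁ + 1 := by
  intro w₁ w₂ h
  rcases h with ⟨hk1, x, y, hxy, hadj, rfl, rfl⟩ |
    ⟨x, y, ⟨hxy, hadj, h1, h2⟩, rfl, rfl⟩ |
    ⟨x, y, ⟨hxy, hadj, h1, h2⟩, rfl, rfl⟩ |
    ⟨x, y, a, ⟨hxy, hadj, h1, h2⟩, ⟨-, -, h3, h4⟩, rfl, rfl⟩ |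
    ⟨x, y, a, i, ⟨hxy, hadj, h1, h2⟩, hi, rfl, rfl⟩ |
    ⟨x, y, a, ⟨hxy, hadj, h1, h2⟩, rfl, rfl⟩ |
    ⟨x, y, a, ⟨hxy, hadj, h1, h2⟩, rfl, rfl⟩ |
    ⟨x, y, a, j, ⟨hxy, hadj, h1, h2⟩, hj, rfl, rfl⟩ |
    ⟨x, y, a, ⟨hxy, hadj, h1, h2⟩, rfl, rfl⟩
  · rw [hB_inl, hB_inl]
    constructor <;> omega
  · rw [hB_inl, hB_pV x₀ y₀ a₀ x y (by omega)]
    split_ifs <;> constructor <;> omega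
  · rw [hB_inl, hB_pV x₀ y₀ a₀ x y (by omega)]
    split_ifs <;> constructor <;> omega
  · rw [hB_pV x₀ y₀ a₀ x y (by omega), hB_pV x₀ y₀ a₀ x y (by omega)]
    split_ifs <;> constructor <;> omega
  · rcases Nat.eq_zero_or_pos i with rfl | hi0
    · rw [show pv k x y a 0 = pV k x y a from if_pos rfl,
        show pv k x y a 1 = ppv k x y a 1 from if_neg one_ne_zero,
        hB_pV x₀ y₀ a₀ x y (by omega), hB_ppv x₀ y₀ a₀ x y (by omega) (by omega)]
      split_ifs <;> constructor <;> omega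
    · rw [show pv k x y a i = ppv k x y a i from if_neg (by omega),
        show pv k x y a (i+1) = ppv k x y a (i+1) from if_neg (by omega),
        hB_ppv x₀ y₀ a₀ x y (by omega) (by omega),
        hB_ppv x₀ y₀ a₀ x y (by omega) (by omega)]
      split_ifs <;> constructor <;> omega
  · rcases Nat.eq_zero_or_pos (k/2 - 1) with h0 | h0
    · rw [h0, show pv k x y a 0 = pV k x y a from if_pos rfl,
        hB_pV x₀ y₀ a₀ x y (by omega), hB_cyv x₀ y₀ a₀ x y (by omega) (by omega)]
      split_ifs <;> constructor <;> omega
    · rw [show pv k x y a (k/2-1) = ppv k x y a (k/2-1) from if_neg (by omega),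
        hB_ppv x₀ y₀ a₀ x y (by omega) (by omega),
        hB_cyv x₀ y₀ a₀ x y (by omega) (by omega)]
      split_ifs <;> constructor <;> omega
  · rcases Nat.eq_zero_or_pos (k/2 - 1) with h0 | h0
    · rw [h0, show pv k x y a 0 = pV k x y a from if_pos rfl,
        hB_pV x₀ y₀ a₀ x y (by omega), hB_cyv x₀ y₀ a₀ x y (by omega) (by omega)]
      split_ifs <;> constructor <;> omega
    · rw [show pv k x y a (k/2-1) = ppv k x y a (k/2-1) from if_neg (by omega),
        hB_ppv x₀ y₀ a₀ x y (by omega) (by omega),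
        hB_cyv x₀ y₀ a₀ x y (by omega) (by omega)]
      split_ifs <;> constructor <;> omega
  · rw [hB_cyv x₀ y₀ a₀ x y (by omega) (by omega), hB_cyv x₀ y₀ a₀ x y (by omega) (by omega)]
    split_ifs <;> constructor <;> omega
  · rw [hB_cyv x₀ y₀ a₀ x y (by omega) (by omega), hB_cyv x₀ y₀ a₀ x y (by omega) (by omega)]
    split_ifs <;> constructor <;> omega

lemma lip_hR (x₀ y₀ : V) (a₀ : ℕ) :
    ∀ w₁ w₂, Rel G k w₁ w₂ →
      hR k x₀ y₀ a₀ w₁ ≤ hR k x₀ y₀ a₀ w₂ + 1 ∧ hR k x₀ y₀ a₀ w₂ ≤ hR k x₀ y₀ a₀ w₁ + 1 := by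
  intro w₁ w₂ h
  rcases h with ⟨hk1, x, y, hxy, hadj, rfl, rfl⟩ |
    ⟨x, y, ⟨hxy, hadj, h1, h2⟩, rfl, rfl⟩ |
    ⟨x, y, ⟨hxy, hadj, h1, h2⟩, rfl, rfl⟩ |
    ⟨x, y, a, ⟨hxy, hadj, h1, h2⟩, ⟨-, -, h3, h4⟩, rfl, rfl⟩ |
    ⟨x, y, a, i, ⟨hxy, hadj, h1, h2⟩, hi, rfl, rfl⟩ |
    ⟨x, y, a, ⟨hxy, hadj, h1, h2⟩, rfl, rfl⟩ |
    ⟨x, y, a, ⟨hxy, hadj, h1, h2⟩, rfl, rfl⟩ |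
    ⟨x, y, a, j, ⟨hxy, hadj, h1, h2⟩, hj, rfl, rfl⟩ |
    ⟨x, y, a, ⟨hxy, hadj, h1, h2⟩, rfl, rfl⟩
  · rw [hR_inl, hR_inl]
    constructor <;> omega
  · rw [hR_inl, hR_pV x₀ y₀ a₀ x y (by omega)]
    split_ifs <;> constructor <;> omega
  · rw [hR_inl, hR_pV x₀ y₀ a₀ x y (by omega)]
    split_ifs <;> constructor <;> omega
  · rw [hR_pV x₀ y₀ a₀ x y (by omega), hR_pV x₀ y₀ a₀ x y (by omega)]
    split_ifs <;> constructor <;> omega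
  · rcases Nat.eq_zero_or_pos i with rfl | hi0
    · rw [show pv k x y a 0 = pV k x y a from if_pos rfl,
        show pv k x y a 1 = ppv k x y a 1 from if_neg one_ne_zero,
        hR_pV x₀ y₀ a₀ x y (by omega), hR_ppv x₀ y₀ a₀ x y (by omega) (by omega)]
      split_ifs <;> constructor <;> omega
    · rw [show pv k x y a i = ppv k x y a i from if_neg (by omega),
        show pv k x y a (i+1) = ppv k x y a (i+1) from if_neg (by omega),
        hR_ppv x₀ y₀ a₀ x y (by omega) (by omega),
        hR_ppv x₀ y₀ a₀ x y (by omega) (by omega)]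
      split_ifs <;> constructor <;> omega
  · rcases Nat.eq_zero_or_pos (k/2 - 1) with h0 | h0
    · rw [h0, show pv k x y a 0 = pV k x y a from if_pos rfl,
        hR_pV x₀ y₀ a₀ x y (by omega), hR_cyv x₀ y₀ a₀ x y (by omega) (by omega)]
      split_ifs <;> constructor <;> omega
    · rw [show pv k x y a (k/2-1) = ppv k x y a (k/2-1) from if_neg (by omega),
        hR_ppv x₀ y₀ a₀ x y (by omega) (by omega),
        hR_cyv x₀ y₀ a₀ x y (by omega) (by omega)]
      split_ifs <;> constructor <;> omega
  · rcases Nat.eq_zero_or_pos (k/2 - 1) with h0 | h0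
    · rw [h0, show pv k x y a 0 = pV k x y a from if_pos rfl,
        hR_pV x₀ y₀ a₀ x y (by omega), hR_cyv x₀ y₀ a₀ x y (by omega) (by omega)]
      split_ifs <;> constructor <;> omega
    · rw [show pv k x y a (k/2-1) = ppv k x y a (k/2-1) from if_neg (by omega),
        hR_ppv x₀ y₀ a₀ x y (by omega) (by omega),
        hR_cyv x₀ y₀ a₀ x y (by omega) (by omega)]
      split_ifs <;> constructor <;> omega
  · rw [hR_cyv x₀ y₀ a₀ x y (by omega) (by omega), hR_cyv x₀ y₀ a₀ x y (by omega) (by omega)]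
    split_ifs <;> constructor <;> omega
  · rw [hR_cyv x₀ y₀ a₀ x y (by omega) (by omega), hR_cyv x₀ y₀ a₀ x y (by omega) (by omega)]
    split_ifs <;> constructor <;> omega


/-! colours, junk, realness -/

def isReal : W' V k → Prop := fun w =>
  (∃ x y a, B G k x y a ∧ w = pV k x y a) ∨
  (∃ x y a j, B G k x y a ∧ j ≤ 2*k+1 ∧ w = cyv k x y a j) ∨
  (∃ x y a i, B G k x y a ∧ 1 ≤ i ∧ i ≤ k/2 - 1 ∧ w = ppv k x y a i)

def isBlue : W' V k → Prop := fun w => ∃ x y a, B G k x y a ∧ w = cyv k x y a 0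

def isRed : W' V k → Prop := fun w => ∃ x y a, B G k x y a ∧ w = cyv k x y a (k+1)

def isJunk : W' V k → Prop := fun w => (∃ q, w = Sum.inr q) ∧ ¬ isReal G k w

variable [Fintype V]

noncomputable def Blue0 : Finset (W' V k) := Finset.univ.filter (isBlue G k)

noncomputable def Red0 : Finset (W' V k) :=
  Finset.univ.filter (fun w => isRed G k w ∨ isJunk G k w)

variable {G k}

lemma mem_Blue0 {w : W' V k} : w ∈ Blue0 G k ↔ isBlue G k w := by
  simp [Blue0]

lemma mem_Red0 {w : W' V k} : w ∈ Red0 G k ↔ isRed G k w ∨ isJunk G k w := by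
  simp [Red0]

lemma pv_real {x y : V} {a i : ℕ} (h : B G k x y a) (hi : i ≤ k/2 - 1) :
    isReal G k (pv k x y a i) := by
  rcases Nat.eq_zero_or_pos i with rfl | h0
  · exact Or.inl ⟨x, y, a, h, (if_pos rfl)⟩
  · exact Or.inr (Or.inr ⟨x, y, a, i, h, h0, hi, if_neg (by omega)⟩)

lemma real_of_rel {w₁ w₂ : W' V k} (h : Rel G k w₁ w₂) :
    ((∃ v, w₁ = Sum.inl v) ∨ isReal G k w₁) ∧ ((∃ v, w₂ = Sum.inl v) ∨ isReal G k w₂) := by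
  rcases h with ⟨hk1, x, y, hxy, hadj, rfl, rfl⟩ |
    ⟨x, y, hb, rfl, rfl⟩ |
    ⟨x, y, hb, rfl, rfl⟩ |
    ⟨x, y, a, hb, hb', rfl, rfl⟩ |
    ⟨x, y, a, i, hb, hi, rfl, rfl⟩ |
    ⟨x, y, a, hb, rfl, rfl⟩ |
    ⟨x, y, a, hb, rfl, rfl⟩ |
    ⟨x, y, a, j, hb, hj, rfl, rfl⟩ |
    ⟨x, y, a, hb, rfl, rfl⟩
  · exact ⟨Or.inl ⟨x, rfl⟩, Or.inl ⟨y, rfl⟩⟩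
  · exact ⟨Or.inl ⟨x, rfl⟩, Or.inr (Or.inl ⟨x, y, 1, hb, rfl⟩)⟩
  · exact ⟨Or.inr (Or.inl ⟨x, y, k-1, hb, rfl⟩), Or.inl ⟨y, rfl⟩⟩
  · exact ⟨Or.inr (Or.inl ⟨x, y, a, hb, rfl⟩), Or.inr (Or.inl ⟨x, y, a+1, hb', rfl⟩)⟩
  · exact ⟨Or.inr (pv_real hb (by omega)), Or.inr (pv_real hb (by omega))⟩
  · exact ⟨Or.inr (pv_real hb (by omega)),
      Or.inr (Or.inr (Or.inl ⟨x, y, a, k - k/2, hb, by omega, rfl⟩))⟩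
  · exact ⟨Or.inr (pv_real hb (by omega)),
      Or.inr (Or.inr (Or.inl ⟨x, y, a, k/2 + 1, hb, by omega, rfl⟩))⟩
  · exact ⟨Or.inr (Or.inr (Or.inl ⟨x, y, a, j, hb, by omega, rfl⟩)),
      Or.inr (Or.inr (Or.inl ⟨x, y, a, j+1, hb, by omega, rfl⟩))⟩
  · exact ⟨Or.inr (Or.inr (Or.inl ⟨x, y, a, 2*k+1, hb, by omega, rfl⟩)),
      Or.inr (Or.inr (Or.inl ⟨x, y, a, 0, hb, by omega, rfl⟩))⟩

lemma junk_edist_top {w x : W' V k} (hj : isJunk G k w) (hne : x ≠ w) :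
    (Gr G k).edist x w = ⊤ := by
  apply SimpleGraph.edist_eq_top_of_not_reachable
  intro hr
  obtain ⟨p⟩ := hr.symm
  cases p with
  | nil => exact hne rfl
  | cons h q =>
    rcases h with ⟨-, hrel | hrel⟩
    · rcases (real_of_rel hrel).1 with ⟨v, hv⟩ | hreal
      · obtain ⟨q', hq'⟩ := hj.1
        rw [hq'] at hv
        exact absurd hv (by simp)
      · exact hj.2 hreal
    · rcases (real_of_rel hrel).2 with ⟨v, hv⟩ | hreal
      · obtain ⟨q', hq'⟩ := hj.1
        rw [hq'] at hv
        exact absurd hv (by simp)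
      · exact hj.2 hreal

lemma cyv_inj {x y x' y' : V} {a j a' j' : ℕ} (ha : a < 3*k+3) (ha' : a' < 3*k+3)
    (hj : j < 3*k+3) (hj' : j' < 3*k+3) (h : cyv k x y a j = cyv k x' y' a' j') :
    x = x' ∧ y = y' ∧ a = a' ∧ j = j' := by
  simp only [cyv, Sum.inr.injEq, Prod.mk.injEq, Option.some.injEq, Sum.inl.injEq] at h
  exact ⟨h.1, h.2.1, fn_inj ha ha' h.2.2.1, fn_inj hj hj' h.2.2.2⟩


/-! assembly -/

lemma cast_succ (k : ℕ) : ((k+1 : ℕ) : ℕ∞) = (k : ℕ∞) + 1 := by push_cast; rfl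

lemma color_edist [Fintype V] {x y x' y' : V} {a a' j j' : ℕ}
    (hb : B G k x y a) (hb' : B G k x' y' a')
    (hj : j = 0 ∨ j = k+1) (hj' : j' = 0 ∨ j' = k+1)
    (hne : cyv k x y a j ≠ cyv k x' y' a' j') :
    ((k+1 : ℕ) : ℕ∞) ≤ (Gr G k).edist (cyv k x y a j) (cyv k x' y' a' j') := by
  have ha : a ≤ k - 1 := hb.2.2.2
  have ha' : a' ≤ k - 1 := hb'.2.2.2
  have hk2 : 2 ≤ k := hb.k2
  rcases hj with rfl | rfl
  · have h0 : hB k x y a (cyv k x y a 0) = 0 := by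
      rw [hB_cyv x y a x y (by omega) (by omega), if_pos ⟨rfl, rfl, rfl⟩]
      omega
    have hval : hB k x y a (cyv k x' y' a' j') = k + 1 := by
      rw [hB_cyv x y a x' y' (by omega) (by omega)]
      by_cases hm : x' = x ∧ y' = y ∧ a' = a
      · obtain ⟨rfl, rfl, rfl⟩ := hm
        rcases hj' with rfl | rfl
        · exact absurd rfl hne
        · rw [if_pos ⟨rfl, rfl, rfl⟩]; omega
      · rw [if_neg hm]
    calc ((k+1 : ℕ) : ℕ∞) = (hB k x y a (cyv k x' y' a' j') : ℕ∞) := by rw [hval]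
      _ ≤ _ := edist_lower G k (lip_hB G k x y a) _ _ h0
  · have h0 : hR k x y a (cyv k x y a (k+1)) = 0 := by
      rw [hR_cyv x y a x y (by omega) (by omega), if_pos ⟨rfl, rfl, rfl⟩]
      rw [if_pos (le_refl _)]
      omega
    have hval : hR k x y a (cyv k x' y' a' j') = k + 1 := by
      rw [hR_cyv x y a x' y' (by omega) (by omega)]
      by_cases hm : x' = x ∧ y' = y ∧ a' = a
      · obtain ⟨rfl, rfl, rfl⟩ := hm
        rcases hj' with rfl | rfl
        · rw [if_pos ⟨rfl, rfl, rfl⟩, if_pos (Nat.zero_le _)]; omega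
        · exact absurd rfl hne
      · rw [if_neg hm]
    calc ((k+1 : ℕ) : ℕ∞) = (hR k x y a (cyv k x' y' a' j') : ℕ∞) := by rw [hval]
      _ ≤ _ := edist_lower G k (lip_hR G k x y a) _ _ h0


theorem main {V : Type u} [Fintype V] [LinearOrder V] (G : SimpleGraph V) (k : ℕ) (hk : 1 ≤ k) :
    ∃ (W : Type u) (_ : Fintype W) (G' : SimpleGraph W) (ι : V ↪ W)
      (Blue0 Red0 : Finset W),
      Disjoint Blue0 Red0 ∧ (∀ v : V, ι v ∉ Blue0 ∧ ι v ∉ Red0) ∧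
      (∀ w : W, (∀ v : V, ι v ≠ w) → w ∉ Blue0 → w ∉ Red0 →
        (∃ b ∈ Blue0, G'.edist w b ≤ (k : ℕ∞)) ∧ (∃ r ∈ Red0, G'.edist w r ≤ (k : ℕ∞))) ∧
      (∀ v : V, ∀ w : W, w ∈ Blue0 ∨ w ∈ Red0 → (k : ℕ∞) + 1 ≤ G'.edist (ι v) w) ∧
      (∀ u v : V, u ≠ v →
        (G.Adj u v → G'.edist (ι u) (ι v) = (k : ℕ∞)) ∧
        (¬G.Adj u v → (k : ℕ∞) + 1 ≤ G'.edist (ι u) (ι v))) ∧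
      (∀ w₁ w₂ : W, w₁ ∈ Blue0 ∨ w₁ ∈ Red0 → w₂ ∈ Blue0 ∨ w₂ ∈ Red0 → w₁ ≠ w₂ →
        (k : ℕ∞) + 1 ≤ G'.edist w₁ w₂) := by
  refine ⟨W' V k, inferInstance, Gr G k, Function.Embedding.inl, Blue0 G k, Red0 G k,
    ?_, ?_, ?_, ?_, ?_, ?_⟩
  -- Disjointness
  · rw [Finset.disjoint_left]
    intro w hwB hwR
    obtain ⟨x, y, a, hb, rfl⟩ := mem_Blue0.mp hwB
    rcases mem_Red0.mp hwR with ⟨x', y', a', hb', heq⟩ | ⟨-, hnr⟩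
    · have := cyv_inj (k := k) (by have := hb.2.2.2; have := hb.k2; omega)
        (by have := hb'.2.2.2; have := hb'.k2; omega) (by omega) (by omega) heq
      omega
    · exact hnr (Or.inr (Or.inl ⟨x, y, a, 0, hb, by omega, rfl⟩))
  -- originals are not coloured
  · intro v
    constructor
    · intro hc
      obtain ⟨x, y, a, hb, heq⟩ := mem_Blue0.mp hc
      simp [cyv] at heq
    · intro hc
      rcases mem_Red0.mp hc with ⟨x, y, a, hb, heq⟩ | ⟨⟨q, hq⟩, -⟩
      · simp [cyv] at heq
      · simp at hq
  -- (a)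
  · intro w hni hnB hnR
    cases w with
    | inl v => exact absurd rfl (hni v)
    | inr q =>
      by_cases hreal : isReal G k (Sum.inr q)
      · rcases hreal with ⟨x, y, a, hb, hw⟩ | ⟨x, y, a, j, hb, hj, hw⟩ |
          ⟨x, y, a, i, hb, hi1, hi2, hw⟩
        · rw [hw]
          have hpv : pV k x y a = pv k x y a 0 := (if_pos rfl).symm
          refine ⟨⟨cyv k x y a 0, mem_Blue0.mpr ⟨x, y, a, hb, rfl⟩, ?_⟩,
            ⟨cyv k x y a (k+1), mem_Red0.mpr (Or.inl ⟨x, y, a, hb, rfl⟩), ?_⟩⟩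
          · rw [hpv]
            have := pv_to_blue hb (i := 0) (Nat.zero_le _)
            simpa using this
          · rw [hpv]
            have := pv_to_red hb (i := 0) (Nat.zero_le _)
            simpa using this
        · rw [hw]
          have hj0 : j ≠ 0 := by
            intro hc
            subst hc
            exact hnB (mem_Blue0.mpr ⟨x, y, a, hb, hw ▸ rfl⟩)
          have hj1 : j ≠ k+1 := by
            intro hc
            subst hc
            exact hnR (mem_Red0.mpr (Or.inl ⟨x, y, a, hb, hw ▸ rfl⟩))
          exact ⟨⟨cyv k x y a 0, mem_Blue0.mpr ⟨x, y, a, hb, rfl⟩, cy_to_blue hb hj hj1⟩,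
            ⟨cyv k x y a (k+1), mem_Red0.mpr (Or.inl ⟨x, y, a, hb, rfl⟩), cy_to_red hb hj hj0⟩⟩
        · rw [hw]
          have hpv : ppv k x y a i = pv k x y a i := (if_neg (by omega)).symm
          refine ⟨⟨cyv k x y a 0, mem_Blue0.mpr ⟨x, y, a, hb, rfl⟩, ?_⟩,
            ⟨cyv k x y a (k+1), mem_Red0.mpr (Or.inl ⟨x, y, a, hb, rfl⟩), ?_⟩⟩
          · rw [hpv]
            refine le_trans (pv_to_blue hb hi2) ?_
            exact_mod_cast Nat.sub_le k i
          · rw [hpv]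
            refine le_trans (pv_to_red hb hi2) ?_
            exact_mod_cast Nat.sub_le k i
      · exact absurd (mem_Red0.mpr (Or.inr ⟨⟨q, rfl⟩, hreal⟩)) hnR
  -- (b)
  · intro v w hw
    rcases (by
        rcases hw with h | h
        · exact Or.inl (mem_Blue0.mp h)
        · rcases mem_Red0.mp h with h' | h'
          · exact Or.inr (Or.inl h')
          · exact Or.inr (Or.inr h') :
        isBlue G k w ∨ isRed G k w ∨ isJunk G k w) with
      ⟨x, y, a, hb, rfl⟩ | ⟨x, y, a, hb, rfl⟩ | hj
    · have ha : a ≤ k - 1 := hb.2.2.2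
      have hk2 : 2 ≤ k := hb.k2
      have h0 : hB k x y a (cyv k x y a 0) = 0 := by
        rw [hB_cyv x y a x y (by omega) (by omega), if_pos ⟨rfl, rfl, rfl⟩]
        omega
      have := edist_lower G k (lip_hB G k x y a) (cyv k x y a 0) (Sum.inl v) h0
      rw [hB_inl, cast_succ] at this
      rwa [SimpleGraph.edist_comm]
    · have ha : a ≤ k - 1 := hb.2.2.2
      have hk2 : 2 ≤ k := hb.k2
      have h0 : hR k x y a (cyv k x y a (k+1)) = 0 := by
        rw [hR_cyv x y a x y (by omega) (by omega), if_pos ⟨rfl, rfl, rfl⟩,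
          if_pos (le_refl _)]
        omega
      have := edist_lower G k (lip_hR G k x y a) (cyv k x y a (k+1)) (Sum.inl v) h0
      rw [hR_inl, cast_succ] at this
      rwa [SimpleGraph.edist_comm]
    · rw [junk_edist_top hj (by obtain ⟨q, rfl⟩ := hj.1; simp)]
      exact le_top
  -- (c)
  · intro u v huv
    have hlow := edist_lower G k (lip_fU G k u) (Sum.inl u) (Sum.inl v)
      (by rw [fU_inl, if_pos rfl])
    constructor
    · intro hadj
      refine le_antisymm ?_ ?_
      · rcases lt_or_gt_of_ne huv with hlt | hlt
        · rcases eq_or_lt_of_le hk with hk1 | hk2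
          · subst hk1
            rw [Nat.cast_one]
            exact le_of_eq (SimpleGraph.edist_eq_one_iff_adj.mpr (adj_R0 rfl hlt hadj))
          · exact inl_to_inl hlt hadj hk2
        · rw [SimpleGraph.edist_comm]
          rcases eq_or_lt_of_le hk with hk1 | hk2
          · subst hk1
            rw [Nat.cast_one]
            exact le_of_eq (SimpleGraph.edist_eq_one_iff_adj.mpr (adj_R0 rfl hlt hadj.symm))
          · exact inl_to_inl hlt hadj.symm hk2
      · rw [fU_inl, if_neg (Ne.symm huv), if_pos hadj] at hlow
        exact hlow
    · intro hnadj
      rw [fU_inl, if_neg (Ne.symm huv), if_neg hnadj, cast_succ] at hlow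
      exact hlow
  -- (d)
  · intro w₁ w₂ h1 h2 hne
    by_cases hj2 : isJunk G k w₂
    · rw [junk_edist_top hj2 hne]
      exact le_top
    by_cases hj1 : isJunk G k w₁
    · rw [SimpleGraph.edist_comm, junk_edist_top hj1 (Ne.symm hne)]
      exact le_top
    have hc1 : ∃ x y a j, B G k x y a ∧ (j = 0 ∨ j = k+1) ∧ w₁ = cyv k x y a j := by
      rcases h1 with h | h
      · obtain ⟨x, y, a, hb, rfl⟩ := mem_Blue0.mp h
        exact ⟨x, y, a, 0, hb, Or.inl rfl, rfl⟩
      · rcases mem_Red0.mp h with ⟨x, y, a, hb, rfl⟩ | h'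
        · exact ⟨x, y, a, k+1, hb, Or.inr rfl, rfl⟩
        · exact absurd h' hj1
    have hc2 : ∃ x y a j, B G k x y a ∧ (j = 0 ∨ j = k+1) ∧ w₂ = cyv k x y a j := by
      rcases h2 with h | h
      · obtain ⟨x, y, a, hb, rfl⟩ := mem_Blue0.mp h
        exact ⟨x, y, a, 0, hb, Or.inl rfl, rfl⟩
      · rcases mem_Red0.mp h with ⟨x, y, a, hb, rfl⟩ | h'
        · exact ⟨x, y, a, k+1, hb, Or.inr rfl, rfl⟩
        · exact absurd h' hj2
    obtain ⟨x, y, a, j, hb, hj, rfl⟩ := hc1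
    obtain ⟨x', y', a', j', hb', hj', rfl⟩ := hc2
    rw [← cast_succ]
    exact color_edist hb hb' hj hj' hne

end Stmt14C

/-- for every finite simple graph `G` and every `k ≥ 1` there is a finite simple
graph `G'` containing the vertices of `G` (via an embedding `ι`), together with disjoint sets
`Blue0`, `Red0` of new vertices, satisfying conditions (a)–(d). -/
theorem stmt14 {V : Type u} [Fintype V] (G : SimpleGraph V) (k : ℕ) (hk : 1 ≤ k) :
    ∃ (W : Type u) (_ : Fintype W) (G' : SimpleGraph W) (ι : V ↪ W)
      (Blue0 Red0 : Finset W),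
      Disjoint Blue0 Red0 ∧ (∀ v : V, ι v ∉ Blue0 ∧ ι v ∉ Red0) ∧
      -- (a) every extra vertex is within distance `k` of `Blue0` and of `Red0`:
      (∀ w : W, (∀ v : V, ι v ≠ w) → w ∉ Blue0 → w ∉ Red0 →
        (∃ b ∈ Blue0, G'.edist w b ≤ (k : ℕ∞)) ∧ (∃ r ∈ Red0, G'.edist w r ≤ (k : ℕ∞))) ∧
      -- (b) every vertex of `V(G)` is at distance at least `k+1` from `Blue0 ∪ Red0`:
      (∀ v : V, ∀ w : W, w ∈ Blue0 ∨ w ∈ Red0 → (k : ℕ∞) + 1 ≤ G'.edist (ι v) w) ∧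
      -- (c) distances between vertices of `V(G)`:
      (∀ u v : V, u ≠ v →
        (G.Adj u v → G'.edist (ι u) (ι v) = (k : ℕ∞)) ∧
        (¬G.Adj u v → (k : ℕ∞) + 1 ≤ G'.edist (ι u) (ι v))) ∧
      -- (d) distinct vertices of `Blue0 ∪ Red0` are at distance at least `k+1`:
      (∀ w₁ w₂ : W, w₁ ∈ Blue0 ∨ w₁ ∈ Red0 → w₂ ∈ Blue0 ∨ w₂ ∈ Red0 → w₁ ≠ w₂ →
        (k : ℕ∞) + 1 ≤ G'.edist w₁ w₂) := by
  letI : LinearOrder V := LinearOrder.lift' (Fintype.equivFin V) (Fintype.equivFin V).injective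
  exact Stmt14C.main G k hk
end
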